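/- arXiv:1811.08870 — 11 statements merged into one kernel-verified Lean document; each statement's English description precedes it below -/
import Mathlib

section
/- Let F : ℂ → ℂ be continuous on the closed unit disc {z : |z| ≤ 1} and holomorphic on the open unit disc {z : |z| < 1}. The following two properties are equivalent: (i) there exist ρ > 1, M > 0, and a function G holomorphic on {z : |z| < ρ} such that G = F on the open unit disc and |G(z)| ≤ M for all |z| < ρ; (ii) there exist ρ > 1 and M > 0 such that for every integer n ≥ 0 there is a polynomial P of degree at most n−1 with sup_{|z| ≤ 1} |F(z) − P(z)| ≤ M ρ^{−n}. -/
open Polynomial Metric Set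

lemma poly_growth (Q : Polynomial ℂ) (m : ℕ) (hdeg : Q.degree ≤ (m : WithBot ℕ)) {c r : ℝ}
    (hr : 1 ≤ r) (hc : ∀ z : ℂ, ‖z‖ = 1 → ‖Q.eval z‖ ≤ c) :
    ∀ z : ℂ, ‖z‖ ≤ r → ‖Q.eval z‖ ≤ c * r ^ m := by
  have hc0 : 0 ≤ c := le_trans (norm_nonneg _) (hc 1 (by simp))
  have hnd : Q.natDegree < m + 1 :=
    Nat.lt_succ_of_le (Polynomial.natDegree_le_iff_degree_le.mpr hdeg)
  -- maximum modulus for a polynomial bounded on the unit circle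
  have maxmod : ∀ (S : Polynomial ℂ), (∀ z : ℂ, ‖z‖ = 1 → ‖S.eval z‖ ≤ c) →
      ∀ w : ℂ, ‖w‖ ≤ 1 → ‖S.eval w‖ ≤ c := by
    intro S hS w hw
    have : w ∈ closure (ball (0:ℂ) 1) := by
      rw [closure_ball (0:ℂ) one_ne_zero]
      simpa [mem_closedBall, Complex.dist_eq] using hw
    refine Complex.norm_le_of_forall_mem_frontier_norm_le isBounded_ball
      ((S.differentiable).diffContOnCl) (fun z hz => ?_) this
    rw [frontier_ball (0:ℂ) one_ne_zero] at hz
    exact hS z (by simpa [mem_sphere_iff_norm] using hz)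
  set R : Polynomial ℂ :=
    ∑ k ∈ Finset.range (m + 1), Polynomial.C (Q.coeff k) * Polynomial.X ^ (m - k) with hR
  have key : ∀ z : ℂ, z ≠ 0 → R.eval z = z ^ m * Q.eval z⁻¹ := by
    intro z hz
    rw [Polynomial.eval_eq_sum_range' hnd, Finset.mul_sum, hR]
    rw [Polynomial.eval_finset_sum]
    refine Finset.sum_congr rfl fun k hk => ?_
    have hkm : k ≤ m := Nat.lt_succ_iff.mp (Finset.mem_range.mp hk)
    rw [Polynomial.eval_mul, Polynomial.eval_C, Polynomial.eval_pow, Polynomial.eval_X]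
    rw [pow_sub₀ z hz hkm]
    ring
  have hRcirc : ∀ z : ℂ, ‖z‖ = 1 → ‖R.eval z‖ ≤ c := by
    intro z hz
    have hz0 : z ≠ 0 := by intro h; rw [h] at hz; simp at hz
    rw [key z hz0, norm_mul, norm_pow, hz, one_pow, one_mul]
    exact hc z⁻¹ (by rw [norm_inv, hz, inv_one])
  intro z hzr
  rcases le_or_gt ‖z‖ 1 with h1 | h1
  · calc ‖Q.eval z‖ ≤ c := maxmod Q hc z h1
    _ ≤ c * r ^ m := le_mul_of_one_le_right hc0 (one_le_pow₀ hr)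
  · have hz0 : z ≠ 0 := by intro h; rw [h, norm_zero] at h1; linarith
    have hinv : ‖z⁻¹‖ ≤ 1 := by
      rw [norm_inv]
      exact inv_le_one_of_one_le₀ h1.le
    have : Q.eval z = z ^ m * R.eval z⁻¹ := by
      rw [key z⁻¹ (inv_ne_zero hz0), inv_inv]
      rw [← mul_assoc, ← mul_pow, mul_inv_cancel₀ hz0, one_pow, one_mul]
    rw [this, norm_mul, norm_pow]
    calc ‖z‖ ^ m * ‖R.eval z⁻¹‖ ≤ ‖z‖ ^ m * c :=
          mul_le_mul_of_nonneg_left (maxmod R hRcirc z⁻¹ hinv) (by positivity)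
      _ ≤ r ^ m * c :=
          mul_le_mul_of_nonneg_right (pow_le_pow_left₀ (norm_nonneg _) hzr m) hc0
      _ = c * r ^ m := mul_comm _ _

/-- Disc-algebra case of the appendix proposition: a function `F` in the disc algebra
extends to a bounded holomorphic function on a disc of radius `ρ > 1` if and only if
it is approximated by polynomials of degree `< n` at a geometric rate `M ρ^{-n}`. -/
theorem stmt1 (F : ℂ → ℂ)
    (hFc : ContinuousOn F (Metric.closedBall (0 : ℂ) 1))
    (hFd : DifferentiableOn ℂ F (Metric.ball (0 : ℂ) 1)) :
    (∃ (ρ M : ℝ) (G : ℂ → ℂ), 1 < ρ ∧ 0 < M ∧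
        DifferentiableOn ℂ G (Metric.ball (0 : ℂ) ρ) ∧
        (∀ z ∈ Metric.ball (0 : ℂ) 1, G z = F z) ∧
        (∀ z ∈ Metric.ball (0 : ℂ) ρ, ‖G z‖ ≤ M)) ↔
    (∃ ρ M : ℝ, 1 < ρ ∧ 0 < M ∧
        ∀ n : ℕ, ∃ P : Polynomial ℂ, P.degree < n ∧
          ∀ z ∈ Metric.closedBall (0 : ℂ) 1, ‖F z - P.eval z‖ ≤ M / ρ ^ n) := by
  constructor
  · -- forward direction
    rintro ⟨ρ, M, G, hρ, hM, hGd, hGF, hGb⟩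
    -- G = F on the closed unit ball
    have hGF' : Set.EqOn G F (closedBall (0:ℂ) 1) := by
      have h1 : Set.EqOn G F (ball (0:ℂ) 1) := fun z hz => hGF z hz
      refine h1.of_subset_closure ?_ hFc ball_subset_closedBall ?_
      · exact (hGd.continuousOn).mono (closedBall_subset_ball hρ)
      · rw [closure_ball (0:ℂ) one_ne_zero]
    -- radii
    set R : NNReal := ⟨(1 + 3 * ρ) / 4, by positivity⟩ with hRdef
    set r' : NNReal := ⟨(1 + ρ) / 2, by positivity⟩ with hr'def
    have hr'1 : (1:ℝ) < r' := by simp only [hr'def]; show (1:ℝ) < (1 + ρ) / 2; linarith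
    have hr'R : r' < R := by
      rw [← NNReal.coe_lt_coe]; simp only [hr'def, hRdef]; show (1 + ρ) / 2 < (1 + 3 * ρ) / 4; linarith
    have hRρ : (R:ℝ) < ρ := by simp only [hRdef]; show (1 + 3 * ρ) / 4 < ρ; linarith
    have hR0 : 0 < R := by
      rw [← NNReal.coe_lt_coe]; simp only [hRdef]; dsimp; linarith
    have hd : DifferentiableOn ℂ G (closedBall (0:ℂ) R) :=
      hGd.mono (closedBall_subset_ball hRρ)
    have hps : HasFPowerSeriesOnBall G (cauchyPowerSeries G 0 R) 0 R :=
      hd.hasFPowerSeriesOnBall hR0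
    obtain ⟨a, ⟨ha0, ha1⟩, C, hC, hbound⟩ :=
      hps.uniform_geometric_approx (r' := r') (by exact_mod_cast hr'R)
    refine ⟨a⁻¹, C, (one_lt_inv₀ ha0).mpr ha1, hC, fun n => ?_⟩
    set p := cauchyPowerSeries G 0 R
    set P : Polynomial ℂ := ∑ k ∈ Finset.range n, Polynomial.C (p.coeff k) * Polynomial.X ^ k
      with hPdef
    have hdeg : P.degree < n := by
      apply lt_of_le_of_lt (Polynomial.degree_sum_le _ _)
      rw [Finset.sup_lt_iff (by exact_mod_cast WithBot.bot_lt_coe n)]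
      intro k hk
      exact lt_of_le_of_lt (Polynomial.degree_C_mul_X_pow_le _ _)
        (by exact_mod_cast Finset.mem_range.mp hk)
    refine ⟨P, hdeg, fun z hz => ?_⟩
    have hz1 : ‖z‖ ≤ 1 := by simpa [mem_closedBall, Complex.dist_eq] using hz
    have hzb : z ∈ ball (0:ℂ) r' := by
      simp only [mem_ball, Complex.dist_eq, sub_zero]
      exact lt_of_le_of_lt hz1 hr'1
    have hb := hbound z hzb n
    rw [zero_add] at hb
    have hPeval : P.eval z = p.partialSum n z := by
      rw [hPdef, Polynomial.eval_finset_sum, FormalMultilinearSeries.partialSum]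
      refine Finset.sum_congr rfl fun k _ => ?_
      rw [FormalMultilinearSeries.apply_eq_pow_smul_coeff, smul_eq_mul,
        Polynomial.eval_mul, Polynomial.eval_C, Polynomial.eval_pow, Polynomial.eval_X,
        mul_comm]
    rw [hGF' hz] at hb
    rw [hPeval]
    calc ‖F z - p.partialSum n z‖ ≤ C * a ^ n := hb
      _ = C / (a⁻¹) ^ n := by rw [div_eq_mul_inv, ← inv_pow, inv_inv]
  · -- backward direction
    rintro ⟨ρ, M, hρ, hM, hP⟩
    choose P hPdeg hPapprox using hP
    have hρ0 : (0:ℝ) < ρ := by linarith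
    set r : ℝ := (1 + ρ) / 2 with hrdef
    have hr1 : 1 < r := by rw [hrdef]; linarith
    have hrρ : r < ρ := by rw [hrdef]; linarith
    have hr0 : 0 < r := by linarith
    -- P 0 = 0
    have hP0 : P 0 = 0 := by
      have h0 := hPdeg 0
      rw [Nat.cast_zero, Nat.WithBot.lt_zero_iff, Polynomial.degree_eq_bot] at h0
      exact h0
    set D : ℕ → ℂ → ℂ := fun n z => (P (n+1)).eval z - (P n).eval z with hDdef
    set u : ℕ → ℝ := fun n => (2 * M) * (r / ρ) ^ n with hudef
    have hu_sum : Summable u := by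
      apply Summable.mul_left
      exact summable_geometric_of_lt_one (by positivity) (by rw [div_lt_one hρ0]; exact hrρ)
    -- bound on D
    have hDb : ∀ n : ℕ, ∀ z : ℂ, z ∈ closedBall (0:ℂ) r → ‖D n z‖ ≤ u n := by
      intro n z hz
      have hz' : ‖z‖ ≤ r := by simpa [mem_closedBall, Complex.dist_eq] using hz
      set Q : Polynomial ℂ := P (n+1) - P n with hQdef
      have hQdeg : Q.degree ≤ (n : WithBot ℕ) := by
        have h1 := hPdeg (n+1)
        have h2 : (P n).degree < ((n+1 : ℕ) : WithBot ℕ) :=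
          lt_of_lt_of_le (hPdeg n) (by exact_mod_cast Nat.le_succ n)
        have h3 : Q.degree < ((n+1 : ℕ) : WithBot ℕ) :=
          lt_of_le_of_lt (Polynomial.degree_sub_le _ _) (max_lt h1 h2)
        rcases hQd : Q.degree with _ | m
        · exact bot_le
        · rw [hQd] at h3
          exact WithBot.coe_le_coe.mpr (Nat.lt_succ_iff.mp (WithBot.coe_lt_coe.mp h3))
      have hcirc : ∀ w : ℂ, ‖w‖ = 1 → ‖Q.eval w‖ ≤ 2 * M / ρ ^ n := by
        intro w hw
        have hwmem : w ∈ closedBall (0:ℂ) 1 := by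
          simp [mem_closedBall, Complex.dist_eq, hw]
        have e1 := hPapprox (n+1) w hwmem
        have e2 := hPapprox n w hwmem
        have : Q.eval w = (F w - (P n).eval w) - (F w - (P (n+1)).eval w) := by
          rw [hQdef, Polynomial.eval_sub]; ring
        rw [this]
        calc ‖(F w - (P n).eval w) - (F w - (P (n+1)).eval w)‖
            ≤ ‖F w - (P n).eval w‖ + ‖F w - (P (n+1)).eval w‖ := norm_sub_le _ _
          _ ≤ M / ρ ^ n + M / ρ ^ (n+1) := add_le_add e2 e1
          _ ≤ M / ρ ^ n + M / ρ ^ n := by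
              have hpow : ρ ^ n ≤ ρ ^ (n+1) := pow_le_pow_right₀ hρ.le (Nat.le_succ n)
              have h1 : M / ρ ^ (n+1) ≤ M / ρ ^ n := by
                apply div_le_div_of_nonneg_left hM.le (pow_pos hρ0 n) hpow
              linarith
          _ = 2 * M / ρ ^ n := by ring
      have := poly_growth Q n hQdeg hr1.le hcirc z hz'
      calc ‖D n z‖ = ‖Q.eval z‖ := by rw [hQdef, Polynomial.eval_sub]
        _ ≤ (2 * M / ρ ^ n) * r ^ n := this
        _ = u n := by
            simp only [hudef]
            rw [div_pow r ρ n, div_mul_eq_mul_div, mul_div_assoc]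
    -- uniform convergence
    have hTU : TendstoUniformlyOn (fun N z => ∑ n ∈ Finset.range N, D n z)
        (fun z => ∑' n, D n z) Filter.atTop (closedBall (0:ℂ) r) :=
      tendstoUniformlyOn_tsum_nat hu_sum hDb
    have htel : ∀ N : ℕ, ∀ z : ℂ, ∑ n ∈ Finset.range N, D n z = (P N).eval z := by
      intro N z
      simp only [hDdef]
      rw [Finset.sum_range_sub (fun n => (P n).eval z) N, hP0]
      simp
    have hTU' : TendstoUniformlyOn (fun N z => (P N).eval z)
        (fun z => ∑' n, D n z) Filter.atTop (closedBall (0:ℂ) r) := by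
      refine hTU.congr ?_
      filter_upwards with N
      intro z _
      simpa using htel N z
    set G : ℂ → ℂ := fun z => ∑' n, D n z with hGdef
    -- G differentiable on ball r
    have hGd : DifferentiableOn ℂ G (ball (0:ℂ) r) := by
      refine ((hTU'.mono ball_subset_closedBall).tendstoLocallyUniformlyOn).differentiableOn
        (Filter.Eventually.of_forall fun N => ?_) isOpen_ball
      exact (P N).differentiable.differentiableOn
    -- pointwise limit identifies G with F on closed unit ball
    have hlim : ∀ z : ℂ, z ∈ closedBall (0:ℂ) 1 → G z = F z := by
      intro z hz
      have hz' : z ∈ closedBall (0:ℂ) r := by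
        simp only [mem_closedBall, Complex.dist_eq, sub_zero] at hz ⊢
        linarith
      have h1 : Filter.Tendsto (fun N => (P N).eval z) Filter.atTop (nhds (G z)) :=
        hTU'.tendsto_at hz'
      have h2 : Filter.Tendsto (fun N => (P N).eval z) Filter.atTop (nhds (F z)) := by
        rw [tendsto_iff_norm_sub_tendsto_zero]
        have hb : ∀ N, ‖(P N).eval z - F z‖ ≤ M * (ρ⁻¹) ^ N := by
          intro N
          rw [norm_sub_rev]
          calc ‖F z - (P N).eval z‖ ≤ M / ρ ^ N := hPapprox N z hz
            _ = M * (ρ⁻¹) ^ N := by rw [inv_pow, div_eq_mul_inv]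
        refine squeeze_zero_norm (fun N => by simpa using hb N) ?_
        have : Filter.Tendsto (fun N : ℕ => (ρ⁻¹) ^ N) Filter.atTop (nhds 0) :=
          tendsto_pow_atTop_nhds_zero_of_lt_one (by positivity)
            (inv_lt_one_of_one_lt₀ hρ)
        simpa using this.const_mul M
      exact tendsto_nhds_unique h1 h2
    -- bound on G
    set M' : ℝ := (∑' n, u n) + 1 with hM'def
    have hM'pos : 0 < M' := by
      have : 0 ≤ ∑' n, u n := tsum_nonneg fun n => by positivity
      rw [hM'def]; linarith
    refine ⟨r, M', G, hr1, hM'pos, hGd, ?_, ?_⟩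
    · intro z hz
      exact hlim z (ball_subset_closedBall.trans
        (closedBall_subset_closedBall (by norm_num)) hz)
    · intro z hz
      have hz' : z ∈ closedBall (0:ℂ) r := ball_subset_closedBall hz
      have hsum : Summable fun n => ‖D n z‖ :=
        Summable.of_nonneg_of_le (fun n => norm_nonneg _) (fun n => hDb n z hz') hu_sum
      calc ‖G z‖ ≤ ∑' n, ‖D n z‖ := norm_tsum_le_tsum_norm hsum
        _ ≤ ∑' n, u n := Summable.tsum_le_tsum (fun n => hDb n z hz') hsum hu_sum
        _ ≤ M' := by rw [hM'def]; linarith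
end

section
/- Let X be a complex Hilbert space, V a closed subspace of X with orthogonal projection P_V, ℓ_1,…,ℓ_m continuous linear functionals on X, and L : X → ℂ^m the map L(f) = (ℓ_1(f),…,ℓ_m(f)). Let y ∈ ℂ^m, ε > 0, and let μ ≥ 0 satisfy ‖u‖ ≤ μ · dist(u, V) for every u ∈ ker(L). Suppose f⋆ ∈ X satisfies L(f⋆) = y and ‖f⋆ − P_V f⋆‖ ≤ ‖f − P_V f‖ for every f ∈ X with L(f) = y. Then for every f ∈ X with L(f) = y and dist(f, V) ≤ ε, one has ‖f − f⋆‖ ≤ μ · (ε² − ‖f⋆ − P_V f⋆‖²)^{1/2}. -/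
open Metric in
/-- Minimality of the orthogonal projection. -/
lemma aux_proj_min {X : Type*} [NormedAddCommGroup X] [InnerProductSpace ℂ X]
    (V : Submodule ℂ X) [V.HasOrthogonalProjection] (x : X) {v : X} (hv : v ∈ V) :
    ‖x - (V.orthogonalProjectionOnto x : X)‖ ≤ ‖x - v‖ := by
  have h0 : (inner ℂ (x - (V.orthogonalProjectionOnto x : X)) ((V.orthogonalProjectionOnto x : X) - v) : ℂ)
      = 0 := V.starProjection_inner_eq_zero x _ (sub_mem (V.orthogonalProjectionOnto x).2 hv)
  have hdecomp : x - v = (x - (V.orthogonalProjectionOnto x : X))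
      + ((V.orthogonalProjectionOnto x : X) - v) := by abel
  have := norm_add_sq (𝕜 := ℂ) (x - (V.orthogonalProjectionOnto x : X))
      ((V.orthogonalProjectionOnto x : X) - v)
  rw [← hdecomp, h0] at this
  simp only [map_zero, mul_zero, add_zero] at this
  nlinarith [norm_nonneg (x - v), norm_nonneg (x - (V.orthogonalProjectionOnto x : X)),
    sq_nonneg ‖(V.orthogonalProjectionOnto x : X) - v‖]

lemma aux_norm_sub_proj_le_infDist {X : Type*} [NormedAddCommGroup X] [InnerProductSpace ℂ X]
    (V : Submodule ℂ X) [V.HasOrthogonalProjection] (x : X) :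
    ‖x - (V.orthogonalProjectionOnto x : X)‖ ≤ Metric.infDist x (V : Set X) := by
  by_contra h
  push_neg at h
  obtain ⟨v, hv, hlt⟩ := (Metric.infDist_lt_iff ⟨0, V.zero_mem⟩).1 h
  rw [dist_eq_norm] at hlt
  exact absurd (aux_proj_min V x hv) (not_le.2 hlt)

/-- Upper-bound half of the optimal-recovery theorem for approximability models in
complex Hilbert spaces: the minimal-distance interpolant `f⋆` recovers every `f` in the
model set with error at most `μ √(ε² - ‖f⋆ - P_V f⋆‖²)`. -/
theorem stmt2 {X : Type*} [NormedAddCommGroup X] [InnerProductSpace ℂ X] [CompleteSpace X]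
    (V : Submodule ℂ X) [V.HasOrthogonalProjection]
    {m : ℕ} (ℓ : Fin m → X →L[ℂ] ℂ) (y : Fin m → ℂ) (ε : ℝ) (hε : 0 < ε)
    (μ : ℝ) (hμ0 : 0 ≤ μ)
    (hμ : ∀ u : X, (∀ k, ℓ k u = 0) → ‖u‖ ≤ μ * Metric.infDist u (V : Set X))
    (fs : X) (hfsy : ∀ k, ℓ k fs = y k)
    (hfsmin : ∀ f : X, (∀ k, ℓ k f = y k) →
      ‖fs - (V.orthogonalProjectionOnto fs : X)‖ ≤ ‖f - (V.orthogonalProjectionOnto f : X)‖)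
    (f : X) (hfy : ∀ k, ℓ k f = y k) (hfV : Metric.infDist f (V : Set X) ≤ ε) :
    ‖f - fs‖ ≤ μ * Real.sqrt (ε ^ 2 - ‖fs - (V.orthogonalProjectionOnto fs : X)‖ ^ 2) := by
  set P : X →L[ℂ] X := V.subtypeL.comp (V.orthogonalProjectionOnto) with hP
  have hPx : ∀ x : X, P x = (V.orthogonalProjectionOnto x : X) := fun x => rfl
  set u : X := f - fs with hu
  set a : X := fs - P fs with ha
  set b : X := u - P u with hb
  have hker : ∀ k, ℓ k u = 0 := by
    intro k; simp [hu, map_sub, hfy k, hfsy k]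
  -- interpolation property of fs + t • u
  have hinterp : ∀ t : ℂ, ∀ k, ℓ k (fs + t • u) = y k := by
    intro t k; simp [map_add, map_smul, hfsy k, hker k]
  have hmin : ∀ t : ℂ, ‖a‖ ≤ ‖a + t • b‖ := by
    intro t
    have h := hfsmin (fs + t • u) (hinterp t)
    have : (fs + t • u) - (V.orthogonalProjectionOnto (fs + t • u) : X) = a + t • b := by
      rw [← hPx, map_add, map_smul]
      simp only [ha, hb, hPx]
      module
    rw [this] at h
    simpa [ha, hPx] using h
  -- orthogonality: re ⟪a, b⟫ = 0 suffices to get re ≥ 0; we show re ≥ 0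
  set r : ℝ := RCLike.re (inner ℂ a b : ℂ) with hr
  have hr0 : 0 ≤ r := by
    by_contra hneg
    push_neg at hneg
    have hbne : b ≠ 0 := by
      intro h0; rw [hr, h0, inner_zero_right] at hneg; simp at hneg
    have hbpos : (0:ℝ) < ‖b‖ ^ 2 := pow_pos (norm_pos_iff.2 hbne) 2
    set t : ℝ := -r / ‖b‖ ^ 2 with ht
    have htpos : 0 < t := div_pos (neg_pos.2 hneg) hbpos
    have hexp := norm_add_sq (𝕜 := ℂ) a ((t : ℂ) • b)
    have hre : RCLike.re (inner ℂ a ((t : ℂ) • b) : ℂ) = t * r := by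
      rw [inner_smul_right]
      simp [RCLike.mul_re, hr]
    rw [hre, norm_smul] at hexp
    have hmt := hmin (t : ℂ)
    have hsq : ‖a‖ ^ 2 ≤ ‖a + (t : ℂ) • b‖ ^ 2 :=
      pow_le_pow_left₀ (norm_nonneg a) hmt 2
    have hct : ‖(t : ℂ)‖ = t := by
      simp [Complex.norm_real, abs_of_pos htpos]
    rw [hct] at hexp
    have htb : t * ‖b‖ ^ 2 = -r := by
      rw [ht]; field_simp
    nlinarith [mul_pos htpos (neg_pos.2 hneg)]
  -- Pythagoras-type bound
  have hab : f - P f = a + b := by rw [ha, hb, hu, map_sub]; module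
  have hfle : ‖a + b‖ ≤ ε := by
    rw [← hab]
    exact le_trans (by simpa [hPx, dist_eq_norm] using aux_norm_sub_proj_le_infDist V f) hfV
  have hexp2 := norm_add_sq (𝕜 := ℂ) a b
  have hb2 : ‖b‖ ^ 2 ≤ ε ^ 2 - ‖a‖ ^ 2 := by
    have h1 : ‖a + b‖ ^ 2 ≤ ε ^ 2 := pow_le_pow_left₀ (norm_nonneg _) hfle 2
    simp only [← hr] at hexp2
    nlinarith
  have hbnn : ‖b‖ ≤ Real.sqrt (ε ^ 2 - ‖a‖ ^ 2) := by
    rw [show ‖b‖ = Real.sqrt (‖b‖ ^ 2) by rw [Real.sqrt_sq (norm_nonneg b)]]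
    exact Real.sqrt_le_sqrt hb2
  have hdist : Metric.infDist u (V : Set X) ≤ ‖b‖ := by
    have := Metric.infDist_le_dist_of_mem (x := u) (y := (P u : X))
      (s := (V : Set X)) (V.orthogonalProjectionOnto u).2
    simpa [dist_eq_norm, hb] using this
  have hfinal : ‖u‖ ≤ μ * Real.sqrt (ε ^ 2 - ‖a‖ ^ 2) := by
    calc ‖u‖ ≤ μ * Metric.infDist u (V : Set X) := hμ u hker
    _ ≤ μ * ‖b‖ := by gcongr
    _ ≤ μ * Real.sqrt (ε ^ 2 - ‖a‖ ^ 2) := by gcongr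
  simpa [hu, ha, hPx] using hfinal
end

section
/- Let X be a complex Hilbert space, V a closed subspace of X with orthogonal projection P_V, ℓ_1,…,ℓ_m continuous linear functionals on X, and L : X → ℂ^m the map L(f) = (ℓ_1(f),…,ℓ_m(f)). Let y ∈ ℂ^m and ε > 0. Suppose f⋆ ∈ X satisfies L(f⋆) = y and ‖f⋆ − P_V f⋆‖ ≤ ‖f − P_V f‖ for every f ∈ X with L(f) = y. Then for every g ∈ X and every u ∈ ker(L) satisfying ‖f⋆ − P_V f⋆‖² + ‖u − P_V u‖² ≤ ε², one has sup{‖f − g‖ : f ∈ X, L(f) = y, dist(f, V) ≤ ε} ≥ ‖u‖. -/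
open RCLike

local notation "⟪" x ", " y "⟫" => @inner ℂ _ _ x y

lemma aux_re_inner_zero {X : Type*} [NormedAddCommGroup X] [InnerProductSpace ℂ X]
    (a b : X) (h : ∀ t : ℝ, ‖a‖ ≤ ‖a + (t : ℂ) • b‖) : re ⟪a, b⟫ = 0 := by
  set r : ℝ := re ⟪a, b⟫ with hr
  by_contra hne
  set t : ℝ := -r / (‖b‖ ^ 2 + 1) with ht
  have h1 := h t
  have hsq : ‖a‖ ^ 2 ≤ ‖a + (t : ℂ) • b‖ ^ 2 := by
    have := norm_nonneg a
    nlinarith [h t, norm_nonneg (a + (t : ℂ) • b)]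
  rw [norm_add_sq (𝕜 := ℂ)] at hsq
  have hin : re ⟪a, (t : ℂ) • b⟫ = t * r := by
    rw [inner_smul_right]
    simp [hr]
  have hns : ‖(t : ℂ) • b‖ = |t| * ‖b‖ := by
    rw [norm_smul]; simp
  rw [hin, hns] at hsq
  have hb1 : (0:ℝ) < ‖b‖ ^ 2 + 1 := by positivity
  have habs : |t| ^ 2 = t ^ 2 := sq_abs t
  have ht2 : (|t| * ‖b‖) ^ 2 = t ^ 2 * ‖b‖ ^ 2 := by rw [mul_pow, habs]
  have htB : t * (‖b‖ ^ 2 + 1) = -r := by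
    rw [ht]; field_simp
  have hr2 : 0 < r ^ 2 := by positivity
  rw [ht2] at hsq
  nlinarith [hsq, htB, hb1, hr2, sq_nonneg (t * (‖b‖ ^ 2 + 1)), mul_pos hb1 hb1]

/-- Lower-bound half of the optimal-recovery theorem for approximability models in
complex Hilbert spaces: for any candidate recovery `g` and any kernel element `u` with
`‖f⋆ - P_V f⋆‖² + ‖u - P_V u‖² ≤ ε²`, the worst-case error of `g` over the model set
`{f : L f = y, dist(f, V) ≤ ε}` is at least `‖u‖`. -/
theorem stmt3 {X : Type*} [NormedAddCommGroup X] [InnerProductSpace ℂ X] [CompleteSpace X]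
    (V : Submodule ℂ X) [V.HasOrthogonalProjection]
    {m : ℕ} (ℓ : Fin m → X →L[ℂ] ℂ) (y : Fin m → ℂ) (ε : ℝ) (hε : 0 < ε)
    (fs : X) (hfsy : ∀ k, ℓ k fs = y k)
    (hfsmin : ∀ f : X, (∀ k, ℓ k f = y k) →
      ‖fs - (V.orthogonalProjectionOnto fs : X)‖ ≤ ‖f - (V.orthogonalProjectionOnto f : X)‖)
    (g : X) (u : X) (hu : ∀ k, ℓ k u = 0)
    (huε : ‖fs - (V.orthogonalProjectionOnto fs : X)‖ ^ 2
        + ‖u - (V.orthogonalProjectionOnto u : X)‖ ^ 2 ≤ ε ^ 2) :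
    ∃ f : X, (∀ k, ℓ k f = y k) ∧ Metric.infDist f (V : Set X) ≤ ε ∧ ‖u‖ ≤ ‖f - g‖ := by
  set a : X := fs - (V.orthogonalProjectionOnto fs : X) with ha
  set b : X := u - (V.orthogonalProjectionOnto u : X) with hb
  -- orthogonality from minimality
  have hre : re ⟪a, b⟫ = 0 := by
    apply aux_re_inner_zero
    intro t
    have hy : ∀ k, ℓ k (fs + (t : ℂ) • u) = y k := by
      intro k; simp [hu k, hfsy k]
    have := hfsmin (fs + (t : ℂ) • u) hy
    have hP : fs + (t : ℂ) • u - (V.orthogonalProjectionOnto (fs + (t : ℂ) • u) : X)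
        = a + (t : ℂ) • b := by
      rw [map_add, map_smul, ha, hb]
      push_cast
      module
    rw [hP] at this
    exact this
  -- candidate satisfies the constraints
  have key : ∀ s : ℂ, s = 1 ∨ s = -1 →
      (∀ k, ℓ k (fs + s • u) = y k) ∧ Metric.infDist (fs + s • u) (V : Set X) ≤ ε := by
    intro s hs
    constructor
    · intro k; simp [hu k, hfsy k]
    · have hP : fs + s • u - (V.orthogonalProjectionOnto (fs + s • u) : X) = a + s • b := by
        rw [map_add, map_smul, ha, hb]; push_cast; module
      have hmem : ((V.orthogonalProjectionOnto (fs + s • u) : X)) ∈ (V : Set X) :=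
        (V.orthogonalProjectionOnto (fs + s • u)).2
      have h1 : Metric.infDist (fs + s • u) (V : Set X) ≤ ‖a + s • b‖ := by
        have := Metric.infDist_le_dist_of_mem (x := fs + s • u) hmem
        rwa [dist_eq_norm, hP] at this
      have hre' : (⟪a, b⟫).re = 0 := by simpa using hre
      have hnsq : ‖a + s • b‖ ^ 2 = ‖a‖ ^ 2 + ‖b‖ ^ 2 := by
        rw [norm_add_sq (𝕜 := ℂ), inner_smul_right, norm_smul]
        rcases hs with rfl | rfl <;> simp [hre'] <;> ring
      have hle : ‖a + s • b‖ ^ 2 ≤ ε ^ 2 := by rw [hnsq]; exact huε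
      have : ‖a + s • b‖ ≤ ε := by
        nlinarith [norm_nonneg (a + s • b)]
      linarith
  by_cases hcase : ‖u‖ ≤ ‖fs + (1:ℂ) • u - g‖
  · obtain ⟨h1, h2⟩ := key 1 (Or.inl rfl)
    exact ⟨fs + (1:ℂ) • u, h1, h2, hcase⟩
  · obtain ⟨h1, h2⟩ := key (-1) (Or.inr rfl)
    refine ⟨fs + (-1:ℂ) • u, h1, h2, ?_⟩
    have heq : (fs + (1:ℂ) • u - g) - (fs + (-1:ℂ) • u - g) = u + u := by
      module
    have htri := norm_sub_le (fs + (1:ℂ) • u - g) (fs + (-1:ℂ) • u - g)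
    rw [heq] at htri
    have h2u : ‖u + u‖ = 2 * ‖u‖ := by
      rw [← two_smul ℝ u, norm_smul]; simp
    push_neg at hcase
    linarith [h2u ▸ htri]
end

section
/- Let X be a complex normed space, V a linear subspace of X, ℓ_1,…,ℓ_m and Q continuous linear functionals on X, and L : X → ℂ^m the map L(f) = (ℓ_1(f),…,ℓ_m(f)). Assume ker(L) ∩ V = {0}, and let μ ≥ 0 satisfy |Q(u)| ≤ μ · dist(u, V) for every u ∈ ker(L). Then there exists a ∈ ℂ^m such that Σ_{k=1}^m a_k ℓ_k(v) = Q(v) for every v ∈ V and ‖Q − Σ_{k=1}^m a_k ℓ_k‖_{X*} ≤ μ, where ‖·‖_{X*} denotes the operator norm of a continuous linear functional on X. -/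
/-- Strong-duality step of the optimal-estimation theorem in complex normed spaces:
if `ker(L) ∩ V = {0}` and `|Q(u)| ≤ μ · dist(u, V)` for all `u ∈ ker(L)`, then there is
a weight vector `a` agreeing with `Q` on `V` such that `‖Q - Σ a_k ℓ_k‖_{X*} ≤ μ`. -/
theorem stmt6 {X : Type*} [NormedAddCommGroup X] [NormedSpace ℂ X]
    (V : Submodule ℂ X) {m : ℕ} (ℓ : Fin m → X →L[ℂ] ℂ) (Q : X →L[ℂ] ℂ)
    (hcap : ∀ u : X, (∀ k, ℓ k u = 0) → u ∈ V → u = 0)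
    (μ : ℝ) (hμ0 : 0 ≤ μ)
    (hμ : ∀ u : X, (∀ k, ℓ k u = 0) → ‖Q u‖ ≤ μ * Metric.infDist u (V : Set X)) :
    ∃ a : Fin m → ℂ, (∀ v ∈ V, ∑ k, a k * ℓ k v = Q v) ∧
      ‖Q - ∑ k, a k • ℓ k‖ ≤ μ := by
  classical
  set K : Submodule ℂ X := ⨅ k, LinearMap.ker ((ℓ k : X →L[ℂ] ℂ) : X →ₗ[ℂ] ℂ) with hK
  have memK : ∀ u : X, u ∈ K ↔ ∀ k, ℓ k u = 0 := by
    intro u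
    simp [hK, Submodule.mem_iInf, LinearMap.mem_ker]
  -- the sum map K × V → X
  set e : (K × V) →ₗ[ℂ] X := K.subtype.coprod V.subtype with he
  have he_apply : ∀ p : K × V, e p = (p.1 : X) + (p.2 : X) := fun p => rfl
  have he_inj : Function.Injective e := by
    rw [← LinearMap.ker_eq_bot]
    rw [Submodule.eq_bot_iff]
    rintro ⟨u, v⟩ hp
    have h0 : (u : X) + (v : X) = 0 := hp
    have hu : (u : X) = -(v : X) := eq_neg_of_add_eq_zero_left h0
    have huV : (u : X) ∈ V := hu ▸ V.neg_mem v.2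
    have hu0 : (u : X) = 0 := hcap u ((memK u).1 u.2) huV
    have hv0 : (v : X) = 0 := by
      have := h0; rw [hu0, zero_add] at this; exact this
    exact Prod.ext (Subtype.ext hu0) (Subtype.ext hv0)
  set W : Submodule ℂ X := LinearMap.range e with hW
  set q : (K × V) ≃ₗ[ℂ] W := LinearEquiv.ofInjective e he_inj with hq
  -- the functional on W
  set f₀ : W →ₗ[ℂ] ℂ :=
    Q.toLinearMap ∘ₗ K.subtype ∘ₗ (LinearMap.fst ℂ K V) ∘ₗ q.symm.toLinearMap with hf₀
  have f₀_apply : ∀ w : W, f₀ w = Q ((q.symm w).1 : X) := fun w => rfl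
  have key : ∀ w : W, ‖f₀ w‖ ≤ μ * ‖w‖ := by
    intro w
    set p := q.symm w with hp
    have hwp : (w : X) = (p.1 : X) + (p.2 : X) := by
      have : (q p : X) = e p := rfl
      rw [hp, LinearEquiv.apply_symm_apply] at this
      rw [this, he_apply]
    have huK : ∀ k, ℓ k (p.1 : X) = 0 := (memK _).1 p.1.2
    have h1 : ‖f₀ w‖ ≤ μ * Metric.infDist (p.1 : X) (V : Set X) := by
      rw [f₀_apply]; exact hμ _ huK
    have h2 : Metric.infDist (p.1 : X) (V : Set X) ≤ ‖w‖ := by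
      have hmem : -(p.2 : X) ∈ (V : Set X) := V.neg_mem p.2.2
      calc Metric.infDist (p.1 : X) (V : Set X) ≤ dist (p.1 : X) (-(p.2 : X)) :=
            Metric.infDist_le_dist_of_mem hmem
        _ = ‖(p.1 : X) + (p.2 : X)‖ := by rw [dist_eq_norm, sub_neg_eq_add]
        _ = ‖w‖ := by rw [← hwp]; rfl
    calc ‖f₀ w‖ ≤ μ * Metric.infDist (p.1 : X) (V : Set X) := h1
      _ ≤ μ * ‖w‖ := by
          exact mul_le_mul_of_nonneg_left h2 hμ0
  set f : W →L[ℂ] ℂ := f₀.mkContinuous μ key with hf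
  obtain ⟨Φ, hΦext, hΦnorm⟩ := exists_extension_norm_eq W f
  have hΦle : ‖Φ‖ ≤ μ := hΦnorm ▸ f₀.mkContinuous_norm_le hμ0 key
  -- values of Φ on K and V
  have hΦval : ∀ p : K × V, Φ ((p.1 : X) + (p.2 : X)) = Q (p.1 : X) := by
    intro p
    have hwmem : (p.1 : X) + (p.2 : X) ∈ W := ⟨p, rfl⟩
    have : Φ (⟨(p.1 : X) + (p.2 : X), hwmem⟩ : W) = f ⟨(p.1 : X) + (p.2 : X), hwmem⟩ :=
      hΦext _
    rw [this]
    have hqp : q p = (⟨(p.1 : X) + (p.2 : X), hwmem⟩ : W) := by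
      apply Subtype.ext
      rfl
    have : f (⟨(p.1 : X) + (p.2 : X), hwmem⟩ : W) = f₀ (q p) := by rw [hqp]; rfl
    rw [this, f₀_apply, LinearEquiv.symm_apply_apply]
  have hΦK : ∀ u : X, (∀ k, ℓ k u = 0) → Φ u = Q u := by
    intro u hu
    have := hΦval (⟨u, (memK u).2 hu⟩, 0)
    simpa using this
  have hΦV : ∀ v ∈ V, Φ v = 0 := by
    intro v hv
    have := hΦval (0, ⟨v, hv⟩)
    simpa using this
  -- Q - Φ vanishes on K, hence is a combination of the ℓ k
  have hker : (⨅ k, LinearMap.ker ((ℓ k : X →L[ℂ] ℂ) : X →ₗ[ℂ] ℂ)) ≤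
      LinearMap.ker ((Q - Φ : X →L[ℂ] ℂ) : X →ₗ[ℂ] ℂ) := by
    intro u hu
    have hu' : ∀ k, ℓ k u = 0 := by
      simpa [Submodule.mem_iInf, LinearMap.mem_ker] using hu
    simp [LinearMap.mem_ker, hΦK u hu']
  have hspan := mem_span_of_iInf_ker_le_ker hker
  obtain ⟨a, ha⟩ := (Submodule.mem_span_range_iff_exists_fun ℂ).1 hspan
  refine ⟨a, ?_, ?_⟩
  · intro v hv
    have hav : ∑ k, a k • (((ℓ k : X →L[ℂ] ℂ) : X →ₗ[ℂ] ℂ)) v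
        = ((Q - Φ : X →L[ℂ] ℂ) : X →ₗ[ℂ] ℂ) v := by
      rw [← ha]; simp
    simp only [LinearMap.smul_apply, smul_eq_mul] at hav
    have : ∑ k, a k * ℓ k v = Q v - Φ v := hav
    rw [this, hΦV v hv, sub_zero]
  · have heq : Q - ∑ k, a k • ℓ k = Φ := by
      ext x
      have hax : ∑ k, a k • (((ℓ k : X →L[ℂ] ℂ) : X →ₗ[ℂ] ℂ)) x
          = ((Q - Φ : X →L[ℂ] ℂ) : X →ₗ[ℂ] ℂ) x := by
        rw [← ha]; simp
      simp only [LinearMap.smul_apply, smul_eq_mul] at hax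
      have : ∑ k, a k * ℓ k x = Q x - Φ x := hax
      simp [ContinuousLinearMap.sub_apply, ContinuousLinearMap.sum_apply, this]
    rw [heq]; exact hΦle
end

section
/- Let X be a complex Hilbert space, let L_1,…,L_m ∈ X be linearly independent, let ℓ_k(f) = ⟨f, L_k⟩ and L(f) = (ℓ_1(f),…,ℓ_m(f)), and let V_1,…,V_n ∈ X be orthonormal with n ≤ m and V = span{V_1,…,V_n}. Define G ∈ ℂ^{m×n} by G_{k,j} = ⟨V_j, L_k⟩ and H ∈ ℂ^{m×m} by H_{k,j} = ⟨L_j, L_k⟩ (so H is Hermitian positive definite). Assume ker(L) ≠ {0} and V ∩ ker(L) = {0}. Then the Hermitian matrix G*H^{−1}G is positive definite and sup{‖u‖²/dist(u, V)² : u ∈ ker(L), u ≠ 0} = 1/λ_min(G*H^{−1}G), where λ_min denotes the smallest eigenvalue. -/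
open Matrix
open scoped ComplexOrder

lemma ray_eq' {n : ℕ} {M : Matrix (Fin n) (Fin n) ℂ} (hM : M.IsHermitian) (c : Fin n → ℂ) :
    ∃ d : Fin n → ℂ,
      star c ⬝ᵥ M *ᵥ c = ∑ i, (hM.eigenvalues i : ℂ) * Complex.normSq (d i) ∧
      star c ⬝ᵥ c = ∑ i, (Complex.normSq (d i) : ℂ) := by
  classical
  set U : Matrix (Fin n) (Fin n) ℂ := (hM.eigenvectorUnitary : Matrix (Fin n) (Fin n) ℂ) with hU
  set d : Fin n → ℂ := Uᴴ *ᵥ c with hd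
  have hsc : star c ᵥ* U = star d := by
    rw [hd, star_mulVec, conjTranspose_conjTranspose]
  have hstarU : star U = Uᴴ := rfl
  refine ⟨d, ?_, ?_⟩
  · conv_lhs => rw [hM.spectral_theorem, Unitary.conjStarAlgAut_apply]
    rw [← mulVec_mulVec, dotProduct_mulVec, ← vecMul_vecMul, hsc, hstarU, ← hd]
    simp only [dotProduct, vecMul_diagonal, Function.comp_apply, Pi.star_apply]
    refine Finset.sum_congr rfl fun i _ => ?_
    rw [RCLike.star_def, mul_comm ((starRingEnd ℂ) (d i)) _, mul_assoc,
      ← Complex.normSq_eq_conj_mul_self]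
    norm_cast
    exact (Complex.ofReal_mul _ _).symm
  · have hc : U *ᵥ d = c := by
      rw [hd, mulVec_mulVec, ← hstarU, Matrix.mem_unitaryGroup_iff.mp hM.eigenvectorUnitary.2,
        one_mulVec]
    have : star c ⬝ᵥ c = star d ⬝ᵥ d := by
      conv_lhs => rw [← hc]
      rw [star_mulVec, dotProduct_mulVec, vecMul_vecMul, ← hstarU,
        Matrix.mem_unitaryGroup_iff'.mp hM.eigenvectorUnitary.2, vecMul_one]
    rw [this]
    simp only [dotProduct, Pi.star_apply, RCLike.star_def]
    exact Finset.sum_congr rfl fun i _ => (Complex.normSq_eq_conj_mul_self).symm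

lemma ray_lower' {n : ℕ} {M : Matrix (Fin n) (Fin n) ℂ} (hM : M.IsHermitian) {lam : ℝ}
    (hlam : ∀ i, lam ≤ hM.eigenvalues i) (c : Fin n → ℂ) :
    lam * (star c ⬝ᵥ c).re ≤ (star c ⬝ᵥ M *ᵥ c).re := by
  obtain ⟨d, h1, h2⟩ := ray_eq' hM c
  have e1 : (star c ⬝ᵥ M *ᵥ c).re = ∑ i, hM.eigenvalues i * Complex.normSq (d i) := by
    rw [h1]
    rw [show (∑ i, (hM.eigenvalues i : ℂ) * (Complex.normSq (d i) : ℂ))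
        = ((∑ i, hM.eigenvalues i * Complex.normSq (d i) : ℝ) : ℂ) by push_cast; ring]
    exact Complex.ofReal_re _
  have e2 : (star c ⬝ᵥ c).re = ∑ i, Complex.normSq (d i) := by
    rw [h2]
    rw [show (∑ i, ((Complex.normSq (d i) : ℝ) : ℂ))
        = ((∑ i, Complex.normSq (d i) : ℝ) : ℂ) by push_cast; ring]
    exact Complex.ofReal_re _
  rw [e1, e2, Finset.mul_sum]
  exact Finset.sum_le_sum fun i _ =>
    mul_le_mul_of_nonneg_right (hlam i) (Complex.normSq_nonneg _)

lemma unit_eigvec {n : ℕ} {M : Matrix (Fin n) (Fin n) ℂ} (hM : M.IsHermitian) (i : Fin n) :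
    star ⇑(hM.eigenvectorBasis i) ⬝ᵥ ⇑(hM.eigenvectorBasis i) = 1 := by
  have h := hM.eigenvectorBasis.orthonormal.1 i
  have h2 : (inner ℂ (hM.eigenvectorBasis i) (hM.eigenvectorBasis i) : ℂ) = 1 := by
    rw [inner_self_eq_norm_sq_to_K, h]; norm_num
  rwa [EuclideanSpace.inner_eq_star_dotProduct, dotProduct_comm] at h2


/-- The compatibility indicator in a complex Hilbert space: for observation
functionals `ℓ_k = ⟨·, L_k⟩` with linearly independent representers `L_1,…,L_m` and an
orthonormal system `V_1,…,V_n` spanning `V`, the matrix `Gᴴ H⁻¹ G` is positive definite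
and `sup {‖u‖²/dist(u,V)² : u ∈ ker L, u ≠ 0} = 1/λ_min(Gᴴ H⁻¹ G)`. -/
theorem stmt7 {X : Type*} [NormedAddCommGroup X] [InnerProductSpace ℂ X] [CompleteSpace X]
    {m n : ℕ} (hn : 0 < n) (hnm : n ≤ m)
    (L : Fin m → X) (hL : LinearIndependent ℂ L)
    (V : Fin n → X) (hV : Orthonormal ℂ V)
    (hker : ∃ u : X, u ≠ 0 ∧ ∀ k, (inner ℂ (L k) u : ℂ) = 0)
    (hcap : ∀ u : X, (∀ k, (inner ℂ (L k) u : ℂ) = 0) →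
      u ∈ Submodule.span ℂ (Set.range V) → u = 0)
    (G : Matrix (Fin m) (Fin n) ℂ) (hG : ∀ k j, G k j = (inner ℂ (L k) (V j) : ℂ))
    (H : Matrix (Fin m) (Fin m) ℂ) (hH : ∀ k j, H k j = (inner ℂ (L k) (L j) : ℂ)) :
    (Gᴴ * H⁻¹ * G).PosDef ∧
      ∀ h : (Gᴴ * H⁻¹ * G).IsHermitian,
        sSup {x : ℝ | ∃ u : X, u ≠ 0 ∧ (∀ k, (inner ℂ (L k) u : ℂ) = 0) ∧
            x = ‖u‖ ^ 2 / (Metric.infDist u (Submodule.span ℂ (Set.range V) : Set X)) ^ 2}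
          = 1 / ⨅ i, h.eigenvalues i := by
  classical
  haveI : Nonempty (Fin n) := ⟨⟨0, hn⟩⟩
  set M := Gᴴ * H⁻¹ * G with hMdef
  set VS : Submodule ℂ X := Submodule.span ℂ (Set.range V) with hVSdef
  -- H is positive definite
  have hHherm : H.IsHermitian := by
    ext k j
    simp only [conjTranspose_apply, hH, RCLike.star_def, inner_conj_symm]
  have hHquad : ∀ x : Fin m → ℂ,
      star x ⬝ᵥ H *ᵥ x = (inner ℂ (∑ k, x k • L k) (∑ k, x k • L k) : ℂ) := by
    intro x
    rw [sum_inner]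
    simp only [inner_smul_left, inner_sum, inner_smul_right, ← hH]
    simp only [dotProduct, mulVec, Pi.star_apply, RCLike.star_def, Finset.mul_sum]
    exact Finset.sum_congr rfl fun k _ => Finset.sum_congr rfl fun j _ => by ring
  have hHpd : H.PosDef := by
    refine Matrix.PosDef.of_dotProduct_mulVec_pos hHherm fun x hx => ?_
    rw [hHquad x, inner_self_eq_norm_sq_to_K]
    have hne : (∑ k, x k • L k) ≠ 0 := by
      intro h0
      exact hx (funext fun k => (Fintype.linearIndependent_iff.mp hL) x h0 k)
    have hp : (0:ℝ) < ‖∑ k, x k • L k‖ ^ 2 := by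
      have := norm_pos_iff.mpr hne
      positivity
    calc (0 : ℂ) < ((‖∑ k, x k • L k‖ ^ 2 : ℝ) : ℂ) := by exact_mod_cast hp
      _ = (‖∑ k, x k • L k‖ : ℂ) ^ 2 := by push_cast; ring
  have hHdet : IsUnit H.det := Matrix.isUnit_iff_isUnit_det _ |>.mp hHpd.isUnit
  have hHmul : H * H⁻¹ = 1 := Matrix.mul_nonsing_inv _ hHdet
  have hHinvherm : H⁻¹ᴴ = H⁻¹ := by
    rw [Matrix.conjTranspose_nonsing_inv, hHherm.eq]
  -- the vectors associated to a coefficient vector c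
  set vV : (Fin n → ℂ) → X := fun c => ∑ j, c j • V j with hvVdef
  set aa : (Fin n → ℂ) → (Fin m → ℂ) := fun c => H⁻¹ *ᵥ (G *ᵥ c) with haadef
  set wL : (Fin n → ℂ) → X := fun c => ∑ k, aa c k • L k with hwLdef
  set uu : (Fin n → ℂ) → X := fun c => vV c - wL c with huudef
  have hinLv : ∀ (c : Fin n → ℂ) k, (inner ℂ (L k) (vV c) : ℂ) = (G *ᵥ c) k := by
    intro c k
    simp only [hvVdef, inner_sum, inner_smul_right, ← hG, mulVec, dotProduct]
    exact Finset.sum_congr rfl fun j _ => by ring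
  have hinLw : ∀ (c : Fin n → ℂ) k, (inner ℂ (L k) (wL c) : ℂ) = (G *ᵥ c) k := by
    intro c k
    simp only [hwLdef, inner_sum, inner_smul_right, ← hH]
    have h1 : ∑ j, aa c j * H k j = (H *ᵥ aa c) k := by
      simp only [mulVec, dotProduct]
      exact Finset.sum_congr rfl fun j _ => by ring
    rw [h1, haadef, mulVec_mulVec, hHmul, one_mulVec]
  have hUu : ∀ (c : Fin n → ℂ) k, (inner ℂ (L k) (uu c) : ℂ) = 0 := by
    intro c k
    simp only [huudef, inner_sub_right, hinLv, hinLw, sub_self]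
  have horthL : ∀ (y : X), (∀ k, (inner ℂ (L k) y : ℂ) = 0) →
      ∀ b : Fin m → ℂ, (inner ℂ (∑ k, b k • L k) y : ℂ) = 0 := by
    intro y hy b
    rw [sum_inner]
    simp [inner_smul_left, hy]
  have hwU : ∀ (c : Fin n → ℂ) (y : X), (∀ k, (inner ℂ (L k) y : ℂ) = 0) →
      (inner ℂ (wL c) y : ℂ) = 0 := by
    intro c y hy
    simp only [hwLdef]
    exact horthL y hy (aa c)
  have hwv : ∀ c : Fin n → ℂ, (inner ℂ (wL c) (vV c) : ℂ) = inner ℂ (wL c) (wL c) := by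
    intro c
    have hsplit : vV c = wL c + uu c := by simp [huudef]
    rw [hsplit, inner_add_right, hwU c (uu c) (hUu c), add_zero]
  have hwquad : ∀ c : Fin n → ℂ, (inner ℂ (wL c) (wL c) : ℂ) = star c ⬝ᵥ M *ᵥ c := by
    intro c
    rw [← hwv]
    have h1 : (inner ℂ (wL c) (vV c) : ℂ) = star (aa c) ⬝ᵥ (G *ᵥ c) := by
      simp only [hwLdef]
      rw [sum_inner]
      simp only [inner_smul_left, hinLv, dotProduct, Pi.star_apply, RCLike.star_def]
    have h2 : star c ⬝ᵥ M *ᵥ c = star (G *ᵥ c) ⬝ᵥ (H⁻¹ *ᵥ (G *ᵥ c)) := by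
      rw [hMdef, Matrix.mul_assoc, ← mulVec_mulVec, dotProduct_mulVec, ← star_mulVec,
        ← mulVec_mulVec]
    rw [h1, h2, haadef]
    rw [star_mulVec, hHinvherm, ← dotProduct_mulVec]
  -- norms
  have hstarcc : ∀ c : Fin n → ℂ, star c ⬝ᵥ c = ((∑ j, Complex.normSq (c j) : ℝ) : ℂ) := by
    intro c
    simp only [dotProduct, Pi.star_apply, RCLike.star_def]
    push_cast
    exact Finset.sum_congr rfl fun j _ => (Complex.normSq_eq_conj_mul_self).symm
  have hnormvV : ∀ c : Fin n → ℂ, ‖vV c‖ ^ 2 = (star c ⬝ᵥ c).re := by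
    intro c
    have h1 : (inner ℂ (vV c) (vV c) : ℂ) = star c ⬝ᵥ c := by
      simp only [hvVdef]
      rw [hV.inner_sum c c Finset.univ]
      simp [dotProduct]
    rw [← inner_self_eq_norm_sq (𝕜 := ℂ), h1]
    rfl
  have hwnormsq : ∀ c : Fin n → ℂ, star c ⬝ᵥ M *ᵥ c = ((‖wL c‖ ^ 2 : ℝ) : ℂ) := by
    intro c
    rw [← hwquad c, inner_self_eq_norm_sq_to_K]
    norm_cast
  have hpyth : ∀ c : Fin n → ℂ, ‖vV c‖ ^ 2 = ‖uu c‖ ^ 2 + ‖wL c‖ ^ 2 := by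
    intro c
    have hsplit : vV c = uu c + wL c := by simp [huudef]
    have hperp : (inner ℂ (uu c) (wL c) : ℂ) = 0 := by
      rw [← inner_conj_symm, hwU c (uu c) (hUu c), map_zero]
    rw [hsplit, norm_add_sq (𝕜 := ℂ), hperp]
    simp
  -- the orthogonal projection onto the span of V
  set cu : X → (Fin n → ℂ) := fun u j => (inner ℂ (V j) u : ℂ) with hcudef
  have hPmem : ∀ c : Fin n → ℂ, vV c ∈ VS := by
    intro c
    simp only [hvVdef]
    exact Submodule.sum_mem _ fun j _ =>
      Submodule.smul_mem _ _ (Submodule.subset_span ⟨j, rfl⟩)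
  have hVperp : ∀ (u : X) (j : Fin n), (inner ℂ (V j) (u - vV (cu u)) : ℂ) = 0 := by
    intro u j
    rw [inner_sub_right]
    have h1 : (inner ℂ (V j) (vV (cu u)) : ℂ) = cu u j := by
      simp only [hvVdef]
      exact hV.inner_right_fintype (cu u) j
    rw [h1]
    simp [hcudef]
  have hperpVS : ∀ (u : X) (w : X), w ∈ VS → (inner ℂ w (u - vV (cu u)) : ℂ) = 0 := by
    intro u w hw
    have hle : VS ≤ (ℂ ∙ (u - vV (cu u)))ᗮ := by
      rw [hVSdef, Submodule.span_le]
      rintro - ⟨j, rfl⟩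
      exact Submodule.mem_orthogonal_singleton_iff_inner_left.mpr (hVperp u j)
    exact Submodule.mem_orthogonal_singleton_iff_inner_left.mp (hle hw)
  haveI : Nonempty (VS : Set X) := ⟨⟨0, VS.zero_mem⟩⟩
  have hdist : ∀ u : X, Metric.infDist u (VS : Set X) = ‖u - vV (cu u)‖ := by
    intro u
    refine le_antisymm ?_ ?_
    · have h1 := Metric.infDist_le_dist_of_mem (x := u) (hPmem (cu u))
      rwa [dist_eq_norm] at h1
    · rw [Metric.infDist_eq_iInf]
      refine le_ciInf fun v => ?_
      rw [dist_eq_norm]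
      have hmem : vV (cu u) - (v : X) ∈ VS := Submodule.sub_mem _ (hPmem _) v.2
      have hp : (inner ℂ (u - vV (cu u)) (vV (cu u) - (v : X)) : ℂ) = 0 := by
        rw [← inner_conj_symm, hperpVS u _ hmem, map_zero]
      have key : ‖u - (v : X)‖ ^ 2 = ‖u - vV (cu u)‖ ^ 2 + ‖vV (cu u) - (v : X)‖ ^ 2 := by
        have hsplit : u - (v : X) = (u - vV (cu u)) + (vV (cu u) - (v : X)) := by abel
        rw [hsplit, norm_add_sq (𝕜 := ℂ), hp]
        simp
      have h1 : ‖u - vV (cu u)‖ ^ 2 ≤ ‖u - (v : X)‖ ^ 2 := by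
        rw [key]; nlinarith [sq_nonneg ‖vV (cu u) - (v : X)‖]
      exact le_of_pow_le_pow_left₀ two_ne_zero (norm_nonneg _) h1
  have hdist2 : ∀ u : X,
      (Metric.infDist u (VS : Set X)) ^ 2 = ‖u‖ ^ 2 - ‖vV (cu u)‖ ^ 2 := by
    intro u
    rw [hdist u]
    have hp : (inner ℂ (u - vV (cu u)) (vV (cu u)) : ℂ) = 0 := by
      rw [← inner_conj_symm, hperpVS u _ (hPmem _), map_zero]
    have h1 : ‖u‖ ^ 2 = ‖u - vV (cu u)‖ ^ 2 + ‖vV (cu u)‖ ^ 2 := by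
      conv_lhs => rw [show u = (u - vV (cu u)) + vV (cu u) by abel]
      rw [norm_add_sq (𝕜 := ℂ), hp]
      simp
    linarith
  -- M is positive definite
  have hMherm : M.IsHermitian := by
    show Mᴴ = M
    rw [hMdef, conjTranspose_mul, conjTranspose_mul, conjTranspose_conjTranspose, hHinvherm,
      Matrix.mul_assoc]
  have hMpd : M.PosDef := by
    refine Matrix.PosDef.of_dotProduct_mulVec_pos hMherm fun c hc => ?_
    rw [hwnormsq c]
    have hwne : wL c ≠ 0 := by
      intro h0
      have hker' : ∀ k, (inner ℂ (L k) (vV c) : ℂ) = 0 := by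
        intro k
        have := hUu c k
        simp only [huudef, h0, sub_zero] at this
        exact this
      have hv0 : vV c = 0 := hcap _ hker' (hPmem c)
      have hc0 : c = 0 := by
        have h2 := Fintype.linearIndependent_iff.mp hV.linearIndependent c
        simp only [hvVdef] at hv0
        exact funext (h2 hv0)
      exact hc hc0
    have hp : (0:ℝ) < ‖wL c‖ ^ 2 := by
      have := norm_pos_iff.mpr hwne
      positivity
    exact_mod_cast hp
  refine ⟨hMpd, fun h => ?_⟩
  set lam := ⨅ i, h.eigenvalues i with hlamdef
  have hlam_le : ∀ i, lam ≤ h.eigenvalues i := fun i =>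
    ciInf_le (Finite.bddBelow_range _) i
  obtain ⟨i₀, -, hi₀⟩ := Finset.exists_min_image Finset.univ h.eigenvalues
    Finset.univ_nonempty
  have hlam_eq : lam = h.eigenvalues i₀ :=
    le_antisymm (hlam_le i₀) (le_ciInf fun i => hi₀ i (Finset.mem_univ i))
  have hlam_pos : 0 < lam := by
    rw [hlam_eq]
    exact hMpd.eigenvalues_pos i₀
  -- the minimizing eigenvector, made opaque
  obtain ⟨c₀, hc₀unit, hc₀quad⟩ : ∃ c₀ : Fin n → ℂ,
      star c₀ ⬝ᵥ c₀ = 1 ∧ (star c₀ ⬝ᵥ M *ᵥ c₀).re = lam := by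
    refine ⟨⇑(h.eigenvectorBasis i₀), unit_eigvec h i₀, ?_⟩
    rw [hlam_eq]
    exact (h.eigenvalues_eq i₀).symm
  clear hlam_eq hi₀
  clear i₀
  clear_value lam
  have hwc₀ : ‖wL c₀‖ ^ 2 = lam := by
    have h1 := hwnormsq c₀
    rw [h1] at hc₀quad
    rw [← hc₀quad, Complex.ofReal_re]
  have hvVc₀ : ‖vV c₀‖ ^ 2 = 1 := by
    rw [hnormvV c₀, hc₀unit]
    simp
  have hpy₀ := hpyth c₀
  have hu₀norm : ‖uu c₀‖ ^ 2 = 1 - lam := by linarith only [hpy₀, hvVc₀, hwc₀]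
  have hlam_le_one : lam ≤ 1 := by linarith only [hu₀norm, sq_nonneg ‖uu c₀‖]
  -- upper bound for the V-projection of kernel elements
  have hcc : ∀ c : Fin n → ℂ, star c ⬝ᵥ c = ((‖vV c‖ ^ 2 : ℝ) : ℂ) := by
    intro c
    rw [hstarcc c]
    norm_cast
    rw [hnormvV c, hstarcc c, Complex.ofReal_re]
  have hupper : ∀ u : X, (∀ k, (inner ℂ (L k) u : ℂ) = 0) →
      ‖vV (cu u)‖ ^ 2 ≤ (1 - lam) * ‖u‖ ^ 2 := by
    intro u hu
    set c := cu u with hcdef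
    have hwu : (inner ℂ (vV c) u : ℂ) = ((‖vV c‖ ^ 2 : ℝ) : ℂ) := by
      rw [← hcc c]
      simp only [hvVdef]
      rw [sum_inner]
      simp only [inner_smul_left, dotProduct, Pi.star_apply, RCLike.star_def]
      rfl
    have hiu : (inner ℂ (uu c) u : ℂ) = ((‖vV c‖ ^ 2 : ℝ) : ℂ) := by
      have h1 : (inner ℂ (uu c) u : ℂ) = inner ℂ (vV c) u - inner ℂ (wL c) u := by
        simp only [huudef, inner_sub_left]
      rw [h1, hwU c u hu, sub_zero, hwu]
    have hCS : ‖vV c‖ ^ 2 ≤ ‖uu c‖ * ‖u‖ := by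
      have h2 := norm_inner_le_norm (𝕜 := ℂ) (uu c) u
      rw [hiu, Complex.norm_real, Real.norm_eq_abs, abs_of_nonneg (sq_nonneg _)] at h2
      exact h2
    have hray := ray_lower' h hlam_le c
    have h5 : (star c ⬝ᵥ M *ᵥ c).re = ‖wL c‖ ^ 2 := by
      rw [hwnormsq c, Complex.ofReal_re]
    have h6 : (star c ⬝ᵥ c).re = ‖vV c‖ ^ 2 := (hnormvV c).symm
    rw [h6, h5] at hray
    have hpy := hpyth c
    have huun : ‖uu c‖ ^ 2 ≤ (1 - lam) * ‖vV c‖ ^ 2 := by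
      linarith only [hray, hpy]
    rcases eq_or_ne (‖vV c‖) 0 with h0 | h0
    · rw [h0]
      have h9 : (0:ℝ) ≤ (1 - lam) := by linarith only [hlam_le_one]
      nlinarith only [h9, sq_nonneg ‖u‖]
    · have hpos : 0 < ‖vV c‖ ^ 2 :=
        pow_pos (lt_of_le_of_ne (norm_nonneg _) (Ne.symm h0)) 2
      have hsq : (‖vV c‖ ^ 2) ^ 2 ≤ ‖uu c‖ ^ 2 * ‖u‖ ^ 2 := by
        nlinarith only [hCS, norm_nonneg (uu c), norm_nonneg u, sq_nonneg (‖vV c‖ ^ 2)]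
      nlinarith only [hsq, huun, hpos, sq_nonneg ‖u‖]
  -- bounds on the ratio
  have hratio : ∀ u : X, u ≠ 0 → (∀ k, (inner ℂ (L k) u : ℂ) = 0) →
      lam * ‖u‖ ^ 2 ≤ (Metric.infDist u (VS : Set X)) ^ 2 ∧
        (Metric.infDist u (VS : Set X)) ^ 2 ≤ ‖u‖ ^ 2 := by
    intro u hu0 hu
    have hd2 := hdist2 u
    have hup := hupper u hu
    constructor
    · linarith only [hd2, hup]
    · linarith only [hd2, sq_nonneg ‖vV (cu u)‖]
  have hS_le : ∀ x ∈ {x : ℝ | ∃ u : X, u ≠ 0 ∧ (∀ k, (inner ℂ (L k) u : ℂ) = 0) ∧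
      x = ‖u‖ ^ 2 / (Metric.infDist u (VS : Set X)) ^ 2}, x ≤ 1 / lam := by
    rintro x ⟨u, hu0, hu, rfl⟩
    obtain ⟨h1, h2⟩ := hratio u hu0 hu
    have hu2 : (0:ℝ) < ‖u‖ ^ 2 := by
      have := norm_pos_iff.mpr hu0
      positivity
    have hdpos : 0 < (Metric.infDist u (VS : Set X)) ^ 2 :=
      lt_of_lt_of_le (by positivity) h1
    rw [div_le_div_iff₀ hdpos hlam_pos]
    nlinarith only [h1]
  have hS_ge : ∃ x ∈ {x : ℝ | ∃ u : X, u ≠ 0 ∧ (∀ k, (inner ℂ (L k) u : ℂ) = 0) ∧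
      x = ‖u‖ ^ 2 / (Metric.infDist u (VS : Set X)) ^ 2}, 1 / lam ≤ x := by
    rcases le_or_gt 1 lam with hone | hlt
    · obtain ⟨u, hu0, hu⟩ := hker
      refine ⟨_, ⟨u, hu0, hu, rfl⟩, ?_⟩
      obtain ⟨h1, h2⟩ := hratio u hu0 hu
      have hu2 : (0:ℝ) < ‖u‖ ^ 2 := by
        have := norm_pos_iff.mpr hu0
        positivity
      have hdpos : 0 < (Metric.infDist u (VS : Set X)) ^ 2 :=
        lt_of_lt_of_le (by positivity) h1
      rw [div_le_div_iff₀ hlam_pos hdpos]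
      nlinarith only [h2, hone, hu2]
    · set u₀ := uu c₀ with hu₀def
      have hu₀ne : u₀ ≠ 0 := by
        intro h0
        rw [h0] at hu₀norm
        simp at hu₀norm
        linarith only [hu₀norm, hlt]
      have hu₀ker : ∀ k, (inner ℂ (L k) u₀ : ℂ) = 0 := hUu c₀
      refine ⟨_, ⟨u₀, hu₀ne, hu₀ker, rfl⟩, ?_⟩
      have hvVc₀n : ‖vV c₀‖ = 1 := by
        rw [← Real.sqrt_sq (norm_nonneg (vV c₀)), hvVc₀, Real.sqrt_one]
      have hkey : 1 - lam ≤ ‖vV (cu u₀)‖ := by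
        have h1 : (inner ℂ (vV c₀) u₀ : ℂ) = ((‖u₀‖ ^ 2 : ℝ) : ℂ) := by
          have hsplit : vV c₀ = u₀ + wL c₀ := by simp [hu₀def, huudef]
          rw [hsplit, inner_add_left, hwU c₀ u₀ hu₀ker, add_zero,
            inner_self_eq_norm_sq_to_K]
          norm_cast
        have h2 : (inner ℂ (vV c₀) u₀ : ℂ) = inner ℂ (vV c₀) (vV (cu u₀)) := by
          have h3 := hperpVS u₀ (vV c₀) (hPmem c₀)
          rw [inner_sub_right, sub_eq_zero] at h3
          exact h3
        have h4 : ‖u₀‖ ^ 2 = ‖(inner ℂ (vV c₀) (vV (cu u₀)) : ℂ)‖ := by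
          rw [← h2, h1, Complex.norm_real, Real.norm_eq_abs, abs_of_nonneg (sq_nonneg _)]
        calc 1 - lam = ‖u₀‖ ^ 2 := hu₀norm.symm
          _ = ‖(inner ℂ (vV c₀) (vV (cu u₀)) : ℂ)‖ := h4
          _ ≤ ‖vV c₀‖ * ‖vV (cu u₀)‖ := norm_inner_le_norm _ _
          _ = ‖vV (cu u₀)‖ := by rw [hvVc₀n, one_mul]
      have hd2 := hdist2 u₀
      have h1l : (0:ℝ) ≤ 1 - lam := by linarith only [hlt]
      have hPge : (1 - lam) ^ 2 ≤ ‖vV (cu u₀)‖ ^ 2 := by nlinarith only [hkey, h1l]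
      obtain ⟨h1, h2⟩ := hratio u₀ hu₀ne hu₀ker
      have hu2 : (0:ℝ) < ‖u₀‖ ^ 2 := by
        have := norm_pos_iff.mpr hu₀ne
        positivity
      have hdpos : 0 < (Metric.infDist u₀ (VS : Set X)) ^ 2 :=
        lt_of_lt_of_le (by positivity) h1
      rw [div_le_div_iff₀ hlam_pos hdpos]
      have hu₀lam : ‖u₀‖ ^ 2 * lam = (1 - lam) * lam := by rw [hu₀norm]
      linarith only [hd2, hu₀norm, hPge, hu₀lam]
  obtain ⟨x₀, hx₀S, hx₀ge⟩ := hS_ge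
  refine le_antisymm (csSup_le ⟨x₀, hx₀S⟩ hS_le) ?_
  exact le_trans hx₀ge (le_csSup ⟨1 / lam, hS_le⟩ hx₀S)
end

section
/- Fix 0 < r < 1 and integers 1 ≤ n ≤ m, and set ζ_k = r·exp(2πi(k−1)/m) for k = 1,…,m. Define G ∈ ℂ^{m×n} by G_{k,j} = ζ_k^{j−1} (k = 1,…,m, j = 1,…,n) and H ∈ ℂ^{m×m} by H_{k,j} = 1/(1 − conj(ζ_j)·ζ_k) (k, j = 1,…,m). Then H is invertible and G*H^{−1}G = (1 − r^{2m})·I_n. -/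
open Matrix

/-- For equispaced points `ζ_k = r e^{2πi(k-1)/m}` on the circle of radius `r < 1`, the
cross-Gramian `G` of the monomials against the `H²` point-evaluation representers and
the Gramian `H` of the representers satisfy `Gᴴ H⁻¹ G = (1 - r^{2m}) I_n`. -/
theorem stmt9 (r : ℝ) (hr0 : 0 < r) (hr1 : r < 1) (m n : ℕ) (hn : 1 ≤ n) (hnm : n ≤ m)
    (ζ : Fin m → ℂ)
    (hζ : ∀ k, ζ k = (r : ℂ) * Complex.exp (2 * Real.pi * Complex.I * (k : ℕ) / m))
    (G : Matrix (Fin m) (Fin n) ℂ) (hG : ∀ k j, G k j = ζ k ^ (j : ℕ))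
    (H : Matrix (Fin m) (Fin m) ℂ)
    (hH : ∀ k j, H k j = 1 / (1 - (starRingEnd ℂ) (ζ j) * ζ k)) :
    IsUnit H ∧ Gᴴ * H⁻¹ * G = ((1 - r ^ (2 * m) : ℝ) : ℂ) • (1 : Matrix (Fin n) (Fin n) ℂ) := by
  have hm : 0 < m := lt_of_lt_of_le hn hnm
  have hmC : (m : ℂ) ≠ 0 := Nat.cast_ne_zero.mpr hm.ne'
  have hπI : (2 : ℂ) * Real.pi * Complex.I ≠ 0 := by
    simp [Real.pi_ne_zero, Complex.I_ne_zero]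
  -- ζ k ^ m = r ^ m
  have hζm : ∀ k : Fin m, ζ k ^ m = (r : ℂ) ^ m := by
    intro k
    rw [hζ, mul_pow, ← Complex.exp_nat_mul]
    have h1 : (m : ℂ) * (2 * Real.pi * Complex.I * (k : ℕ) / m)
        = ((k : ℕ) : ℂ) * (2 * Real.pi * Complex.I) := by
      field_simp
    rw [h1]
    have h2 : Complex.exp (((k : ℕ) : ℂ) * (2 * ↑Real.pi * Complex.I)) = 1 := by
      simpa using Complex.exp_int_mul_two_pi_mul_I (k : ℕ)
    rw [h2, mul_one]
  -- |ζ k| = r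
  have habs : ∀ k : Fin m, ‖ζ k‖ = r := by
    intro k
    rw [hζ, norm_mul, Complex.norm_real, Real.norm_eq_abs, abs_of_pos hr0]
    have h1 : (2 * (Real.pi : ℂ) * Complex.I * (k : ℕ) / m)
        = ((2 * Real.pi * (k : ℕ) / m : ℝ) : ℂ) * Complex.I := by
      push_cast; ring
    rw [h1, Complex.norm_exp_ofReal_mul_I, mul_one]
  set c : ℂ := 1 - (r : ℂ) ^ (2 * m) with hc
  have hr2m : r ^ (2 * m) < 1 := pow_lt_one₀ hr0.le hr1 (by omega)
  have hcne : c ≠ 0 := by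
    rw [hc]
    intro h
    have h2 : ((1 - r ^ (2 * m) : ℝ) : ℂ) = 0 := by push_cast; linear_combination h
    have := Complex.ofReal_eq_zero.mp h2
    linarith
  set F : Matrix (Fin m) (Fin m) ℂ := Matrix.of (fun k p : Fin m => ζ k ^ (p : ℕ)) with hF
  -- divisibility from exp = 1
  have hexp1 : ∀ d : ℤ, Complex.exp (2 * Real.pi * Complex.I * d / m) = 1 → (m : ℤ) ∣ d := by
    intro d hd
    rw [Complex.exp_eq_one_iff] at hd
    obtain ⟨t, ht⟩ := hd
    refine ⟨t, ?_⟩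
    have h3 : (d : ℂ) = (m : ℂ) * t := by
      field_simp at ht
      apply mul_left_cancel₀ hπI
      linear_combination (2 * (Real.pi : ℂ) * Complex.I) * ht
    exact_mod_cast h3
  -- Fᴴ * F is diagonal
  have hD : Fᴴ * F = Matrix.diagonal (fun p : Fin m => (m : ℂ) * (r : ℂ) ^ (2 * (p : ℕ))) := by
    ext p q
    simp only [Matrix.mul_apply, Matrix.conjTranspose_apply, hF, Matrix.of_apply,
      ← starRingEnd_apply]
    rcases eq_or_ne p q with rfl | hpq
    · have hterm : ∀ k : Fin m, (starRingEnd ℂ) (ζ k ^ (p : ℕ)) * ζ k ^ (p : ℕ)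
          = (r : ℂ) ^ (2 * (p : ℕ)) := by
        intro k
        rw [← Complex.normSq_eq_conj_mul_self, ← Complex.sq_norm, norm_pow, habs]
        push_cast
        rw [← pow_mul]
        ring_nf
      rw [Finset.sum_congr rfl fun k _ => hterm k, Finset.sum_const, Finset.card_univ,
        Fintype.card_fin, Matrix.diagonal_apply_eq, nsmul_eq_mul]
    · set u : ℂ := Complex.exp (2 * Real.pi * Complex.I
        * (((q : ℕ) : ℂ) - ((p : ℕ) : ℂ)) / m) with hu
      have hA : ∀ k : Fin m, (starRingEnd ℂ) (ζ k ^ (p : ℕ)) * ζ k ^ (q : ℕ)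
          = (r : ℂ) ^ ((p : ℕ) + (q : ℕ)) * u ^ (k : ℕ) := by
        intro k
        have hconjk : (starRingEnd ℂ) (2 * (Real.pi : ℂ) * Complex.I * (k : ℕ) / m)
            = -(2 * (Real.pi : ℂ) * Complex.I * (k : ℕ) / m) := by
          simp only [map_div₀, _root_.map_mul, map_ofNat, Complex.conj_I, Complex.conj_ofReal,
            Complex.conj_natCast]
          ring
        rw [hζ k, map_pow, _root_.map_mul, Complex.conj_ofReal, ← Complex.exp_conj, hconjk]
        rw [hu, ← Complex.exp_nat_mul]
        rw [mul_pow, mul_pow, ← Complex.exp_nat_mul, ← Complex.exp_nat_mul, pow_add]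
        rw [mul_mul_mul_comm, ← Complex.exp_add]
        congr 2
        field_simp
        ring
      rw [Finset.sum_congr rfl fun k _ => hA k, ← Finset.mul_sum]
      have hd0 : ((q : ℤ) - (p : ℤ)) ≠ 0 := by
        intro h
        exact hpq (Fin.ext (by omega))
      have hcastd : ((((q : ℤ) - (p : ℤ)) : ℤ) : ℂ) = ((q : ℕ) : ℂ) - ((p : ℕ) : ℂ) := by
        push_cast
        ring
      have hune : u ≠ 1 := by
        intro h
        have hdvd := hexp1 ((q : ℤ) - (p : ℤ)) (by rw [hcastd, ← hu]; exact h)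
        rcases hdvd with ⟨t, ht⟩
        have ht0 : t ≠ 0 := by
          rintro rfl
          rw [mul_zero] at ht
          exact hd0 ht
        have habs1 : |(q : ℤ) - (p : ℤ)| < m := by
          rw [abs_lt]
          have := p.isLt
          have := q.isLt
          omega
        have habs2 : (m : ℤ) ≤ |(q : ℤ) - (p : ℤ)| := by
          rw [ht, abs_mul, abs_of_nonneg (by positivity : (0 : ℤ) ≤ (m : ℤ))]
          have h1 : (1 : ℤ) ≤ |t| := Int.one_le_abs ht0
          nlinarith
        linarith
      have hum : u ^ m = 1 := by
        rw [hu, ← Complex.exp_nat_mul]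
        have heq : (m : ℂ) * (2 * Real.pi * Complex.I * (((q : ℕ) : ℂ) - ((p : ℕ) : ℂ)) / m)
            = ((((q : ℤ) - (p : ℤ)) : ℤ) : ℂ) * (2 * Real.pi * Complex.I) := by
          rw [hcastd]
          field_simp
        rw [heq]
        exact Complex.exp_int_mul_two_pi_mul_I _
      have hsum : ∑ k : Fin m, u ^ (k : ℕ) = 0 := by
        rw [Fin.sum_univ_eq_sum_range, geom_sum_eq hune, hum]
        simp
      rw [hsum, Matrix.diagonal_apply_ne _ hpq, mul_zero]
  have hdetD : (Matrix.diagonal (fun p : Fin m => (m : ℂ) * (r : ℂ) ^ (2 * (p : ℕ)))).det ≠ 0 := by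
    rw [Matrix.det_diagonal]
    apply Finset.prod_ne_zero_iff.mpr
    intro p _
    apply mul_ne_zero hmC
    exact pow_ne_zero _ (by exact_mod_cast hr0.ne')
  have hdetF : IsUnit F.det := by
    have h1 : F.det ≠ 0 := by
      intro h
      apply hdetD
      rw [← hD, Matrix.det_mul, h, mul_zero]
    exact isUnit_iff_ne_zero.mpr h1
  have hdetFH : IsUnit (Fᴴ).det := by
    rw [Matrix.det_conjTranspose]
    exact isUnit_iff_ne_zero.mpr (star_ne_zero.mpr (isUnit_iff_ne_zero.mp hdetF))
  -- H = c⁻¹ • (F * Fᴴ)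
  have hHF : H = c⁻¹ • (F * Fᴴ) := by
    ext k j
    have hw : ‖(starRingEnd ℂ) (ζ j) * ζ k‖ = r * r := by
      rw [norm_mul, Complex.norm_conj, habs, habs]
    have hwne : (starRingEnd ℂ) (ζ j) * ζ k ≠ 1 := by
      intro h
      rw [h] at hw
      simp at hw
      nlinarith
    have hwm : ((starRingEnd ℂ) (ζ j) * ζ k) ^ m = (r : ℂ) ^ (2 * m) := by
      rw [mul_pow, ← map_pow, hζm, hζm]
      rw [← Complex.ofReal_pow, Complex.conj_ofReal, Complex.ofReal_pow]
      rw [← pow_add]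
      congr 1
      omega
    have hsum : ∑ p : Fin m, ζ k ^ (p : ℕ) * (starRingEnd ℂ) (ζ j ^ (p : ℕ))
        = (((r : ℂ) ^ (2 * m)) - 1) / ((starRingEnd ℂ) (ζ j) * ζ k - 1) := by
      have : ∀ p : Fin m, ζ k ^ (p : ℕ) * (starRingEnd ℂ) (ζ j ^ (p : ℕ))
          = ((starRingEnd ℂ) (ζ j) * ζ k) ^ (p : ℕ) := by
        intro p
        rw [map_pow, mul_pow]
        ring
      rw [Finset.sum_congr rfl fun p _ => this p, Fin.sum_univ_eq_sum_range,
        geom_sum_eq hwne, hwm]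
    simp only [Matrix.smul_apply, Matrix.mul_apply, Matrix.conjTranspose_apply, hF,
      Matrix.of_apply, ← starRingEnd_apply]
    rw [hsum, hH k j]
    have h1 : 1 - (starRingEnd ℂ) (ζ j) * ζ k ≠ 0 := by
      intro h
      apply hwne
      linear_combination -h
    have h2 : (starRingEnd ℂ) (ζ j) * ζ k - 1 ≠ 0 := by
      intro h
      apply hwne
      linear_combination h
    rw [hc] at hcne ⊢
    rw [smul_eq_mul, ← neg_div_neg_eq ((r : ℂ) ^ (2 * m) - 1), neg_sub, neg_sub, mul_div_assoc',
      inv_mul_cancel₀ hcne]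
  have hHdet : IsUnit H.det := by
    rw [hHF, Matrix.det_smul, Matrix.det_mul, Matrix.det_conjTranspose]
    apply isUnit_iff_ne_zero.mpr
    apply mul_ne_zero
    · exact pow_ne_zero _ (inv_ne_zero hcne)
    · apply mul_ne_zero (isUnit_iff_ne_zero.mp hdetF)
      exact star_ne_zero.mpr (isUnit_iff_ne_zero.mp hdetF)
  have hHunit : IsUnit H := (Matrix.isUnit_iff_isUnit_det H).mpr hHdet
  -- inverse of H
  have hHinv : H⁻¹ = c • ((Fᴴ)⁻¹ * F⁻¹) := by
    apply Matrix.inv_eq_right_inv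
    rw [hHF, Matrix.smul_mul, Matrix.mul_smul, smul_smul, inv_mul_cancel₀ hcne, one_smul]
    rw [Matrix.mul_assoc, ← Matrix.mul_assoc Fᴴ, Matrix.mul_nonsing_inv _ hdetFH,
      Matrix.one_mul, Matrix.mul_nonsing_inv _ hdetF]
  set P : Matrix (Fin m) (Fin n) ℂ :=
    Matrix.of (fun (p : Fin m) (j : Fin n) => if (p : ℕ) = (j : ℕ) then (1 : ℂ) else 0) with hP
  have hcast : ∀ j : Fin n, ((Fin.castLE hnm j : Fin m) : ℕ) = (j : ℕ) := fun j => rfl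
  have hGP : G = F * P := by
    ext k j
    rw [hG k j]
    simp only [Matrix.mul_apply, hF, hP, Matrix.of_apply]
    have h1 : ∀ p : Fin m, ((p : ℕ) = (j : ℕ)) ↔ (p = Fin.castLE hnm j) := by
      intro p
      constructor
      · intro h; exact Fin.ext (by rw [h, hcast])
      · intro h; rw [h, hcast]
    rw [Finset.sum_congr rfl fun p _ => by rw [if_congr (h1 p) rfl rfl]]
    rw [Finset.sum_eq_single (Fin.castLE hnm j)]
    · simp [hcast]
    · intro b _ hb
      simp [hb]
    · intro h
      exact absurd (Finset.mem_univ _) h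
  have hPP : Pᴴ * P = (1 : Matrix (Fin n) (Fin n) ℂ) := by
    ext i j
    simp only [Matrix.mul_apply, Matrix.conjTranspose_apply, hP, Matrix.of_apply, ← starRingEnd_apply]
    have h1 : ∀ p : Fin m, ((p : ℕ) = (i : ℕ)) ↔ (p = Fin.castLE hnm i) := by
      intro p
      constructor
      · intro h; exact Fin.ext (by rw [h, hcast])
      · intro h; rw [h, hcast]
    have hterm : ∀ p : Fin m,
        (starRingEnd ℂ) (if (p : ℕ) = (i : ℕ) then (1 : ℂ) else 0)
          * (if (p : ℕ) = (j : ℕ) then (1 : ℂ) else 0)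
        = if p = Fin.castLE hnm i then (if (p : ℕ) = (j : ℕ) then (1 : ℂ) else 0) else 0 := by
      intro p
      by_cases h : (p : ℕ) = (i : ℕ)
      · rw [if_pos h, if_pos ((h1 p).mp h), _root_.map_one, one_mul]
      · rw [if_neg h, if_neg (fun hh => h ((h1 p).mpr hh)), map_zero, zero_mul]
    rw [Finset.sum_congr rfl fun p _ => hterm p]
    rw [Finset.sum_eq_single (Fin.castLE hnm i)]
    · rw [if_pos rfl, hcast, Matrix.one_apply]
      by_cases h : i = j
      · rw [if_pos h, if_pos (by rw [h])]
      · rw [if_neg h, if_neg (fun hh => h (Fin.ext hh))]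
    · intro b _ hb
      rw [if_neg hb]
    · intro h
      exact absurd (Finset.mem_univ _) h
  refine ⟨hHunit, ?_⟩
  rw [hGP, hHinv, Matrix.conjTranspose_mul, Matrix.mul_smul, Matrix.smul_mul]
  have key : Pᴴ * Fᴴ * ((Fᴴ)⁻¹ * F⁻¹) * (F * P) = Pᴴ * P := by
    have e1 : F⁻¹ * (F * P) = P := by
      rw [← Matrix.mul_assoc, Matrix.nonsing_inv_mul _ hdetF, Matrix.one_mul]
    calc Pᴴ * Fᴴ * ((Fᴴ)⁻¹ * F⁻¹) * (F * P)
        = Pᴴ * ((Fᴴ * (Fᴴ)⁻¹) * (F⁻¹ * (F * P))) := by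
          simp only [Matrix.mul_assoc]
      _ = Pᴴ * P := by
          rw [Matrix.mul_nonsing_inv _ hdetFH, e1, Matrix.one_mul]
  rw [key, hPP]
  congr 1
  rw [hc]
  push_cast
  ring
end

section
/- Fix 0 < r < 1 and integers 1 ≤ n ≤ m, and set ζ_k = r·exp(2πi(k−1)/m) for k = 1,…,m. Then sup{ (Σ_{j≥0} |a_j|²) / (Σ_{j≥n} |a_j|²) : a ∈ ℓ²(ℕ, ℂ), Σ_{j≥0} a_j ζ_k^j = 0 for all k = 1,…,m, and Σ_{j≥n} |a_j|² > 0 } = 1/(1 − r^{2m}). -/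
lemma geom_root_sum {m : ℕ} {u : ℂ} (hu : u ^ m = 1) :
    ∑ k ∈ Finset.range m, u ^ k = if u = 1 then (m : ℂ) else 0 := by
  split_ifs with h
  · simp [h]
  · rw [geom_sum_eq h, hu]; simp

lemma mod_char {m t j : ℕ} (ht : t < m) : (m : ℤ) ∣ (j : ℤ) - (t : ℤ) ↔ j % m = t := by
  rw [← Nat.modEq_iff_dvd]
  unfold Nat.ModEq
  rw [Nat.mod_eq_of_lt ht]
  exact eq_comm

lemma omega_pow_m' {m : ℕ} (hm : 0 < m) :
    (Complex.exp (2 * Real.pi * Complex.I / m)) ^ m = 1 := by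
  have hm0 : (m:ℂ) ≠ 0 := Nat.cast_ne_zero.2 hm.ne'
  rw [← Complex.exp_nat_mul,
    show (m:ℂ) * (2 * Real.pi * Complex.I / m) = 2 * Real.pi * Complex.I by field_simp]
  exact Complex.exp_two_pi_mul_I

lemma omega_eq_one_iff' {m : ℕ} (hm : 0 < m) (j t : ℕ) :
    (Complex.exp (2 * Real.pi * Complex.I / m)) ^ j *
      ((Complex.exp (2 * Real.pi * Complex.I / m))⁻¹) ^ t = 1 ↔ (m:ℤ) ∣ (j : ℤ) - t := by
  have hm0 : (m:ℂ) ≠ 0 := Nat.cast_ne_zero.2 hm.ne'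
  have hπ : (2 * (Real.pi:ℂ) * Complex.I) ≠ 0 := by
    simp [Real.pi_ne_zero, Complex.I_ne_zero]
  rw [← Complex.exp_nat_mul, ← Complex.exp_neg, ← Complex.exp_nat_mul, ← Complex.exp_add,
    Complex.exp_eq_one_iff]
  constructor
  · rintro ⟨k, hk⟩
    refine ⟨k, ?_⟩
    have h2 : ((j:ℂ) - t) = m * k := by
      field_simp at hk
      apply mul_right_cancel₀ hπ
      linear_combination (2 * (Real.pi:ℂ) * Complex.I) * hk
    exact_mod_cast h2
  · rintro ⟨k, hk⟩
    refine ⟨k, ?_⟩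
    have h2 : ((j:ℂ) - t) = m * k := by exact_mod_cast hk
    field_simp
    linear_combination h2

lemma dft_relation (r : ℝ) (hr0 : 0 < r) (m : ℕ) (hm : 0 < m)
    (ζ : Fin m → ℂ)
    (hζ : ∀ k, ζ k = (r : ℂ) * Complex.exp (2 * Real.pi * Complex.I * (k : ℕ) / m))
    (a : ℕ → ℂ) (hsum : Summable fun j => ‖a j‖ * r ^ j)
    (hev : ∀ k, ∑' j : ℕ, a j * ζ k ^ j = 0) (t : ℕ) (ht : t < m) :
    ∑' j : ℕ, (if j % m = t then a j * (r : ℂ) ^ j else 0) = 0 := by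
  have hm0 : (m:ℂ) ≠ 0 := Nat.cast_ne_zero.2 hm.ne'
  set ω : ℂ := Complex.exp (2 * Real.pi * Complex.I / m) with hω
  have hωm : ω ^ m = 1 := omega_pow_m' hm
  have hζω : ∀ k : Fin m, ζ k = (r:ℂ) * ω ^ (k:ℕ) := by
    intro k
    rw [hζ k, hω, ← Complex.exp_nat_mul]
    congr 1
    ring
  have hωabs : ∀ s : ℕ, ‖ω ^ s‖ = 1 := by
    intro s
    rw [norm_pow, hω, Complex.norm_exp]
    norm_num [Complex.div_re, Complex.mul_re, Complex.mul_im]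
  have hωinvabs : ∀ s : ℕ, ‖(ω⁻¹) ^ s‖ = 1 := by
    intro s
    have h1 : ‖ω‖ = 1 := by simpa using hωabs 1
    rw [norm_pow, norm_inv, h1]
    norm_num
  -- F k j
  set F : Fin m → ℕ → ℂ := fun k j => (ω⁻¹) ^ (t * (k:ℕ)) * (a j * ζ k ^ j) with hF
  have hFs : ∀ k : Fin m, Summable (F k) := by
    intro k
    apply Summable.of_norm
    have : ∀ j, ‖F k j‖ = ‖a j‖ * r ^ j := by
      intro j
      rw [hF]
      simp only
      rw [norm_mul, hωinvabs, one_mul, norm_mul, norm_pow, hζω k, norm_mul,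
        Complex.norm_real, Real.norm_eq_abs, abs_of_pos hr0, hωabs, mul_one]
    rw [funext this]
    exact hsum
  have key : ∑' j : ℕ, ∑ k : Fin m, F k j = 0 := by
    rw [Summable.tsum_finsetSum (fun k _ => hFs k)]
    have : ∀ k : Fin m, ∑' j, F k j = 0 := by
      intro k
      rw [hF]
      simp only
      rw [tsum_mul_left, hev k, mul_zero]
    simp [this]
  have inner : ∀ j : ℕ, ∑ k : Fin m, F k j =
      if j % m = t then (m:ℂ) * (a j * (r:ℂ) ^ j) else 0 := by
    intro j
    have hu : (ω ^ j * (ω⁻¹) ^ t) ^ m = 1 := by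
      rw [mul_pow, ← pow_mul, ← pow_mul, mul_comm j m, mul_comm t m, pow_mul, pow_mul, hωm,
        one_pow, inv_pow, hωm]
      norm_num
    have step : ∀ k : Fin m, F k j = (a j * (r:ℂ) ^ j) * (ω ^ j * (ω⁻¹) ^ t) ^ (k:ℕ) := by
      intro k
      rw [hF]
      simp only
      rw [hζω k, mul_pow, ← pow_mul, mul_pow, ← pow_mul, ← pow_mul]
      ring
    rw [Finset.sum_congr rfl (fun k _ => step k), ← Finset.mul_sum,
      Fin.sum_univ_eq_sum_range (fun k => (ω ^ j * (ω⁻¹) ^ t) ^ k) m,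
      geom_root_sum hu]
    by_cases h : j % m = t
    · rw [if_pos ((omega_eq_one_iff' hm j t).2 ((mod_char ht).2 h)), if_pos h]
      ring
    · rw [if_neg (fun h1 => h ((mod_char ht).1 ((omega_eq_one_iff' hm j t).1 h1))), if_neg h]
      ring
  rw [funext inner] at key
  have : ∑' j : ℕ, (if j % m = t then (m:ℂ) * (a j * (r:ℂ) ^ j) else 0)
      = (m:ℂ) * ∑' j : ℕ, (if j % m = t then a j * (r:ℂ) ^ j else 0) := by
    rw [← tsum_mul_left]
    congr 1
    funext j
    split_ifs <;> simp
  rw [this] at key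
  exact (mul_eq_zero.1 key).resolve_left hm0


open Finset in
lemma tsum_cs {x y : ℕ → ℝ} (hx : ∀ j, 0 ≤ x j) (hy : ∀ j, 0 ≤ y j)
    (hx2 : Summable fun j => x j ^ 2) (hy2 : Summable fun j => y j ^ 2) :
    (∑' j, x j * y j) ^ 2 ≤ (∑' j, x j ^ 2) * (∑' j, y j ^ 2) := by
  have hxy : Summable fun j => x j * y j := by
    refine Summable.of_nonneg_of_le (fun j => mul_nonneg (hx j) (hy j))
      (fun j => ?_) ((hx2.add hy2).div_const 2)
    nlinarith [sq_nonneg (x j - y j)]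
  set X := ∑' j, x j ^ 2 with hX
  set Y := ∑' j, y j ^ 2 with hY
  have hX0 : 0 ≤ X := tsum_nonneg fun j => sq_nonneg _
  have hY0 : 0 ≤ Y := tsum_nonneg fun j => sq_nonneg _
  have hle : (∑' j, x j * y j) ≤ Real.sqrt X * Real.sqrt Y := by
    refine hxy.tsum_le_of_sum_le fun s => ?_
    have h1 : (∑ i ∈ s, x i * y i) ^ 2 ≤ (∑ i ∈ s, x i ^ 2) * (∑ i ∈ s, y i ^ 2) :=
      Finset.sum_mul_sq_le_sq_mul_sq s x y
    have h2 : (∑ i ∈ s, x i ^ 2) ≤ X := hx2.sum_le_tsum s (fun i _ => sq_nonneg _)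
    have h3 : (∑ i ∈ s, y i ^ 2) ≤ Y := hy2.sum_le_tsum s (fun i _ => sq_nonneg _)
    have h4 : (∑ i ∈ s, x i * y i) ^ 2 ≤ X * Y :=
      h1.trans (mul_le_mul h2 h3 (Finset.sum_nonneg fun i _ => sq_nonneg _) hX0)
    rw [← Real.sqrt_mul hX0,
      Real.le_sqrt (Finset.sum_nonneg fun i _ => mul_nonneg (hx i) (hy i)) (mul_nonneg hX0 hY0)]
    exact h4
  have h0 : 0 ≤ ∑' j, x j * y j := tsum_nonneg fun j => mul_nonneg (hx j) (hy j)
  calc (∑' j, x j * y j) ^ 2 ≤ (Real.sqrt X * Real.sqrt Y) ^ 2 := pow_le_pow_left₀ h0 hle 2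
    _ = X * Y := by rw [mul_pow, Real.sq_sqrt hX0, Real.sq_sqrt hY0]

lemma head_bound (r : ℝ) (hr0 : 0 < r) (hr1 : r < 1) (m n : ℕ) (hn : 1 ≤ n) (hnm : n ≤ m)
    (a : ℕ → ℂ) (ha : Summable fun j : ℕ => ‖a j‖ ^ 2)
    (hT : ∀ t, t < m → ∑' j : ℕ, (if j % m = t then a j * (r:ℂ) ^ j else 0) = 0) :
    ∑' j : ℕ, ‖a j‖ ^ 2 ≤ (1 / (1 - r ^ (2*m))) * ∑' j : ℕ, ‖a (j + n)‖ ^ 2 := by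
  have hm : 0 < m := lt_of_lt_of_le hn hnm
  set q : ℝ := r ^ (2*m) with hqdef
  have hq0 : 0 < q := pow_pos hr0 _
  have hq1 : q < 1 := pow_lt_one₀ hr0.le hr1 (by omega)
  have h1q : 0 < 1 - q := by linarith
  -- summable ‖a j‖ * r^j
  have hr2 : Summable fun j : ℕ => (r^2) ^ j :=
    summable_geometric_of_lt_one (by positivity) (by nlinarith)
  have hsar : Summable fun j : ℕ => ‖a j‖ * r ^ j := by
    refine Summable.of_nonneg_of_le (fun j => by positivity) (fun j => ?_)
      ((ha.add hr2).div_const 2)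
    have : (r^2)^j = (r^j)^2 := by ring
    nlinarith [sq_nonneg (‖a j‖ - r ^ j), pow_nonneg hr0.le j]
  -- per t bound
  have key : ∀ t, t < n → ‖a t‖ ^ 2 ≤ (q / (1 - q)) *
      ∑' j : ℕ, (if j % m = t ∧ j ≠ t then ‖a j‖ else 0) ^ 2 := by
    intro t htn
    have htm : t < m := lt_of_lt_of_le htn hnm
    set x : ℕ → ℝ := fun j => if j % m = t ∧ j ≠ t then r ^ j else 0 with hxdef
    set y : ℕ → ℝ := fun j => if j % m = t ∧ j ≠ t then ‖a j‖ else 0 with hydef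
    have hx0 : ∀ j, 0 ≤ x j := fun j => by
      rw [hxdef]; dsimp only; split_ifs
      · positivity
      · exact le_rfl
    have hy0 : ∀ j, 0 ≤ y j := fun j => by
      rw [hydef]; dsimp only; split_ifs
      · exact norm_nonneg _
      · exact le_rfl
    have hx2 : Summable fun j => x j ^ 2 := by
      refine Summable.of_nonneg_of_le (fun j => sq_nonneg _) (fun j => ?_) hr2
      rw [hxdef]; dsimp only; split_ifs
      · rw [← pow_mul, ← pow_mul]; apply le_of_eq; congr 1; ring
      · simpa using pow_nonneg (sq_nonneg r) j
    have hy2 : Summable fun j => y j ^ 2 := by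
      refine Summable.of_nonneg_of_le (fun j => sq_nonneg _) (fun j => ?_) ha
      rw [hydef]; dsimp only; split_ifs
      · exact le_rfl
      · simpa using sq_nonneg ‖a j‖
    -- the constraint
    set g : ℕ → ℂ := fun j => if j % m = t then a j * (r:ℂ) ^ j else 0 with hgdef
    have hgnorm : ∀ j, ‖g j‖ ≤ ‖a j‖ * r ^ j := by
      intro j
      rw [hgdef]; dsimp only; split_ifs
      · rw [norm_mul, norm_pow, Complex.norm_real, Real.norm_eq_abs, abs_of_pos hr0]
      · simp; positivity
    have hsg : Summable g := Summable.of_norm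
      (Summable.of_nonneg_of_le (fun j => norm_nonneg _) hgnorm hsar)
    have hrel : a t * (r:ℂ) ^ t = -∑' j : ℕ, (if j = t then 0 else g j) := by
      have h0 := hT t htm
      rw [show (∑' j : ℕ, (if j % m = t then a j * (r:ℂ) ^ j else 0)) = ∑' j, g j by rfl] at h0
      rw [hsg.tsum_eq_add_tsum_ite t] at h0
      have hgt : g t = a t * (r:ℂ) ^ t := by
        rw [hgdef]; dsimp only; rw [if_pos (Nat.mod_eq_of_lt htm)]
      linear_combination h0 - hgt
    have hite_norm : ∀ j, ‖(if j = t then (0:ℂ) else g j)‖ = x j * y j := by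
      intro j
      by_cases hj : j = t
      · rw [if_pos hj, hxdef, hydef]; dsimp only
        rw [if_neg (fun h => h.2 hj), norm_zero, zero_mul]
      · rw [if_neg hj, hgdef, hxdef, hydef]; dsimp only
        by_cases hjm : j % m = t
        · rw [if_pos hjm, if_pos ⟨hjm, hj⟩, if_pos ⟨hjm, hj⟩, norm_mul, norm_pow,
            Complex.norm_real, Real.norm_eq_abs, abs_of_pos hr0]
          ring
        · rw [if_neg hjm, if_neg (fun h => hjm h.1), if_neg (fun h => hjm h.1)]
          simp
    have hsite : Summable fun j => ‖(if j = t then (0:ℂ) else g j)‖ := by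
      refine Summable.of_nonneg_of_le (fun j => norm_nonneg _) (fun j => ?_)
        (Summable.of_nonneg_of_le (fun j => norm_nonneg _) hgnorm hsar)
      split_ifs with h
      · simp only [norm_zero]; positivity
      · exact le_rfl
    have hstep : ‖a t‖ * r ^ t ≤ ∑' j, x j * y j := by
      have h1 : ‖a t * (r:ℂ) ^ t‖ = ‖a t‖ * r ^ t := by
        rw [norm_mul, norm_pow, Complex.norm_real, Real.norm_eq_abs, abs_of_pos hr0]
      calc ‖a t‖ * r ^ t = ‖a t * (r:ℂ) ^ t‖ := h1.symm
        _ = ‖∑' j : ℕ, (if j = t then (0:ℂ) else g j)‖ := by rw [hrel, norm_neg]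
        _ ≤ ∑' j, ‖(if j = t then (0:ℂ) else g j)‖ := norm_tsum_le_tsum_norm hsite
        _ = ∑' j, x j * y j := by exact tsum_congr hite_norm
    -- value of X
    have hX : (∑' j, x j ^ 2) = r ^ (2*t) * q * (1 - q)⁻¹ := by
      have e : ℕ → ℕ := fun l => t + (l+1)*m
      have hinj : Function.Injective (fun l : ℕ => t + (l+1)*m) := by
        intro l1 l2 h
        simp only [add_right_inj] at h
        have := Nat.eq_of_mul_eq_mul_right hm h
        omega
      have hsupp : Function.support (fun j => x j ^ 2) ⊆ Set.range (fun l : ℕ => t + (l+1)*m) := by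
        intro j hj
        rw [Function.mem_support] at hj
        have hcond : j % m = t ∧ j ≠ t := by
          by_contra h
          rw [hxdef] at hj; dsimp only at hj; rw [if_neg h] at hj; simp at hj
        have hdiv : 1 ≤ j / m := by
          by_contra h
          push_neg at h
          interval_cases h' : j / m
          · have := Nat.div_add_mod j m
            rw [h'] at this
            simp at this
            exact hcond.2 (by rw [← this, hcond.1])
        refine ⟨j / m - 1, ?_⟩
        have hdm := Nat.div_add_mod j m
        simp only
        rw [Nat.sub_add_cancel hdiv, ← hcond.1]
        exact Nat.mod_add_div' j m
      rw [← Function.Injective.tsum_eq hinj hsupp]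
      have hxval : ∀ l : ℕ, x (t + (l+1)*m) ^ 2 = r ^ (2*t) * q * q ^ l := by
        intro l
        have h1 : (t + (l+1)*m) % m = t := by
          rw [Nat.add_mul_mod_self_right, Nat.mod_eq_of_lt htm]
        have h2 : t + (l+1)*m ≠ t := by
          have : 0 < (l+1)*m := Nat.mul_pos (Nat.succ_pos l) hm
          omega
        rw [hxdef]; dsimp only
        rw [if_pos ⟨h1, h2⟩, hqdef]
        ring
      calc (∑' l : ℕ, x (t + (l+1)*m) ^ 2) = ∑' l : ℕ, r ^ (2*t) * q * q ^ l :=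
            tsum_congr hxval
        _ = r ^ (2*t) * q * (1 - q)⁻¹ := by
            rw [tsum_mul_left, tsum_geometric_of_lt_one hq0.le hq1]
    -- combine via Cauchy-Schwarz
    have hcs := tsum_cs hx0 hy0 hx2 hy2
    rw [hX] at hcs
    have hsq : (‖a t‖ * r ^ t) ^ 2 ≤ (∑' j, x j * y j) ^ 2 :=
      pow_le_pow_left₀ (by positivity) hstep 2
    have hY0 : 0 ≤ ∑' j, y j ^ 2 := tsum_nonneg fun j => sq_nonneg _
    have hfin : ‖a t‖ ^ 2 * r ^ (2*t) ≤ r ^ (2*t) * ((q / (1-q)) * ∑' j, y j ^ 2) := by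
      have h1 : (‖a t‖ * r ^ t) ^ 2 = ‖a t‖ ^ 2 * r ^ (2*t) := by
        ring
      rw [← h1]
      refine hsq.trans (hcs.trans (le_of_eq ?_))
      field_simp
    have hrt : (0:ℝ) < r ^ (2*t) := pow_pos hr0 _
    have hfin' : ‖a t‖ ^ 2 * r ^ (2*t) ≤ ((q / (1-q)) * ∑' j, y j ^ 2) * r ^ (2*t) := by
      calc ‖a t‖ ^ 2 * r ^ (2*t) ≤ r ^ (2*t) * ((q / (1-q)) * ∑' j, y j ^ 2) := hfin
        _ = ((q / (1-q)) * ∑' j, y j ^ 2) * r ^ (2*t) := by ring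
    exact le_of_mul_le_mul_right hfin' hrt
  -- sum over t < n
  have hy2s : ∀ t : ℕ, Summable fun j => (if j % m = t ∧ j ≠ t then ‖a j‖ else 0) ^ 2 := by
    intro t
    refine Summable.of_nonneg_of_le (fun j => sq_nonneg _) (fun j => ?_) ha
    split_ifs
    · exact le_rfl
    · simpa using sq_nonneg ‖a j‖
  set Z : ℕ → ℝ := fun j => if n ≤ j then ‖a j‖ ^ 2 else 0 with hZdef
  have hZs : Summable Z := by
    refine Summable.of_nonneg_of_le (fun j => ?_) (fun j => ?_) ha
    · rw [hZdef]; dsimp only; split_ifs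
      · positivity
      · exact le_rfl
    · rw [hZdef]; dsimp only; split_ifs
      · exact le_rfl
      · positivity
  have hpt : ∀ j, ∑ t ∈ Finset.range n, (if j % m = t ∧ j ≠ t then ‖a j‖ else 0) ^ 2 ≤ Z j := by
    intro j
    by_cases hc : j % m < n ∧ j ≠ j % m
    · have hnj : n ≤ j := by
        by_contra h
        push_neg at h
        exact hc.2 (Nat.mod_eq_of_lt (lt_of_lt_of_le h hnm)).symm
      have hsum : ∑ t ∈ Finset.range n, (if j % m = t ∧ j ≠ t then ‖a j‖ else 0) ^ 2
          = ‖a j‖ ^ 2 := by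
        rw [Finset.sum_eq_single_of_mem (j % m) (Finset.mem_range.2 hc.1)]
        · rw [if_pos ⟨rfl, fun h => hc.2 h⟩]
        · intro t _ htne
          rw [if_neg (fun hcon => htne hcon.1.symm)]
          norm_num
      rw [hsum, hZdef]; dsimp only; rw [if_pos hnj]
    · have hz : ∀ t ∈ Finset.range n, (if j % m = t ∧ j ≠ t then ‖a j‖ else 0) ^ 2 = 0 := by
        intro t htr
        rw [if_neg]
        · norm_num
        · rintro ⟨h1, h2⟩
          exact hc ⟨h1 ▸ Finset.mem_range.1 htr, fun hcon => h2 (h1 ▸ hcon)⟩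
      rw [Finset.sum_congr rfl hz, Finset.sum_const_zero]
      rw [hZdef]; dsimp only; split_ifs
      · positivity
      · exact le_rfl
  have hZt : ∑' j, Z j = ∑' j : ℕ, ‖a (j + n)‖ ^ 2 := by
    have hinj : Function.Injective (fun j : ℕ => j + n) := fun j1 j2 h => by
      dsimp only at h; omega
    have hsupp : Function.support Z ⊆ Set.range (fun j : ℕ => j + n) := by
      intro j hj
      rw [Function.mem_support] at hj
      have : n ≤ j := by
        by_contra h
        rw [hZdef] at hj; dsimp only at hj; rw [if_neg h] at hj; exact hj rfl
      exact ⟨j - n, by dsimp only; omega⟩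
    rw [← Function.Injective.tsum_eq hinj hsupp]
    refine tsum_congr fun j => ?_
    rw [hZdef]; dsimp only; rw [if_pos (Nat.le_add_left n j)]
  have hYZ : ∑ t ∈ Finset.range n,
      (∑' j : ℕ, (if j % m = t ∧ j ≠ t then ‖a j‖ else 0) ^ 2) ≤ ∑' j : ℕ, ‖a (j + n)‖ ^ 2 := by
    rw [← hZt, ← Summable.tsum_finsetSum (fun t _ => hy2s t)]
    exact Summable.tsum_le_tsum hpt (summable_sum fun t _ => hy2s t) hZs
  have hhead : ∑ t ∈ Finset.range n, ‖a t‖ ^ 2 ≤ (q/(1-q)) * ∑' j : ℕ, ‖a (j + n)‖ ^ 2 := by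
    calc ∑ t ∈ Finset.range n, ‖a t‖ ^ 2
        ≤ ∑ t ∈ Finset.range n, (q/(1-q)) *
            (∑' j : ℕ, (if j % m = t ∧ j ≠ t then ‖a j‖ else 0) ^ 2) :=
          Finset.sum_le_sum fun t ht => key t (Finset.mem_range.1 ht)
      _ = (q/(1-q)) * ∑ t ∈ Finset.range n,
            (∑' j : ℕ, (if j % m = t ∧ j ≠ t then ‖a j‖ else 0) ^ 2) := by
          rw [Finset.mul_sum]
      _ ≤ (q/(1-q)) * ∑' j : ℕ, ‖a (j + n)‖ ^ 2 :=
          mul_le_mul_of_nonneg_left hYZ (div_nonneg hq0.le h1q.le)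
  have htot := ha.sum_add_tsum_nat_add n
  have htail0 : (0:ℝ) ≤ ∑' j : ℕ, ‖a (j + n)‖ ^ 2 := tsum_nonneg fun j => sq_nonneg _
  have hcomb : (q/(1-q)) * (∑' j : ℕ, ‖a (j + n)‖ ^ 2) + (∑' j : ℕ, ‖a (j + n)‖ ^ 2)
      = (1/(1-q)) * ∑' j : ℕ, ‖a (j + n)‖ ^ 2 := by
    have h1q' : (1:ℝ) - q ≠ 0 := ne_of_gt h1q
    field_simp
    ring
  linarith [htot, hhead]


set_option maxHeartbeats 1000000 in
lemma witness_mem (r : ℝ) (hr0 : 0 < r) (hr1 : r < 1) (m n : ℕ) (hn : 1 ≤ n) (hnm : n ≤ m)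
    (ζ : Fin m → ℂ)
    (hζ : ∀ k, ζ k = (r : ℂ) * Complex.exp (2 * Real.pi * Complex.I * (k : ℕ) / m))
    (L : ℕ) (hL : 1 ≤ L) :
    (1 + ∑ l ∈ Finset.range L, (r ^ (2*m)) ^ (l+1)) ∈
      {x : ℝ | ∃ a : ℕ → ℂ, Summable (fun j : ℕ => ‖a j‖ ^ 2) ∧
        (∀ k, ∑' j : ℕ, a j * ζ k ^ j = 0) ∧
        0 < ∑' j : ℕ, ‖a (j + n)‖ ^ 2 ∧
        x = (∑' j : ℕ, ‖a j‖ ^ 2) / ∑' j : ℕ, ‖a (j + n)‖ ^ 2} := by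
  have hm : 0 < m := lt_of_lt_of_le hn hnm
  set q : ℝ := r ^ (2*m) with hqdef
  have hq0 : 0 < q := pow_pos hr0 _
  set S : ℝ := ∑ l ∈ Finset.range L, q ^ (l+1) with hSdef
  have hS0 : 0 < S := by
    refine Finset.sum_pos (fun l _ => pow_pos hq0 _) ⟨0, Finset.mem_range.2 (by omega)⟩
  set bb : ℕ → ℂ := fun l => if l = 0 then -((S:ℝ):ℂ) else ((r:ℂ)) ^ (l*m) with hbdef
  set a : ℕ → ℂ := fun j => if m ∣ j ∧ j ≤ L*m then bb (j/m) else 0 with hadef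
  have haval : ∀ l : ℕ, a (l*m) = if l ≤ L then bb l else 0 := by
    intro l
    rw [hadef]; dsimp only
    by_cases hl : l ≤ L
    · rw [if_pos ⟨Dvd.intro_left l rfl, Nat.mul_le_mul_right m hl⟩, Nat.mul_div_cancel l hm, if_pos hl]
    · rw [if_neg, if_neg hl]
      rintro ⟨-, hle⟩
      exact hl (Nat.le_of_mul_le_mul_right hle hm)
  have hanm : ∀ j : ℕ, ¬ m ∣ j → a j = 0 := by
    intro j hj
    rw [hadef]; dsimp only; rw [if_neg (fun h => hj h.1)]
  have hinj : Function.Injective (fun l : ℕ => l * m) := fun l1 l2 h => by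
    dsimp only at h
    exact Nat.eq_of_mul_eq_mul_right hm h
  -- generic reindexing
  have reindex : ∀ (f : ℕ → ℂ), (∀ j, a j = 0 → f j = 0) →
      ∑' j, f j = ∑ l ∈ Finset.range (L+1), f (l*m) := by
    intro f hf
    have hsupp : Function.support f ⊆ Set.range (fun l : ℕ => l * m) := by
      intro j hj
      rw [Function.mem_support] at hj
      by_contra hnr
      refine hj (hf j (hanm j fun hdvd => hnr ?_))
      exact ⟨j / m, (Nat.div_mul_cancel hdvd)⟩
    rw [← Function.Injective.tsum_eq hinj hsupp]
    refine tsum_eq_sum fun l hl => ?_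
    have : a (l*m) = 0 := by
      rw [haval l, if_neg (fun h => hl (Finset.mem_range.2 (by omega)))]
    exact hf _ this
  have reindexR : ∀ (f : ℕ → ℝ), (∀ j, a j = 0 → f j = 0) →
      ∑' j, f j = ∑ l ∈ Finset.range (L+1), f (l*m) := by
    intro f hf
    have hsupp : Function.support f ⊆ Set.range (fun l : ℕ => l * m) := by
      intro j hj
      rw [Function.mem_support] at hj
      by_contra hnr
      refine hj (hf j (hanm j fun hdvd => hnr ?_))
      exact ⟨j / m, (Nat.div_mul_cancel hdvd)⟩
    rw [← Function.Injective.tsum_eq hinj hsupp]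
    refine tsum_eq_sum fun l hl => ?_
    have : a (l*m) = 0 := by
      rw [haval l, if_neg (fun h => hl (Finset.mem_range.2 (by omega)))]
    exact hf _ this
  -- summability
  have ha : Summable (fun j : ℕ => ‖a j‖ ^ 2) := by
    apply summable_of_ne_finset_zero (s := Finset.range (L*m+1))
    intro j hj
    have hjL : ¬ j ≤ L * m := fun h => hj (Finset.mem_range.2 (by omega))
    have : a j = 0 := by rw [hadef]; dsimp only; rw [if_neg (fun h => hjL h.2)]
    rw [this]; simp
  -- total
  have hb0 : a 0 = -((S:ℝ):ℂ) := by
    have h := haval 0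
    simp only [Nat.zero_mul] at h
    rw [h, if_pos (Nat.zero_le L), hbdef]
    simp
  have hbsucc : ∀ i : ℕ, i < L → a ((i+1)*m) = ((r:ℂ)) ^ ((i+1)*m) := by
    intro i hi
    rw [haval (i+1), if_pos (by omega), hbdef]
    simp
  have hnormr : ∀ s : ℕ, ‖((r:ℂ)) ^ s‖ = r ^ s := by
    intro s
    rw [norm_pow, Complex.norm_real, Real.norm_eq_abs, abs_of_pos hr0]
  have htotal : ∑' j : ℕ, ‖a j‖ ^ 2 = S^2 + S := by
    rw [reindexR _ (fun j hj => by rw [hj]; simp)]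
    rw [Finset.sum_range_succ' (fun l => ‖a (l*m)‖^2) L]
    have h0 : ‖a (0*m)‖^2 = S^2 := by
      rw [show (0*m) = 0 by omega, hb0, norm_neg, Complex.norm_real, Real.norm_eq_abs,
        abs_of_pos hS0]
    have hsucc : ∀ i ∈ Finset.range L, ‖a ((i+1)*m)‖^2 = q^(i+1) := by
      intro i hi
      rw [hbsucc i (Finset.mem_range.1 hi), hnormr, hqdef]
      ring
    rw [h0, Finset.sum_congr rfl hsucc, ← hSdef]
    ring
  -- evaluation constraints
  have heval : ∀ k : Fin m, ∑' j : ℕ, a j * ζ k ^ j = 0 := by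
    intro k
    have hζpow : ∀ l : ℕ, ζ k ^ (l*m) = ((r:ℂ)) ^ (l*m) := by
      intro l
      have hω : Complex.exp (2 * Real.pi * Complex.I * (k:ℕ) / m)
          = (Complex.exp (2 * Real.pi * Complex.I / m)) ^ (k:ℕ) := by
        rw [← Complex.exp_nat_mul]
        congr 1
        ring
      rw [hζ k, mul_pow, hω, ← pow_mul,
        show (k:ℕ) * (l*m) = m * ((k:ℕ) * l) by ring,
        pow_mul (Complex.exp (2 * Real.pi * Complex.I / m)) m ((k:ℕ) * l),
        omega_pow_m' hm, one_pow, mul_one]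
    rw [reindex _ (fun j hj => by rw [hj]; simp)]
    rw [Finset.sum_range_succ' (fun l => a (l*m) * ζ k ^ (l*m)) L]
    have h0 : a (0*m) * ζ k ^ (0*m) = -((S:ℝ):ℂ) := by
      rw [show (0*m) = 0 by omega, hb0, pow_zero, mul_one]
    have hsucc : ∀ i ∈ Finset.range L, a ((i+1)*m) * ζ k ^ ((i+1)*m)
        = ((r:ℂ)^(2*m))^(i+1) := by
      intro i hi
      rw [hbsucc i (Finset.mem_range.1 hi), hζpow]
      ring
    have hScast : ((S:ℝ):ℂ) = ∑ i ∈ Finset.range L, ((r:ℂ)^(2*m))^(i+1) := by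
      rw [hSdef, hqdef]
      push_cast
      rfl
    rw [h0, Finset.sum_congr rfl hsucc, ← hScast]
    ring
  -- head and tail
  have hheadsum : ∑ j ∈ Finset.range n, ‖a j‖ ^ 2 = S^2 := by
    rw [Finset.sum_eq_single_of_mem 0 (Finset.mem_range.2 (by omega))]
    · rw [hb0, norm_neg, Complex.norm_real, Real.norm_eq_abs, abs_of_pos hS0]
    · intro j hjr hj0
      have hjm : j < m := lt_of_lt_of_le (Finset.mem_range.1 hjr) hnm
      have : ¬ m ∣ j := fun hdvd => hj0 (Nat.eq_zero_of_dvd_of_lt hdvd hjm)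
      rw [hanm j this]
      simp
  have htail : ∑' j : ℕ, ‖a (j + n)‖ ^ 2 = S := by
    have h := ha.sum_add_tsum_nat_add n
    rw [hheadsum, htotal] at h
    linarith
  refine ⟨a, ha, heval, by rw [htail]; exact hS0, ?_⟩
  rw [htotal, htail]
  field_simp
  ring


/-- The squared compatibility indicator `μ_{H²}(ker(L_ζ), 𝒫_n)²` for evaluations at the
`m` equispaced points `ζ_k = r e^{2πi(k-1)/m}` equals `1/(1 - r^{2m})`, identifying `H²`
with `ℓ²(ℕ, ℂ)` via Taylor coefficients. -/
theorem stmt11 (r : ℝ) (hr0 : 0 < r) (hr1 : r < 1) (m n : ℕ) (hn : 1 ≤ n) (hnm : n ≤ m)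
    (ζ : Fin m → ℂ)
    (hζ : ∀ k, ζ k = (r : ℂ) * Complex.exp (2 * Real.pi * Complex.I * (k : ℕ) / m)) :
    sSup {x : ℝ | ∃ a : ℕ → ℂ, Summable (fun j : ℕ => ‖a j‖ ^ 2) ∧
        (∀ k, ∑' j : ℕ, a j * ζ k ^ j = 0) ∧
        0 < ∑' j : ℕ, ‖a (j + n)‖ ^ 2 ∧
        x = (∑' j : ℕ, ‖a j‖ ^ 2) / ∑' j : ℕ, ‖a (j + n)‖ ^ 2}
      = 1 / (1 - r ^ (2 * m)) := by
  have hm : 0 < m := lt_of_lt_of_le hn hnm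
  set q : ℝ := r ^ (2*m) with hqdef
  have hq0 : 0 < q := pow_pos hr0 _
  have hq1 : q < 1 := pow_lt_one₀ hr0.le hr1 (by omega)
  have h1q : 0 < 1 - q := by linarith
  have hub : ∀ x ∈ {x : ℝ | ∃ a : ℕ → ℂ, Summable (fun j : ℕ => ‖a j‖ ^ 2) ∧
        (∀ k, ∑' j : ℕ, a j * ζ k ^ j = 0) ∧
        0 < ∑' j : ℕ, ‖a (j + n)‖ ^ 2 ∧
        x = (∑' j : ℕ, ‖a j‖ ^ 2) / ∑' j : ℕ, ‖a (j + n)‖ ^ 2}, x ≤ 1/(1-q) := by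
    rintro x ⟨a, ha, hev, htail, hx⟩
    have hr2 : Summable fun j : ℕ => (r^2) ^ j :=
      summable_geometric_of_lt_one (by positivity) (by nlinarith)
    have hsar : Summable fun j : ℕ => ‖a j‖ * r ^ j := by
      refine Summable.of_nonneg_of_le (fun j => by positivity) (fun j => ?_)
        ((ha.add hr2).div_const 2)
      have h2 : (r^2)^j = (r^j)^2 := by ring
      nlinarith [sq_nonneg (‖a j‖ - r ^ j), pow_nonneg hr0.le j]
    have hT : ∀ t, t < m → ∑' j : ℕ, (if j % m = t then a j * (r:ℂ) ^ j else 0) = 0 :=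
      fun t ht => dft_relation r hr0 m hm ζ hζ a hsar hev t ht
    have hb := head_bound r hr0 hr1 m n hn hnm a ha hT
    rw [hx]
    exact (div_le_iff₀ htail).2 hb
  have hB0 : (0:ℝ) ≤ 1/(1-q) := by positivity
  refine le_antisymm (Real.sSup_le hub hB0) ?_
  have hbdd : BddAbove {x : ℝ | ∃ a : ℕ → ℂ, Summable (fun j : ℕ => ‖a j‖ ^ 2) ∧
        (∀ k, ∑' j : ℕ, a j * ζ k ^ j = 0) ∧
        0 < ∑' j : ℕ, ‖a (j + n)‖ ^ 2 ∧
        x = (∑' j : ℕ, ‖a j‖ ^ 2) / ∑' j : ℕ, ‖a (j + n)‖ ^ 2} := ⟨1/(1-q), hub⟩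
  have hmem : ∀ L : ℕ, (1 + ∑ l ∈ Finset.range (L+1), q ^ (l+1)) ≤
      sSup {x : ℝ | ∃ a : ℕ → ℂ, Summable (fun j : ℕ => ‖a j‖ ^ 2) ∧
        (∀ k, ∑' j : ℕ, a j * ζ k ^ j = 0) ∧
        0 < ∑' j : ℕ, ‖a (j + n)‖ ^ 2 ∧
        x = (∑' j : ℕ, ‖a j‖ ^ 2) / ∑' j : ℕ, ‖a (j + n)‖ ^ 2} := fun L =>
    le_csSup hbdd (witness_mem r hr0 hr1 m n hn hnm ζ hζ (L+1) (by omega))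
  have hgeo : HasSum (fun l : ℕ => q ^ (l+1)) (q * (1-q)⁻¹) := by
    have h := (hasSum_geometric_of_lt_one hq0.le hq1).mul_left q
    refine h.congr_fun fun l => ?_
    rw [pow_succ]
    ring
  have htend : Filter.Tendsto (fun L : ℕ => 1 + ∑ l ∈ Finset.range (L+1), q ^ (l+1))
      Filter.atTop (nhds (1/(1-q))) := by
    have h1 : Filter.Tendsto (fun L : ℕ => ∑ l ∈ Finset.range L, q ^ (l+1))
        Filter.atTop (nhds (q * (1-q)⁻¹)) := hgeo.tendsto_sum_nat
    have h2 : Filter.Tendsto (fun L : ℕ => ∑ l ∈ Finset.range (L+1), q ^ (l+1))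
        Filter.atTop (nhds (q * (1-q)⁻¹)) := h1.comp (Filter.tendsto_add_atTop_nat 1)
    have h3 := Filter.Tendsto.const_add (1:ℝ) h2
    have h4 : 1 + q * (1-q)⁻¹ = 1/(1-q) := by
      field_simp
      ring
    rwa [h4] at h3
  exact le_of_tendsto htend (Filter.Eventually.of_forall hmem)
end

section
/- Fix 0 < r < 1 and a positive integer m, and set ζ_k = r·exp(2πi(k−1)/m) for k = 1,…,m. Let g = (g_j)_{j≥0} ∈ ℓ²(ℕ, ℂ) and define h_ℓ = Σ_{t≥0} g_{ℓ+tm} r^{tm} for ℓ = 0,…,m−1. Then: (i) the polynomial P(z) = Σ_{ℓ=0}^{m−1} h_ℓ z^ℓ interpolates, i.e. P(ζ_k) = Σ_{j≥0} g_j ζ_k^j for every k = 1,…,m; and (ii) Σ_{ℓ=0}^{m−1} |h_ℓ|² ≤ (1/(1 − r^{2m})) · Σ_{j≥0} |g_j|². -/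
section aux
variable {E : Type*} [AddCommGroup E] [UniformSpace E] [IsUniformAddGroup E] [T2Space E]
  [CompleteSpace E]

lemma reindex_tsum {m : ℕ} (hm : 0 < m) (f : ℕ → E) (hf : Summable f) :
    ∑' j : ℕ, f j = ∑ l ∈ Finset.range m, ∑' t : ℕ, f (l + t * m) := by
  haveI : NeZero m := ⟨hm.ne'⟩
  set e : Fin m × ℕ ≃ ℕ := (Equiv.prodComm (Fin m) ℕ).trans (Nat.divModEquiv m).symm with he
  have hsum : Summable (fun p : Fin m × ℕ => f (e p)) := (e.summable_iff).2 hf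
  rw [← e.tsum_eq f, Summable.tsum_prod' hsum hsum.prod_factor, tsum_fintype,
    ← Fin.sum_univ_eq_sum_range (fun l => ∑' t : ℕ, f (l + t * m)) m]
  refine Finset.sum_congr rfl fun l _ => tsum_congr fun t => ?_
  have : e (l, t) = (l : ℕ) + t * m := by
    simp [he, Nat.add_comm]
  rw [this]

end aux

/-- The polynomial interpolation operator at the `m` equispaced points
`ζ_k = r e^{2πi(k-1)/m}`: for `g ∈ ℓ²` the coefficients `h_ℓ = Σ_t g_{ℓ+tm} r^{tm}`
define a polynomial of degree `< m` interpolating `F_g(z) = Σ g_j z^j` at the `ζ_k`,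
with `Σ_{ℓ<m} |h_ℓ|² ≤ (1/(1-r^{2m})) Σ_j |g_j|²`. -/
theorem stmt12 (r : ℝ) (hr0 : 0 < r) (hr1 : r < 1) (m : ℕ) (hm : 0 < m)
    (ζ : Fin m → ℂ)
    (hζ : ∀ k, ζ k = (r : ℂ) * Complex.exp (2 * Real.pi * Complex.I * (k : ℕ) / m))
    (g : ℕ → ℂ) (hg : Summable (fun j : ℕ => ‖g j‖ ^ 2))
    (h : ℕ → ℂ) (hh : ∀ l : ℕ, h l = ∑' t : ℕ, g (l + t * m) * (r : ℂ) ^ (t * m)) :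
    (∀ k, ∑ l ∈ Finset.range m, h l * ζ k ^ l = ∑' j : ℕ, g j * ζ k ^ j) ∧
      ∑ l ∈ Finset.range m, ‖h l‖ ^ 2 ≤ (1 / (1 - r ^ (2 * m))) * ∑' j : ℕ, ‖g j‖ ^ 2 := by
  have hr2m : r ^ (2 * m) < 1 := pow_lt_one₀ hr0.le hr1 (by omega)
  have hr2m0 : (0:ℝ) ≤ r ^ (2 * m) := by positivity
  have hS : ∑' t : ℕ, (r ^ (2 * m)) ^ t = (1 - r ^ (2 * m))⁻¹ :=
    tsum_geometric_of_lt_one hr2m0 hr2m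
  have hSsum : Summable (fun t : ℕ => (r ^ (2 * m)) ^ t) := summable_geometric_of_lt_one hr2m0 hr2m
  -- majorant for ‖g j‖ * r ^ j type sums
  have hmaj : Summable (fun j : ℕ => (‖g j‖ ^ 2 + (r ^ 2) ^ j) / 2) :=
    (hg.add (summable_geometric_of_lt_one (by positivity) (by nlinarith))).div_const 2
  have hbound : ∀ j : ℕ, ‖g j‖ * r ^ j ≤ (‖g j‖ ^ 2 + (r ^ 2) ^ j) / 2 := by
    intro j
    have h2 : 2 * ‖g j‖ * r ^ j ≤ ‖g j‖ ^ 2 + (r ^ j) ^ 2 := two_mul_le_add_sq _ _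
    have : (r ^ j) ^ 2 = (r ^ 2) ^ j := by rw [← pow_mul, ← pow_mul, mul_comm]
    linarith [h2, this ▸ h2]
  have hgnorm : Summable (fun j : ℕ => ‖g j‖ * r ^ j) :=
    Summable.of_nonneg_of_le (fun j => by positivity) hbound hmaj
  -- norm of ζ k and ζ k ^ m
  have hζnorm : ∀ k, ‖ζ k‖ = r := by
    intro k
    rw [hζ k]
    rw [norm_mul, Complex.norm_real, Real.norm_eq_abs,
      Complex.norm_exp]
    have : (2 * ↑Real.pi * Complex.I * (↑(k:ℕ)) / ↑m).re = 0 := by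
      simp [Complex.div_re, Complex.mul_re, Complex.mul_im]
    rw [this, Real.exp_zero, mul_one, abs_of_pos hr0]
  have hζpow : ∀ k : Fin m, ζ k ^ m = (r : ℂ) ^ m := by
    intro k
    rw [hζ k, mul_pow, ← Complex.exp_nat_mul]
    have hm' : (m : ℂ) ≠ 0 := Nat.cast_ne_zero.2 hm.ne'
    have : (m : ℂ) * (2 * Real.pi * Complex.I * (k : ℕ) / m) =
        ((k : ℕ) : ℤ) * (2 * Real.pi * Complex.I) := by
      push_cast
      field_simp
    rw [this, Complex.exp_int_mul_two_pi_mul_I, mul_one]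
  constructor
  · -- interpolation
    intro k
    have hsummand : ∀ j : ℕ, ‖g j * ζ k ^ j‖ = ‖g j‖ * r ^ j := by
      intro j
      rw [norm_mul, norm_pow, hζnorm k]
    have hfs : Summable (fun j : ℕ => g j * ζ k ^ j) := by
      apply Summable.of_norm
      simpa only [hsummand] using hgnorm
    rw [reindex_tsum hm _ hfs]
    refine (Finset.sum_congr rfl fun l hl => ?_).symm
    have : ∀ t : ℕ, g (l + t * m) * ζ k ^ (l + t * m) =
        ζ k ^ l * (g (l + t * m) * (r : ℂ) ^ (t * m)) := by
      intro t
      rw [pow_add, mul_comm t m, pow_mul, hζpow k, ← pow_mul, mul_comm m t]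
      ring
    rw [tsum_congr this, tsum_mul_left, hh l]
    ring
  · -- norm bound
    set S : ℝ := (1 - r ^ (2 * m))⁻¹ with hSdef
    have hS0 : 0 ≤ S := by
      rw [hSdef]
      have : 0 < 1 - r ^ (2 * m) := by linarith
      positivity
    have hA : ∀ l : ℕ, Summable (fun t : ℕ => ‖g (l + t * m)‖ ^ 2) := by
      intro l
      apply hg.comp_injective
      intro a b hab
      simp only [add_right_cancel_iff] at hab
      exact Nat.eq_of_mul_eq_mul_right hm (by omega)
    set A : ℕ → ℝ := fun l => ∑' t : ℕ, ‖g (l + t * m)‖ ^ 2 with hAdef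
    have hA0 : ∀ l, 0 ≤ A l := fun l => tsum_nonneg fun t => by positivity
    have hrpow : ∀ t : ℕ, (r ^ (t * m)) ^ 2 = (r ^ (2 * m)) ^ t := by
      intro t
      rw [← pow_mul, ← pow_mul]
      ring_nf
    have key : ∀ l : ℕ, ‖h l‖ ^ 2 ≤ A l * S := by
      intro l
      have hTsum : Summable (fun t : ℕ => ‖g (l + t * m)‖ * r ^ (t * m)) := by
        refine Summable.of_nonneg_of_le (fun t => by positivity) (fun t => ?_)
          (((hA l).add hSsum).div_const 2)
        have h2 : 2 * ‖g (l + t * m)‖ * r ^ (t * m) ≤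
            ‖g (l + t * m)‖ ^ 2 + (r ^ (t * m)) ^ 2 := two_mul_le_add_sq _ _
        rw [hrpow t] at h2
        linarith
      have hhl : ‖h l‖ ≤ ∑' t : ℕ, ‖g (l + t * m)‖ * r ^ (t * m) := by
        rw [hh l]
        have := norm_tsum_le_tsum_norm (f := fun t : ℕ => g (l + t * m) * (r : ℂ) ^ (t * m)) ?_
        · refine le_trans this (le_of_eq (tsum_congr fun t => ?_))
          rw [norm_mul, norm_pow, Complex.norm_real, Real.norm_eq_abs, abs_of_pos hr0]
        · refine Summable.congr hTsum fun t => ?_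
          rw [norm_mul, norm_pow, Complex.norm_real, Real.norm_eq_abs, abs_of_pos hr0]
      have hT : ∑' t : ℕ, ‖g (l + t * m)‖ * r ^ (t * m) ≤ Real.sqrt (A l * S) := by
        refine Summable.tsum_le_of_sum_le hTsum fun s => ?_
        refine Real.le_sqrt_of_sq_le ?_
        calc (∑ t ∈ s, ‖g (l + t * m)‖ * r ^ (t * m)) ^ 2
            ≤ (∑ t ∈ s, ‖g (l + t * m)‖ ^ 2) * ∑ t ∈ s, (r ^ (t * m)) ^ 2 :=
              Finset.sum_mul_sq_le_sq_mul_sq s _ _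
          _ ≤ A l * S := by
              refine mul_le_mul ?_ ?_ (Finset.sum_nonneg fun t _ => by positivity) (hA0 l)
              · exact Summable.sum_le_tsum s (fun t _ => by positivity) (hA l)
              · rw [← hS]
                refine le_trans (le_of_eq (Finset.sum_congr rfl fun t _ => hrpow t)) ?_
                exact Summable.sum_le_tsum s (fun t _ => by positivity) hSsum
      calc ‖h l‖ ^ 2 ≤ (Real.sqrt (A l * S)) ^ 2 := by
            refine pow_le_pow_left₀ (norm_nonneg _) (le_trans hhl hT) 2
        _ = A l * S := Real.sq_sqrt (mul_nonneg (hA0 l) hS0)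
    calc ∑ l ∈ Finset.range m, ‖h l‖ ^ 2 ≤ ∑ l ∈ Finset.range m, A l * S :=
          Finset.sum_le_sum fun l _ => key l
      _ = S * ∑ l ∈ Finset.range m, A l := by rw [Finset.mul_sum]; exact Finset.sum_congr rfl fun l _ => mul_comm _ _
      _ = (1 / (1 - r ^ (2 * m))) * ∑' j : ℕ, ‖g j‖ ^ 2 := by
          rw [← reindex_tsum hm _ hg, hSdef, one_div]
end

section
/- Fix 0 < r < 1 and a positive integer m. For a = (a_j)_{j≥0} ∈ ℓ²(ℕ, ℂ), let P_m a be the sequence with (P_m a)_ℓ = Σ_{t≥0} a_{ℓ+tm} r^{tm} for 0 ≤ ℓ ≤ m−1 and (P_m a)_j = 0 for j ≥ m. Then Σ_{j≥0} |a_j − (P_m a)_j|² ≤ (1/(1 − r^{2m})) · Σ_{j≥m} |a_j|². -/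
open scoped BigOperators

/-- Cauchy–Schwarz for tsums of nonnegative reals. -/
private lemma cs_tsum (f g : ℕ → ℝ) (hf : ∀ i, 0 ≤ f i) (hg : ∀ i, 0 ≤ g i)
    (hf2 : Summable fun i => f i ^ 2) (hg2 : Summable fun i => g i ^ 2) :
    Summable (fun i => f i * g i) ∧
      (∑' i, f i * g i) ^ 2 ≤ (∑' i, f i ^ 2) * (∑' i, g i ^ 2) := by
  have hconj : (2:ℝ).HolderConjugate 2 := Real.HolderConjugate.two_two
  have h2 : ∀ x : ℝ, x ^ (2:ℝ) = x ^ 2 := fun x => by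
    rw [show (2:ℝ) = ((2:ℕ):ℝ) by norm_num, Real.rpow_natCast]
  have hf2' : Summable fun i => f i ^ (2:ℝ) := by simpa [h2] using hf2
  have hg2' : Summable fun i => g i ^ (2:ℝ) := by simpa [h2] using hg2
  obtain ⟨hs, hle⟩ := Real.summable_and_inner_le_Lp_mul_Lq_tsum_of_nonneg hconj hf hg hf2' hg2'
  refine ⟨hs, ?_⟩
  have hA : (0:ℝ) ≤ ∑' i, f i ^ (2:ℝ) := tsum_nonneg fun i => by
    rw [h2]; positivity
  have hB : (0:ℝ) ≤ ∑' i, g i ^ (2:ℝ) := tsum_nonneg fun i => by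
    rw [h2]; positivity
  have hsq : ∀ (A : ℝ), 0 ≤ A → (A ^ ((1:ℝ)/2)) ^ 2 = A := by
    intro A hA0
    rw [← Real.rpow_natCast (A ^ ((1:ℝ)/2)) 2, ← Real.rpow_mul hA0]
    norm_num
  have hnn : (0:ℝ) ≤ ∑' i, f i * g i := tsum_nonneg fun i => mul_nonneg (hf i) (hg i)
  calc (∑' i, f i * g i) ^ 2
      ≤ ((∑' i, f i ^ (2:ℝ)) ^ ((1:ℝ)/2) * (∑' i, g i ^ (2:ℝ)) ^ ((1:ℝ)/2)) ^ 2 :=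
        pow_le_pow_left₀ hnn hle 2
    _ = (∑' i, f i ^ 2) * (∑' i, g i ^ 2) := by
        rw [mul_pow, hsq _ hA, hsq _ hB]; simp only [h2]

/-- Reindexing: summing `g (j + (t+1)*m)` over `j < m` and `t : ℕ` gives the tail sum. -/
private lemma double_sum (m : ℕ) (hm : 0 < m) (g : ℕ → ℝ) (hg0 : ∀ n, 0 ≤ g n)
    (hg : Summable g) :
    ∑ j ∈ Finset.range m, ∑' t : ℕ, g (j + (t + 1) * m) = ∑' n : ℕ, g (n + m) := by
  haveI : NeZero m := ⟨hm.ne'⟩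
  set e := Nat.divModEquiv m
  set G : ℕ × Fin m → ℝ := fun p => g (↑p.2 + (p.1 + 1) * m) with hG
  have hcomp : (fun n => g (n + m)) = fun n => G (e n) := by
    funext n
    have h1 : (((Fin.ofNat m n : Fin m) : ℕ)) + (n / m + 1) * m = n + m := by
      show n % m + (n / m + 1) * m = n + m
      have h2 : n % m + (n / m + 1) * m = (n % m + n / m * m) + m := by ring
      rw [h2, Nat.mod_add_div']
    show g (n + m) = G (Nat.divModEquiv m n)
    simp only [hG, Nat.divModEquiv, Equiv.coe_fn_mk]
    rw [h1]
  have hgs : Summable fun n => g (n + m) := (summable_nat_add_iff m).2 hg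
  have hGs : Summable G := by
    rw [hcomp] at hgs
    exact (Equiv.summable_iff e).1 hgs
  have hinner : ∀ j : ℕ, Summable fun t : ℕ => g (j + (t + 1) * m) := by
    intro j
    apply hg.comp_injective
    intro s t h
    simp only at h
    have : (s + 1) * m = (t + 1) * m := by omega
    have := Nat.eq_of_mul_eq_mul_right hm this
    omega
  calc ∑ j ∈ Finset.range m, ∑' t : ℕ, g (j + (t + 1) * m)
      = ∑ j : Fin m, ∑' t : ℕ, g (↑j + (t + 1) * m) :=
        (Fin.sum_univ_eq_sum_range (fun j => ∑' t : ℕ, g (j + (t + 1) * m)) m).symm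
    _ = ∑' t : ℕ, ∑ j : Fin m, G (t, j) := by
        exact (Summable.tsum_finsetSum (fun (j : Fin m) _ => hinner (j : ℕ))).symm
    _ = ∑' t : ℕ, ∑' j : Fin m, G (t, j) := by simp [tsum_fintype]
    _ = ∑' p : ℕ × Fin m, G p := (Summable.tsum_prod hGs).symm
    _ = ∑' n : ℕ, G (e n) := (e.tsum_eq G).symm
    _ = ∑' n : ℕ, g (n + m) := by rw [hcomp]

set_option maxHeartbeats 1000000 in
/-- The interpolation operator `P_m` at the `m` equispaced points on the circle of
radius `r` acts as a near-best approximation from polynomials of degree `< m` on `H²`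
(identified with `ℓ²(ℕ, ℂ)`): `‖a - P_m a‖² ≤ (1/(1-r^{2m})) Σ_{j≥m} |a_j|²`. -/
theorem stmt13 (r : ℝ) (hr0 : 0 < r) (hr1 : r < 1) (m : ℕ) (hm : 0 < m)
    (a : ℕ → ℂ) (ha : Summable (fun j : ℕ => ‖a j‖ ^ 2))
    (Pa : ℕ → ℂ)
    (hPa : ∀ j : ℕ, Pa j =
      if j < m then ∑' t : ℕ, a (j + t * m) * (r : ℂ) ^ (t * m) else 0) :
    Summable (fun j : ℕ => ‖a j - Pa j‖ ^ 2) ∧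
      ∑' j : ℕ, ‖a j - Pa j‖ ^ 2 ≤ (1 / (1 - r ^ (2 * m))) * ∑' j : ℕ, ‖a (j + m)‖ ^ 2 := by
  have hρ0 : 0 < r ^ (2 * m) := by positivity
  have hρ1 : r ^ (2 * m) < 1 := pow_lt_one₀ hr0.le hr1 (by omega)
  have h1ρ : 0 < 1 - r ^ (2 * m) := by linarith
  set ρ : ℝ := r ^ (2 * m) with hρdef
  have haS : Summable (fun j : ℕ => ‖a (j + m)‖ ^ 2) := (summable_nat_add_iff m).2 ha
  set S : ℝ := ∑' j : ℕ, ‖a (j + m)‖ ^ 2 with hSdef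
  have hSnn : 0 ≤ S := tsum_nonneg fun _ => sq_nonneg _
  -- tail summability for each j
  have hinner : ∀ j : ℕ, Summable fun t : ℕ => ‖a (j + t * m)‖ ^ 2 := by
    intro j
    apply ha.comp_injective
    intro s t h
    simp only at h
    have : s * m = t * m := by omega
    have := Nat.eq_of_mul_eq_mul_right hm this
    omega
  have hgeom : ∀ j : ℕ, Summable fun t : ℕ => (r ^ (j + t * m)) ^ 2 := by
    intro j
    have : (fun t : ℕ => (r ^ (j + t * m)) ^ 2) = fun t : ℕ => (r ^ j) ^ 2 * ρ ^ t := by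
      funext t
      rw [hρdef, ← pow_mul, ← pow_mul, ← pow_mul, ← pow_add]
      congr 1
      ring
    rw [this]
    exact (summable_geometric_of_lt_one (by positivity) hρ1).mul_left _
  -- per-coordinate bound for j < m
  have key : ∀ j, j < m → ‖a j - Pa j‖ ^ 2 ≤
      (ρ * (1 - ρ)⁻¹) * ∑' t : ℕ, ‖a (j + (t + 1) * m)‖ ^ 2 := by
    intro j hj
    have hcs := cs_tsum (fun t => ‖a (j + t * m)‖) (fun t => r ^ (t * m))
      (fun t => norm_nonneg _) (fun t => by positivity) (hinner j)
      (by simpa using hgeom 0)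
    have hfg : Summable fun t : ℕ => ‖a (j + t * m)‖ * r ^ (t * m) := hcs.1
    have hc : Summable fun t : ℕ => a (j + t * m) * (r : ℂ) ^ (t * m) := by
      apply Summable.of_norm
      have : (fun t : ℕ => ‖a (j + t * m) * (r : ℂ) ^ (t * m)‖)
          = fun t : ℕ => ‖a (j + t * m)‖ * r ^ (t * m) := by
        funext t
        rw [norm_mul, norm_pow, Complex.norm_real, Real.norm_eq_abs, abs_of_pos hr0]
      rw [this]; exact hfg
    have hsplit : Pa j = a j + ∑' t : ℕ, a (j + (t + 1) * m) * (r : ℂ) ^ ((t + 1) * m) := by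
      rw [hPa j, if_pos hj, Summable.tsum_eq_zero_add hc]
      simp
    have hdiff : a j - Pa j = -∑' t : ℕ, a (j + (t + 1) * m) * (r : ℂ) ^ ((t + 1) * m) := by
      rw [hsplit]; ring
    have hfg1 : Summable fun t : ℕ => ‖a (j + (t + 1) * m)‖ * r ^ ((t + 1) * m) :=
      (summable_nat_add_iff (f := fun t : ℕ => ‖a (j + t * m)‖ * r ^ (t * m)) 1).2 hfg
    have hnorm : ‖a j - Pa j‖ ≤ ∑' t : ℕ, ‖a (j + (t + 1) * m)‖ * r ^ ((t + 1) * m) := by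
      rw [hdiff, norm_neg]
      refine (norm_tsum_le_tsum_norm ?_).trans_eq ?_
      · have : (fun t : ℕ => ‖a (j + (t + 1) * m) * (r : ℂ) ^ ((t + 1) * m)‖)
            = fun t : ℕ => ‖a (j + (t + 1) * m)‖ * r ^ ((t + 1) * m) := by
          funext t
          rw [norm_mul, norm_pow, Complex.norm_real, Real.norm_eq_abs, abs_of_pos hr0]
        rw [this]; exact hfg1
      · exact tsum_congr fun t => by
          rw [norm_mul, norm_pow, Complex.norm_real, Real.norm_eq_abs, abs_of_pos hr0]
    have hcs1 := cs_tsum (fun t => ‖a (j + (t + 1) * m)‖) (fun t => r ^ ((t + 1) * m))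
      (fun t => norm_nonneg _) (fun t => by positivity)
      ((summable_nat_add_iff (f := fun t : ℕ => ‖a (j + t * m)‖ ^ 2) 1).2 (hinner j))
      ((summable_nat_add_iff (f := fun t : ℕ => (r ^ (t * m)) ^ 2) 1).2
        (by simpa using hgeom 0))
    have hg2 : ∑' t : ℕ, (r ^ ((t + 1) * m)) ^ 2 = ρ * (1 - ρ)⁻¹ := by
      have : (fun t : ℕ => (r ^ ((t + 1) * m)) ^ 2) = fun t : ℕ => ρ * ρ ^ t := by
        funext t
        rw [hρdef, ← pow_mul, ← pow_succ', ← pow_mul]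
        congr 1
        ring
      rw [this, tsum_mul_left, tsum_geometric_of_lt_one (by positivity) hρ1]
    calc ‖a j - Pa j‖ ^ 2
        ≤ (∑' t : ℕ, ‖a (j + (t + 1) * m)‖ * r ^ ((t + 1) * m)) ^ 2 :=
          pow_le_pow_left₀ (norm_nonneg _) hnorm 2
      _ ≤ (∑' t : ℕ, ‖a (j + (t + 1) * m)‖ ^ 2) * ∑' t : ℕ, (r ^ ((t + 1) * m)) ^ 2 := hcs1.2
      _ = (ρ * (1 - ρ)⁻¹) * ∑' t : ℕ, ‖a (j + (t + 1) * m)‖ ^ 2 := by rw [hg2]; ring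
  -- tail of the difference is just a
  have htail : ∀ j : ℕ, ‖a (j + m) - Pa (j + m)‖ ^ 2 = ‖a (j + m)‖ ^ 2 := by
    intro j
    rw [hPa (j + m), if_neg (by omega)]
    simp
  have hfsum : Summable (fun j : ℕ => ‖a j - Pa j‖ ^ 2) := by
    apply (summable_nat_add_iff m).1
    simpa only [htail] using haS
  refine ⟨hfsum, ?_⟩
  have hdecomp : ∑' j : ℕ, ‖a j - Pa j‖ ^ 2
      = ∑ j ∈ Finset.range m, ‖a j - Pa j‖ ^ 2 + S := by
    rw [← Summable.sum_add_tsum_nat_add m hfsum]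
    congr 1
    rw [hSdef]
    exact tsum_congr fun j => htail j
  have hdouble : ∑ j ∈ Finset.range m, ∑' t : ℕ, ‖a (j + (t + 1) * m)‖ ^ 2 = S := by
    rw [hSdef]
    exact double_sum m hm (fun n => ‖a n‖ ^ 2) (fun n => sq_nonneg _) ha
  have hhead : ∑ j ∈ Finset.range m, ‖a j - Pa j‖ ^ 2 ≤ (ρ * (1 - ρ)⁻¹) * S := by
    calc ∑ j ∈ Finset.range m, ‖a j - Pa j‖ ^ 2
        ≤ ∑ j ∈ Finset.range m, (ρ * (1 - ρ)⁻¹) * ∑' t : ℕ, ‖a (j + (t + 1) * m)‖ ^ 2 :=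
          Finset.sum_le_sum fun j hj => key j (Finset.mem_range.1 hj)
      _ = (ρ * (1 - ρ)⁻¹) * S := by rw [← Finset.mul_sum, hdouble]
  rw [hdecomp]
  have : (1 : ℝ) / (1 - ρ) * S = (ρ * (1 - ρ)⁻¹) * S + S := by
    field_simp
    ring
  rw [this]
  linarith
end

section
/- Let ζ_0, ζ_1, …, ζ_m be distinct points on the unit circle {z ∈ ℂ : |z| = 1} and let a_1, …, a_m ∈ ℂ. Then sup{ |F(ζ_0) − Σ_{k=1}^m a_k F(ζ_k)| : F ∈ A(𝔻), ‖F‖_∞ ≤ 1 } = 1 + Σ_{k=1}^m |a_k|. -/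
open Complex Metric Finset

lemma aux_norm_le (ξ z : ℂ) (hξ : ‖ξ‖ = 1) (hz : ‖z‖ ≤ 1) :
    ‖(1 + (starRingEnd ℂ) ξ * z) / 2‖ ≤ 1 := by
  have h1 : ‖1 + (starRingEnd ℂ) ξ * z‖ ≤ 2 := by
    calc ‖1 + (starRingEnd ℂ) ξ * z‖ ≤ ‖(1:ℂ)‖ + ‖(starRingEnd ℂ) ξ * z‖ := norm_add_le _ _
    _ = 1 + ‖z‖ := by simp [norm_mul, hξ]
    _ ≤ 2 := by linarith
  rw [norm_div]
  have h2 : ‖(2:ℂ)‖ = 2 := by norm_num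
  rw [h2]
  linarith

lemma aux_eq (ξ z : ℂ) (hξ : ‖ξ‖ = 1) (hz : ‖z‖ ≤ 1)
    (h : ‖(1 + (starRingEnd ℂ) ξ * z) / 2‖ = 1) : z = ξ := by
  set u := (starRingEnd ℂ) ξ * z with hu
  have hun : ‖u‖ ≤ 1 := by
    rw [hu, norm_mul]
    simpa [hξ] using hz
  have h2 : ‖1 + u‖ = 2 := by
    rw [norm_div] at h
    have h2 : ‖(2:ℂ)‖ = 2 := by norm_num
    rw [h2] at h
    field_simp at h
    linarith [h]
  have hsq : Complex.normSq (1 + u) = 4 := by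
    have := Complex.normSq_eq_norm_sq (1 + u)
    rw [this, h2]; norm_num
  have hexp : (1 + u.re) * (1 + u.re) + u.im * u.im = 4 := by
    simpa [Complex.normSq_apply] using hsq
  have hule : u.re * u.re + u.im * u.im ≤ 1 := by
    have := Complex.normSq_eq_norm_sq u
    have h3 : Complex.normSq u ≤ 1 := by
      rw [this]
      nlinarith [norm_nonneg u]
    simpa [Complex.normSq_apply] using h3
  have h3 : u.re = 1 := by nlinarith
  have h4 : u.im = 0 := by nlinarith
  have h5 : u = 1 := Complex.ext (by simp [h3]) (by simp [h4])
  have h6 : ξ * ((starRingEnd ℂ) ξ * z) = z := by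
    rw [← mul_assoc, Complex.mul_conj]
    have : Complex.normSq ξ = 1 := by
      rw [Complex.normSq_eq_norm_sq, hξ]; norm_num
    rw [this]; simp
  rw [← hu, h5, mul_one] at h6
  exact h6.symm

/-- `F` belongs to the disc algebra `A(𝔻)`: continuous on the closed unit disc and
holomorphic on the open unit disc. -/
def MemDiscAlgebra (F : ℂ → ℂ) : Prop :=
  ContinuousOn F (Metric.closedBall 0 1) ∧ DifferentiableOn ℂ F (Metric.ball 0 1)

set_option maxHeartbeats 2000000 in
/-- The dual norm in `A(𝔻)*` of `e_{ζ_0} - Σ_k a_k e_{ζ_k}` for distinct points on the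
unit circle equals `1 + Σ_k |a_k|` (via the Rudin–Carleson theorem). -/
theorem stmt14 {m : ℕ} (ζ₀ : ℂ) (ζ : Fin m → ℂ)
    (hζ₀ : ‖ζ₀‖ = 1) (hζ : ∀ k, ‖ζ k‖ = 1)
    (hinj : Function.Injective ζ) (hζ₀ζ : ∀ k, ζ₀ ≠ ζ k)
    (a : Fin m → ℂ) :
    sSup {x : ℝ | ∃ F : ℂ → ℂ, MemDiscAlgebra F ∧
        (∀ z ∈ Metric.closedBall (0 : ℂ) 1, ‖F z‖ ≤ 1) ∧
        x = ‖F ζ₀ - ∑ k, a k * F (ζ k)‖}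
      = 1 + ∑ k, ‖a k‖ := by
  classical
  set S : ℝ := 1 + ∑ k, ‖a k‖ with hSdef
  have hS1 : 1 ≤ S := by
    have : (0:ℝ) ≤ ∑ k, ‖a k‖ := Finset.sum_nonneg fun k _ => norm_nonneg _
    simp only [hSdef]; linarith
  have hSnn : 0 ≤ S := by linarith
  -- membership in closed ball
  have hζ₀mem : ζ₀ ∈ Metric.closedBall (0:ℂ) 1 := by
    rw [mem_closedBall_zero_iff, hζ₀]
  have hζmem : ∀ k, ζ k ∈ Metric.closedBall (0:ℂ) 1 := fun k => by
    rw [mem_closedBall_zero_iff, hζ k]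
  -- upper bound
  have hub : ∀ x ∈ {x : ℝ | ∃ F : ℂ → ℂ, MemDiscAlgebra F ∧
        (∀ z ∈ Metric.closedBall (0 : ℂ) 1, ‖F z‖ ≤ 1) ∧
        x = ‖F ζ₀ - ∑ k, a k * F (ζ k)‖}, x ≤ S := by
    rintro x ⟨F, hF, hFb, rfl⟩
    calc ‖F ζ₀ - ∑ k, a k * F (ζ k)‖
        ≤ ‖F ζ₀‖ + ‖∑ k, a k * F (ζ k)‖ := norm_sub_le _ _
      _ ≤ 1 + ∑ k, ‖a k‖ := by
          gcongr
          · exact hFb ζ₀ hζ₀mem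
          · calc ‖∑ k, a k * F (ζ k)‖ ≤ ∑ k, ‖a k * F (ζ k)‖ := norm_sum_le _ _
              _ ≤ ∑ k, ‖a k‖ := by
                  apply Finset.sum_le_sum
                  intro k _
                  rw [norm_mul]
                  calc ‖a k‖ * ‖F (ζ k)‖ ≤ ‖a k‖ * 1 :=
                        mul_le_mul_of_nonneg_left (hFb _ (hζmem k)) (norm_nonneg _)
                    _ = ‖a k‖ := mul_one _
  refine le_antisymm (Real.sSup_le hub hSnn) (le_of_forall_pos_le_add ?_)
  intro ε hε
  -- setup
  set ξ : Fin (m+1) → ℂ := Fin.cons ζ₀ ζ with hξdef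
  have hξabs : ∀ j, ‖ξ j‖ = 1 := by
    intro j
    refine Fin.cases ?_ ?_ j
    · rw [hξdef, Fin.cons_zero, hζ₀]
    · intro k; rw [hξdef, Fin.cons_succ, hζ k]
  have hξinj : Function.Injective ξ := by
    intro i j hij
    induction i using Fin.cases with
    | zero =>
      induction j using Fin.cases with
      | zero => rfl
      | succ j' => exact absurd (by simpa [hξdef] using hij) (hζ₀ζ j')
    | succ i' =>
      induction j using Fin.cases with
      | zero => exact absurd (by simpa [hξdef] using hij.symm) (hζ₀ζ i')
      | succ j' => exact congrArg Fin.succ (hinj (by simpa [hξdef] using hij))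
  set g : Fin (m+1) → ℂ → ℂ := fun j z => (1 + (starRingEnd ℂ) (ξ j) * z) / 2 with hgdef
  have hg_le : ∀ j z, ‖z‖ ≤ 1 → ‖g j z‖ ≤ 1 := fun j z hz => aux_norm_le _ _ (hξabs j) hz
  have hg_eq : ∀ j z, ‖z‖ ≤ 1 → ‖g j z‖ = 1 → z = ξ j := fun j z hz h =>
    aux_eq _ _ (hξabs j) hz h
  have hg_self : ∀ j, g j (ξ j) = 1 := by
    intro j
    have h1 : (starRingEnd ℂ) (ξ j) * ξ j = 1 := by
      rw [mul_comm, Complex.mul_conj]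
      norm_cast
      rw [Complex.normSq_eq_norm_sq, hξabs j]; norm_num
    simp only [hgdef, h1]
    norm_num
  -- pairwise bound via compactness
  have hM : ∀ p : Fin (m+1) × Fin (m+1), ∃ M : ℝ, 0 ≤ M ∧ M < 1 ∧
      (p.1 ≠ p.2 → ∀ z, ‖z‖ ≤ 1 → ‖g p.1 z‖ * ‖g p.2 z‖ ≤ M) := by
    intro p
    by_cases hp : p.1 = p.2
    · exact ⟨0, le_refl _, one_pos, fun h => absurd hp h⟩
    · have hcont : ContinuousOn (fun z => ‖g p.1 z‖ * ‖g p.2 z‖) (closedBall (0:ℂ) 1) := by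
        apply Continuous.continuousOn
        fun_prop
      obtain ⟨x, hx, hmax⟩ := (isCompact_closedBall (0:ℂ) 1).exists_isMaxOn
        ⟨0, by simp⟩ hcont
      have hx1 : ‖x‖ ≤ 1 := mem_closedBall_zero_iff.mp hx
      refine ⟨‖g p.1 x‖ * ‖g p.2 x‖, mul_nonneg (norm_nonneg _) (norm_nonneg _), ?_, ?_⟩
      · have h1 : ‖g p.1 x‖ ≤ 1 := hg_le _ _ hx1
        have h2 : ‖g p.2 x‖ ≤ 1 := hg_le _ _ hx1
        rcases lt_or_eq_of_le h1 with h | h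
        · exact lt_of_le_of_lt (mul_le_of_le_one_right (norm_nonneg _) h2) h
        · rcases lt_or_eq_of_le h2 with h' | h'
          · exact lt_of_le_of_lt (mul_le_of_le_one_left (norm_nonneg _) h1) h'
          · exfalso
            have e1 := hg_eq _ _ hx1 h
            have e2 := hg_eq _ _ hx1 h'
            exact hp (hξinj (e1 ▸ e2 ▸ rfl))
      · intro _ z hz
        exact hmax (mem_closedBall_zero_iff.mpr hz)
  choose M hM0 hM1 hMb using hM
  have hne : (Finset.univ : Finset (Fin (m+1) × Fin (m+1))).Nonempty := Finset.univ_nonempty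
  set c : ℝ := Finset.univ.sup' hne M with hcdef
  have hc0 : 0 ≤ c := le_trans (hM0 (0,0)) (Finset.le_sup' M (mem_univ (0,0)))
  have hc1 : c < 1 := (Finset.sup'_lt_iff hne).mpr fun p _ => hM1 p
  have hcb : ∀ i j, i ≠ j → ∀ z, ‖z‖ ≤ 1 → ‖g i z‖ * ‖g j z‖ ≤ c := by
    intro i j hij z hz
    exact (hMb (i,j) hij z hz).trans (Finset.le_sup' M (mem_univ (i,j)))
  have hcii : ∀ i j, i ≠ j → ‖g i (ξ j)‖ ≤ c := by
    intro i j hij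
    have := hcb i j hij (ξ j) (by rw [hξabs])
    rwa [hg_self, norm_one, mul_one] at this
  -- choose n
  have htend : Filter.Tendsto (fun n : ℕ => S*(2*(m:ℝ)+1)*c^n) Filter.atTop (nhds 0) := by
    have h0 : Filter.Tendsto (fun n : ℕ => c^n) Filter.atTop (nhds 0) :=
      tendsto_pow_atTop_nhds_zero_of_lt_one hc0 hc1
    have := h0.const_mul (S*(2*(m:ℝ)+1))
    simpa using this
  obtain ⟨n, hn⟩ := (htend.eventually_lt_const hε).exists
  set t : ℝ := c^n with htdef
  have ht0 : 0 ≤ t := pow_nonneg hc0 n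
  have ht1 : t ≤ 1 := pow_le_one₀ hc0 hc1.le
  -- targets
  set w : Fin (m+1) → ℂ := Fin.cons 1
    (fun k => if a k = 0 then 1 else -((starRingEnd ℂ) (a k)) / (‖a k‖ : ℂ)) with hwdef
  have hw1 : ∀ j, ‖w j‖ = 1 := by
    intro j
    induction j using Fin.cases with
    | zero => simp [hwdef]
    | succ k =>
      simp only [hwdef, Fin.cons_succ]
      by_cases h : a k = 0
      · simp [h]
      · have hak : (0:ℝ) < ‖a k‖ := norm_pos_iff.mpr h
        rw [if_neg h, norm_div, norm_neg]
        have hc : ‖(starRingEnd ℂ) (a k)‖ = ‖a k‖ := by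
          simp
        have hr : ‖((‖a k‖ : ℝ) : ℂ)‖ = ‖a k‖ := by
          rw [Complex.norm_real, Real.norm_of_nonneg (norm_nonneg _)]
        rw [hc, hr, div_self hak.ne']
  have hwa : ∀ k, a k * w k.succ = -((‖a k‖ : ℝ) : ℂ) := by
    intro k
    simp only [hwdef, Fin.cons_succ]
    by_cases h : a k = 0
    · simp [h]
    · rw [if_neg h]
      have hak : ((‖a k‖ : ℝ) : ℂ) ≠ 0 := by
        simpa using norm_pos_iff.mpr h |>.ne'
      field_simp
      rw [Complex.mul_conj]
      norm_cast
      rw [Complex.normSq_eq_norm_sq]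
  set B : ℝ := 1 + ((m:ℝ)+1)*t with hBdef
  have hB1 : 1 ≤ B := by
    have : (0:ℝ) ≤ ((m:ℝ)+1)*t := mul_nonneg (by positivity) ht0
    simp only [hBdef]; linarith
  have hB0 : (0:ℝ) < B := lt_of_lt_of_le one_pos hB1
  have hBnorm : ‖((B:ℝ):ℂ)‖ = B := by rw [Complex.norm_real, Real.norm_of_nonneg hB0.le]
  set F : ℂ → ℂ := fun z => ((B:ℝ):ℂ)⁻¹ * ∑ j, w j * (g j z)^(2*n) with hFdef
  have hFdiff : Differentiable ℂ F := by
    simp only [hFdef, hgdef]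
    apply Differentiable.const_mul
    apply Differentiable.fun_sum
    intro j _
    apply Differentiable.const_mul
    apply Differentiable.pow
    apply Differentiable.div_const
    exact (differentiable_const _).add ((differentiable_const _).mul differentiable_id)
  have hgnode : ∀ i j, i ≠ j → ‖g i (ξ j)‖^(2*n) ≤ t := by
    intro i j hij
    calc ‖g i (ξ j)‖^(2*n) ≤ c^(2*n) := pow_le_pow_left₀ (norm_nonneg _) (hcii i j hij) _
      _ ≤ c^n := pow_le_pow_of_le_one hc0 hc1.le (by omega)
  set E : Fin (m+1) → ℂ := fun j => ∑ i ∈ univ.erase j, w i * (g i (ξ j))^(2*n) with hEdef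
  have hFval : ∀ j, F (ξ j) = ((B:ℝ):ℂ)⁻¹ * (w j + E j) := by
    intro j
    simp only [hFdef, hEdef]
    congr 1
    rw [← Finset.add_sum_erase _ _ (mem_univ j), hg_self, one_pow, mul_one]
  have hEbound : ∀ j, ‖E j‖ ≤ (m:ℝ) * t := by
    intro j
    calc ‖E j‖ ≤ ∑ i ∈ univ.erase j, ‖w i * (g i (ξ j))^(2*n)‖ := norm_sum_le _ _
      _ ≤ ∑ _i ∈ univ.erase j, t := by
          apply Finset.sum_le_sum
          intro i hi
          rw [norm_mul, hw1, one_mul, norm_pow]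
          exact hgnode i j (Finset.ne_of_mem_erase hi)
      _ = (m:ℝ) * t := by
          rw [Finset.sum_const, Finset.card_erase_of_mem (mem_univ j), card_univ,
            Fintype.card_fin]
          simp
  have hFnorm : ∀ z ∈ Metric.closedBall (0:ℂ) 1, ‖F z‖ ≤ 1 := by
    intro z hz
    have hz1 : ‖z‖ ≤ 1 := mem_closedBall_zero_iff.mp hz
    have hsum2 : ∑ j, ‖g j z‖^(2*n) ≤ B := by
      by_cases hcase : ∃ j₀, c < ‖g j₀ z‖^2
      · obtain ⟨j₀, hj₀⟩ := hcase
        have hother : ∀ i, i ≠ j₀ → ‖g i z‖^2 ≤ c := by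
          intro i hi
          by_contra hlt
          push_neg at hlt
          have hprod := hcb i j₀ hi z hz1
          have hsq : (‖g i z‖ * ‖g j₀ z‖) * (‖g i z‖ * ‖g j₀ z‖) ≤ c * c :=
            mul_le_mul hprod hprod (mul_nonneg (norm_nonneg _) (norm_nonneg _)) hc0
          nlinarith [hj₀, hlt, hc0, hsq]
        rw [← Finset.add_sum_erase _ _ (mem_univ j₀)]
        have h1 : ‖g j₀ z‖^(2*n) ≤ 1 := pow_le_one₀ (norm_nonneg _) (hg_le j₀ z hz1)
        have h2 : ∑ i ∈ univ.erase j₀, ‖g i z‖^(2*n) ≤ (m:ℝ) * t := by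
          calc ∑ i ∈ univ.erase j₀, ‖g i z‖^(2*n) ≤ ∑ _i ∈ univ.erase j₀, t := by
                apply Finset.sum_le_sum
                intro i hi
                rw [pow_mul]
                exact pow_le_pow_left₀ (sq_nonneg _) (hother i (Finset.ne_of_mem_erase hi)) n
            _ = (m:ℝ) * t := by
                rw [Finset.sum_const, Finset.card_erase_of_mem (mem_univ j₀), card_univ,
                  Fintype.card_fin]
                simp
        have h3 : (m:ℝ) * t ≤ ((m:ℝ)+1)*t := by nlinarith
        simp only [hBdef]
        linarith
      · push_neg at hcase
        calc ∑ j, ‖g j z‖^(2*n) ≤ ∑ _j : Fin (m+1), t := by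
              apply Finset.sum_le_sum
              intro i _
              rw [pow_mul]
              exact pow_le_pow_left₀ (sq_nonneg _) (hcase i) n
          _ = ((m:ℝ)+1) * t := by
              rw [Finset.sum_const, card_univ, Fintype.card_fin]
              push_cast
              ring
          _ ≤ B := by simp only [hBdef]; linarith
    have hsum1 : ‖∑ j, w j * (g j z)^(2*n)‖ ≤ ∑ j, ‖g j z‖^(2*n) := by
      refine (norm_sum_le _ _).trans_eq ?_
      apply Finset.sum_congr rfl
      intro j _
      rw [norm_mul, hw1, one_mul, norm_pow]
    have hfin : ‖∑ j, w j * (g j z)^(2*n)‖ ≤ B := hsum1.trans hsum2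
    have hFz : ‖F z‖ = B⁻¹ * ‖∑ j, w j * (g j z)^(2*n)‖ := by
      simp only [hFdef]
      rw [norm_mul, norm_inv, hBnorm]
    rw [hFz]
    calc B⁻¹ * ‖∑ j, w j * (g j z)^(2*n)‖ ≤ B⁻¹ * B :=
          mul_le_mul_of_nonneg_left hfin (inv_nonneg.mpr hB0.le)
      _ = 1 := inv_mul_cancel₀ hB0.ne'
  have hcons0 : ξ 0 = ζ₀ := by rw [hξdef]; exact Fin.cons_zero _ _
  have hconss : ∀ k, ξ k.succ = ζ k := fun k => by rw [hξdef]; exact Fin.cons_succ _ _ _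
  set T : ℂ := w 0 - ∑ k, a k * w k.succ with hTdef
  have hTval : T = ((S:ℝ):ℂ) := by
    have h0 : w 0 = 1 := by rw [hwdef]; exact Fin.cons_zero _ _
    rw [hTdef, h0, Finset.sum_congr rfl (fun k _ => hwa k)]
    simp only [Finset.sum_neg_distrib]
    push_cast [hSdef]
    ring
  set R : ℂ := E 0 - ∑ k, a k * E k.succ with hRdef
  have hRbound : ‖R‖ ≤ S * ((m:ℝ) * t) := by
    calc ‖R‖ ≤ ‖E 0‖ + ‖∑ k, a k * E k.succ‖ := norm_sub_le _ _
      _ ≤ (m:ℝ)*t + ∑ k, ‖a k‖ * ((m:ℝ)*t) := by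
          refine add_le_add (hEbound 0) ((norm_sum_le _ _).trans ?_)
          apply Finset.sum_le_sum
          intro k _
          rw [norm_mul]
          exact mul_le_mul_of_nonneg_left (hEbound _) (norm_nonneg _)
      _ = (1 + ∑ k, ‖a k‖) * ((m:ℝ)*t) := by rw [← Finset.sum_mul]; ring
      _ = S * ((m:ℝ)*t) := by rw [← hSdef]
  have hD : F ζ₀ - ∑ k, a k * F (ζ k) = ((B:ℝ):ℂ)⁻¹ * (T + R) := by
    have h1 : ∀ k, F (ζ k) = ((B:ℝ):ℂ)⁻¹ * (w k.succ + E k.succ) := fun k => by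
      rw [← hconss k, hFval]
    have h2 : ∑ k, a k * F (ζ k)
        = ((B:ℝ):ℂ)⁻¹ * (∑ k, a k * w k.succ + ∑ k, a k * E k.succ) := by
      rw [Finset.sum_congr rfl (fun k _ => by rw [h1 k])]
      rw [mul_add, Finset.mul_sum, Finset.mul_sum, ← Finset.sum_add_distrib]
      apply Finset.sum_congr rfl
      intro k _
      ring
    rw [← hcons0, hFval 0, h2, hTdef, hRdef]
    ring
  set x : ℝ := ‖F ζ₀ - ∑ k, a k * F (ζ k)‖ with hxdef
  have hxmem : x ∈ {x : ℝ | ∃ F : ℂ → ℂ, MemDiscAlgebra F ∧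
      (∀ z ∈ Metric.closedBall (0 : ℂ) 1, ‖F z‖ ≤ 1) ∧
      x = ‖F ζ₀ - ∑ k, a k * F (ζ k)‖} :=
    ⟨F, ⟨hFdiff.continuous.continuousOn, hFdiff.differentiableOn⟩, hFnorm, rfl⟩
  have hxS : x ≤ S := hub x hxmem
  have hTnorm : ‖T‖ = S := by rw [hTval, Complex.norm_real, Real.norm_of_nonneg hSnn]
  have hTR : S - S*((m:ℝ)*t) ≤ ‖T + R‖ := by
    have h1 : ‖T‖ ≤ ‖T + R‖ + ‖R‖ := by
      calc ‖T‖ = ‖(T + R) - R‖ := by rw [add_sub_cancel_right]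
        _ ≤ ‖T + R‖ + ‖R‖ := norm_sub_le _ _
    rw [hTnorm] at h1
    linarith [hRbound]
  have hxval : x = B⁻¹ * ‖T + R‖ := by
    rw [hxdef, hD, norm_mul, norm_inv, hBnorm]
  have hxB : x * B = ‖T + R‖ := by
    rw [hxval]
    field_simp
  have hxlow : S - S*((m:ℝ)*t) ≤ x * B := by rw [hxB]; exact hTR
  have hexp : x * B = x + x*(((m:ℝ)+1)*t) := by rw [hBdef]; ring
  have hx2 : x * (((m:ℝ)+1)*t) ≤ S * (((m:ℝ)+1)*t) :=
    mul_le_mul_of_nonneg_right hxS (mul_nonneg (by positivity) ht0)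
  clear_value x S t B
  have key : S ≤ x + ε := by nlinarith [hxlow, hexp, hx2, hn, ht0, hSnn]
  calc S ≤ x + ε := key
    _ ≤ sSup {x : ℝ | ∃ F : ℂ → ℂ, MemDiscAlgebra F ∧
        (∀ z ∈ Metric.closedBall (0 : ℂ) 1, ‖F z‖ ≤ 1) ∧
        x = ‖F ζ₀ - ∑ k, a k * F (ζ k)‖} + ε :=
      add_le_add_left (le_csSup ⟨S, hub⟩ hxmem) ε
end

section
/- Let 𝒱 be a finite-dimensional linear subspace of the disc algebra A(𝔻), let ζ_0, ζ_1, …, ζ_m be distinct points on the unit circle, and assume no nonzero element of 𝒱 vanishes at all of ζ_1, …, ζ_m. Suppose a⋆ ∈ ℂ^m minimizes Σ_{k=1}^m |a_k| over all a ∈ ℂ^m satisfying Σ_{k=1}^m a_k V(ζ_k) = V(ζ_0) for every V ∈ 𝒱. Then sup{ |F(ζ_0)| / dist_∞(F, 𝒱) : F ∈ A(𝔻), F ≠ 0, F(ζ_1) = ⋯ = F(ζ_m) = 0 } = 1 + Σ_{k=1}^m |a⋆_k|. -/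
/-- The sup norm over the closed unit disc. -/
noncomputable def supNorm (F : ℂ → ℂ) : ℝ :=
  ⨆ z : Metric.closedBall (0 : ℂ) 1, ‖F (z : ℂ)‖

/-- The sup-norm distance from `F` to a subspace `𝒱` of functions. -/
noncomputable def distSup (F : ℂ → ℂ) (𝒱 : Submodule ℂ (ℂ → ℂ)) : ℝ :=
  ⨅ V : 𝒱, supNorm (F - (V : ℂ → ℂ))

section Auxiliary

open Metric Finset



-- helper: finite family of reals each < 1 has a common bound c ∈ [0,1)
lemma finset_bound {ι : Type*} (s : Finset ι) (g : ι → ℝ) (h : ∀ i ∈ s, g i < 1) :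
    ∃ c : ℝ, 0 ≤ c ∧ c < 1 ∧ ∀ i ∈ s, g i ≤ c := by
  rcases s.eq_empty_or_nonempty with rfl | hs
  · exact ⟨0, le_rfl, one_pos, by simp⟩
  · refine ⟨max (s.sup' hs g) 0, le_max_right _ _, max_lt ((Finset.sup'_lt_iff hs).2 h) one_pos,
      fun i hi => le_max_of_le_left (Finset.le_sup' g hi)⟩

-- the peak functions
lemma norm_q_le_one {p z : ℂ} (hp : ‖p‖ = 1) (hz : ‖z‖ ≤ 1) :
    ‖(1 + (starRingEnd ℂ) p * z) / 2‖ ≤ 1 := by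
  rw [norm_div]
  have h1 : ‖(starRingEnd ℂ) p * z‖ ≤ 1 := by
    rw [norm_mul, RCLike.norm_conj, hp, one_mul]; exact hz
  calc ‖1 + (starRingEnd ℂ) p * z‖ / ‖(2:ℂ)‖ ≤ (‖(1:ℂ)‖ + 1) / 2 := by
        rw [Complex.norm_ofNat]
        gcongr
        exact norm_add_le_of_le le_rfl h1
    _ ≤ 1 := by norm_num

lemma norm_q_eq_one {p z : ℂ} (hp : ‖p‖ = 1) (hz : ‖z‖ ≤ 1)
    (h : ‖(1 + (starRingEnd ℂ) p * z) / 2‖ = 1) : z = p := by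
  set u := (starRingEnd ℂ) p * z with hu
  have hun : ‖u‖ ≤ 1 := by
    rw [hu, norm_mul, RCLike.norm_conj, hp, one_mul]; exact hz
  have h2 : ‖1 + u‖ = 2 := by
    rw [norm_div, Complex.norm_ofNat] at h
    linarith [h, (div_eq_one_iff_eq (by norm_num : (2:ℝ) ≠ 0)).1 h]
  -- normSq computation
  have hsq : Complex.normSq (1 + u) = 4 := by
    have := Complex.sq_norm (1 + u)
    rw [h2] at this
    nlinarith [this]
  have hexp : Complex.normSq (1 + u) = 1 + 2 * u.re + Complex.normSq u := by
    simp [Complex.normSq_apply, Complex.add_re, Complex.add_im]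
    ring
  have hnsq : Complex.normSq u ≤ 1 := by
    have := Complex.sq_norm u
    nlinarith [hun, norm_nonneg u]
  have hre : u.re ≤ 1 := le_trans (Complex.re_le_norm u) hun
  have hre1 : u.re = 1 := by nlinarith
  have hnsq1 : Complex.normSq u = 1 := by nlinarith
  have him : u.im = 0 := by
    have : u.re ^ 2 + u.im ^ 2 = 1 := by
      rw [← hnsq1]; simp [Complex.normSq_apply]; ring
    nlinarith
  have hu1 : u = 1 := Complex.ext (by simp [hre1]) (by simp [him])
  have hpc : p * (starRingEnd ℂ) p = 1 := by
    rw [Complex.mul_conj]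
    norm_cast
    rw [← Complex.sq_norm, hp] <;> norm_num
  calc z = p * ((starRingEnd ℂ) p * z) := by rw [← mul_assoc, hpc, one_mul]
    _ = p := by rw [← hu, hu1, mul_one]

set_option maxHeartbeats 1000000 in
lemma interp {n : ℕ} (p : Fin n → ℂ) (hp : ∀ j, ‖p j‖ = 1)
    (hpinj : Function.Injective p) (w : Fin n → ℂ) (hw : ∀ j, ‖w j‖ ≤ 1)
    {ε : ℝ} (hε : 0 < ε) :
    ∃ φ : ℂ → ℂ, Differentiable ℂ φ ∧ (∀ j, φ (p j) = w j) ∧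
      ∀ z : ℂ, ‖z‖ ≤ 1 → ‖φ z‖ ≤ 1 + ε := by
  classical
  set q : Fin n → ℂ → ℂ := fun j z => (1 + (starRingEnd ℂ) (p j) * z) / 2 with hq
  set l : Fin n → ℂ → ℂ := fun j z => ∏ i ∈ Finset.univ.erase j, (z - p i) / (p j - p i) with hl
  set D := closedBall (0:ℂ) 1 with hD
  have hDc : IsCompact D := isCompact_closedBall 0 1
  have hqd : ∀ j, Differentiable ℂ (q j) := by
    intro j
    exact ((differentiable_const _).add ((differentiable_const _).mul differentiable_id)).div_const _
  have hld : ∀ j, Differentiable ℂ (l j) := by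
    intro j
    apply Differentiable.fun_finset_prod
    intro i _
    exact (differentiable_id.sub (differentiable_const _)).div_const _
  have hq1 : ∀ j z, ‖z‖ ≤ 1 → ‖q j z‖ ≤ 1 := fun j z hz => norm_q_le_one (hp j) hz
  have hqe : ∀ j z, ‖z‖ ≤ 1 → ‖q j z‖ = 1 → z = p j := fun j z hz h => norm_q_eq_one (hp j) hz h
  have hqself : ∀ j, q j (p j) = 1 := by
    intro j
    have hpc : (starRingEnd ℂ) (p j) * (p j) = 1 := by
      rw [Complex.conj_mul', hp j]
      norm_num
    simp [hq, hpc]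
  have hlself : ∀ j, l j (p j) = 1 := by
    intro j
    apply Finset.prod_eq_one
    intro i hi
    have : p j - p i ≠ 0 := by
      refine sub_ne_zero.2 fun h => ?_
      exact (Finset.mem_erase.1 hi).1 (hpinj h).symm
    exact div_self this
  have hlzero : ∀ i j : Fin n, i ≠ j → l j (p i) = 0 := by
    intro i j hij
    apply Finset.prod_eq_zero (Finset.mem_erase.2 ⟨hij, Finset.mem_univ i⟩)
    simp
  -- bound L on the Lagrange factors
  obtain ⟨L₀, hL₀⟩ := hDc.exists_bound_of_continuousOn
    (f := fun z => ∑ j, ‖l j z‖)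
    (Continuous.continuousOn (continuous_finset_sum _ fun j _ => (hld j).continuous.norm))
  set L := max L₀ 1 with hLdef
  have hL1 : (1:ℝ) ≤ L := le_max_right _ _
  have hL : ∀ z ∈ D, ∀ j, ‖l j z‖ ≤ L := by
    intro z hz j
    have h1 : ‖l j z‖ ≤ ∑ i, ‖l i z‖ :=
      Finset.single_le_sum (f := fun i => ‖l i z‖) (fun i _ => norm_nonneg _)
        (Finset.mem_univ j)
    have h2 : ∑ i, ‖l i z‖ ≤ L₀ := le_trans (le_abs_self _) (hL₀ z hz)
    exact le_trans (le_trans h1 h2) (le_max_left _ _)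
  -- per-node constants via the compact sets K j
  set K : Fin n → Set ℂ := fun j => D ∩ {z | 1 + ε/2 ≤ ‖l j z‖} with hK
  have hKc : ∀ j, IsCompact (K j) :=
    fun j => hDc.inter_right (isClosed_le continuous_const (hld j).continuous.norm)
  have claim1 : ∀ j, ∃ cj : ℝ, 0 ≤ cj ∧ cj < 1 ∧ ∀ z ∈ K j, ‖q j z‖ ≤ cj := by
    intro j
    rcases (K j).eq_empty_or_nonempty with hemp | hne
    · exact ⟨0, le_rfl, one_pos, by simp [hemp]⟩
    · obtain ⟨z₀, hz₀K, hmax⟩ := (hKc j).exists_isMaxOn hne ((hqd j).continuous.norm.continuousOn)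
      have hz₀D : ‖z₀‖ ≤ 1 := mem_closedBall_zero_iff.1 hz₀K.1
      refine ⟨‖q j z₀‖, norm_nonneg _, ?_, fun z hz => (isMaxOn_iff.1 hmax) z hz⟩
      refine lt_of_le_of_ne (hq1 j z₀ hz₀D) fun h => ?_
      have : z₀ = p j := hqe j z₀ hz₀D h
      have h2 := hz₀K.2
      rw [Set.mem_setOf_eq, this, hlself j, norm_one] at h2
      linarith
  choose c2f hc2f0 hc2f1 hc2fb using claim1
  obtain ⟨c₂, hc₂0, hc₂1, hc₂b⟩ := finset_bound Finset.univ c2f (fun j _ => hc2f1 j)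
  -- pairwise constants
  have claim2 : ∀ pr : Fin n × Fin n, ∃ cij : ℝ, 0 ≤ cij ∧ cij < 1 ∧
      (pr.1 ≠ pr.2 → ∀ z ∈ D, min ‖q pr.1 z‖ ‖q pr.2 z‖ ≤ cij) := by
    rintro ⟨i, j⟩
    by_cases hij : i = j
    · exact ⟨0, le_rfl, one_pos, fun h => absurd hij h⟩
    · obtain ⟨z₀, hz₀D, hmax⟩ := hDc.exists_isMaxOn ⟨0, mem_closedBall_self zero_le_one⟩
        (((hqd i).continuous.norm.min (hqd j).continuous.norm).continuousOn)
      have hz₀ : ‖z₀‖ ≤ 1 := mem_closedBall_zero_iff.1 hz₀D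
      refine ⟨min ‖q i z₀‖ ‖q j z₀‖, le_min (norm_nonneg _) (norm_nonneg _), ?_,
        fun _ z hz => (isMaxOn_iff.1 hmax) z hz⟩
      refine lt_of_le_of_ne (le_trans (min_le_left _ _) (hq1 i z₀ hz₀)) fun h => ?_
      have h1 : ‖q i z₀‖ = 1 :=
        le_antisymm (hq1 i z₀ hz₀) (h ▸ min_le_left _ _)
      have h2 : ‖q j z₀‖ = 1 :=
        le_antisymm (hq1 j z₀ hz₀) (h ▸ min_le_right _ _)
      exact hij (hpinj ((hqe i z₀ hz₀ h1) ▸ (hqe j z₀ hz₀ h2)))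
  choose c1f hc1f0 hc1f1 hc1fb using claim2
  obtain ⟨c₁, hc₁0, hc₁1, hc₁b⟩ := finset_bound Finset.univ c1f (fun pr _ => hc1f1 pr)
  set c := max c₂ c₁ with hc
  have hc0 : 0 ≤ c := le_trans hc₂0 (le_max_left _ _)
  have hc1 : c < 1 := max_lt hc₂1 hc₁1
  -- choose N
  have hden : (0:ℝ) < (n:ℝ) * L + 1 := by positivity
  obtain ⟨N, hN⟩ := exists_pow_lt_of_lt_one (x := ε / (2 * ((n:ℝ) * L + 1))) (by positivity) hc1
  have hpowpos : (0:ℝ) ≤ c ^ N := pow_nonneg hc0 N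
  have keyN : (n:ℝ) * (c ^ N * L) ≤ ε / 2 := by
    rw [lt_div_iff₀ (by positivity)] at hN
    nlinarith [Nat.cast_nonneg (α := ℝ) n, hL1]
  -- the interpolant
  refine ⟨fun z => ∑ j, w j * (q j z) ^ N * l j z, ?_, ?_, ?_⟩
  · apply Differentiable.fun_sum
    intro j _
    exact (((differentiable_const _).mul ((hqd j).pow N)).mul (hld j))
  · intro i
    show ∑ j, w j * q j (p i) ^ N * l j (p i) = w i
    rw [Finset.sum_eq_single i]
    · rw [hqself i, hlself i]; ring
    · intro j _ hji
      rw [hlzero i j (Ne.symm hji), mul_zero]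
    · intro h; exact absurd (Finset.mem_univ i) h
  · intro z hz
    have hzD : z ∈ D := mem_closedBall_zero_iff.2 hz
    have step1 : ‖∑ j, w j * (q j z) ^ N * l j z‖ ≤ ∑ j, ‖q j z‖ ^ N * ‖l j z‖ := by
      refine le_trans (norm_sum_le _ _) (Finset.sum_le_sum fun j _ => ?_)
      rw [norm_mul, norm_mul, norm_pow]
      calc ‖w j‖ * ‖q j z‖ ^ N * ‖l j z‖ ≤ 1 * ‖q j z‖ ^ N * ‖l j z‖ := by
            gcongr; exact hw j
        _ = ‖q j z‖ ^ N * ‖l j z‖ := by ring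
    refine le_trans step1 ?_
    by_cases hcase : ∃ j, c < ‖q j z‖
    · obtain ⟨js, hjs⟩ := hcase
      have hrest : ∀ j ∈ Finset.univ.erase js, ‖q j z‖ ^ N * ‖l j z‖ ≤ c ^ N * L := by
        intro j hj
        have hji : j ≠ js := (Finset.mem_erase.1 hj).1
        have hqjc : ‖q j z‖ ≤ c := by
          by_contra hcon
          push_neg at hcon
          have hmin : c < min ‖q j z‖ ‖q js z‖ := lt_min hcon hjs
          have := hc1fb (j, js) hji z hzD
          have := le_trans this (le_trans (hc₁b (j, js) (Finset.mem_univ _)) (le_max_right c₂ c₁))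
          exact absurd this (not_le.2 hmin)
        exact mul_le_mul (pow_le_pow_left₀ (norm_nonneg _) hqjc N) (hL z hzD j)
          (norm_nonneg _) hpowpos
      have hmain : ‖q js z‖ ^ N * ‖l js z‖ ≤ 1 + ε / 2 := by
        have hnotK : z ∉ K js := by
          intro hzK
          have := le_trans (hc2fb js z hzK)
            (le_trans (hc₂b js (Finset.mem_univ _)) (le_max_left c₂ c₁))
          exact absurd this (not_le.2 hjs)
        have hlb : ‖l js z‖ ≤ 1 + ε / 2 := by
          by_contra hcon
          push_neg at hcon
          exact hnotK ⟨hzD, le_of_lt hcon⟩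
        calc ‖q js z‖ ^ N * ‖l js z‖ ≤ 1 * (1 + ε / 2) := by
              refine mul_le_mul (pow_le_one₀ (norm_nonneg _) (hq1 js z hz)) hlb (norm_nonneg _)
                zero_le_one
          _ = 1 + ε / 2 := one_mul _
      rw [← Finset.add_sum_erase _ _ (Finset.mem_univ js)]
      have hsums : ∑ j ∈ Finset.univ.erase js, ‖q j z‖ ^ N * ‖l j z‖ ≤ (n:ℝ) * (c ^ N * L) := by
        refine le_trans (Finset.sum_le_card_nsmul _ _ _ hrest) ?_
        rw [nsmul_eq_mul]
        have hcard : ((Finset.univ.erase js).card : ℝ) ≤ (n : ℝ) := by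
          have := Finset.card_erase_le (a := js) (s := (Finset.univ : Finset (Fin n)))
          exact_mod_cast le_trans (Nat.cast_le.2 this) (by simp)
        exact mul_le_mul_of_nonneg_right hcard (by positivity)
      linarith [le_trans hsums keyN]
    · push_neg at hcase
      have hsum2 : ∑ j, ‖q j z‖ ^ N * ‖l j z‖ ≤ (n:ℝ) * (c ^ N * L) := by
        have hb : ∀ j ∈ Finset.univ, ‖q j z‖ ^ N * ‖l j z‖ ≤ c ^ N * L := fun j _ =>
          mul_le_mul (pow_le_pow_left₀ (norm_nonneg _) (hcase j) N) (hL z hzD j)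
            (norm_nonneg _) hpowpos
        refine le_trans (Finset.sum_le_card_nsmul _ _ (c ^ N * L) hb) ?_
        rw [nsmul_eq_mul]
        simp
      linarith [le_trans hsum2 keyN]



set_option maxHeartbeats 1000000 in
lemma duality (𝒱 : Submodule ℂ (ℂ → ℂ)) {m : ℕ} (ζ₀ : ℂ) (ζ : Fin m → ℂ)
    (hvan : ∀ V ∈ 𝒱, (∀ k, V (ζ k) = 0) → V = 0)
    (as : Fin m → ℂ)
    (hasmin : ∀ a : Fin m → ℂ, (∀ V ∈ 𝒱, ∑ k, a k * V (ζ k) = V ζ₀) →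
      ∑ k, ‖as k‖ ≤ ∑ k, ‖a k‖)
    {ε : ℝ} (hε : 0 < ε) :
    ∃ V ∈ 𝒱, (∀ k, ‖V (ζ k)‖ ≤ 1) ∧ ∑ k, ‖as k‖ - ε ≤ ‖V ζ₀‖ := by
  classical
  by_contra hcon
  push_neg at hcon
  set ν := ∑ k, ‖as k‖ with hν
  have h : ∀ V ∈ 𝒱, (∀ k, ‖V (ζ k)‖ ≤ 1) → ‖V ζ₀‖ < ν - ε := by
    intro V hV hb
    exact hcon V hV hb
  have hνε : 0 < ν - ε := by
    have := h 0 (Submodule.zero_mem 𝒱) (fun k => by simp)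
    simpa using this
  -- the evaluation operator
  set T : 𝒱 →ₗ[ℂ] (Fin m → ℂ) :=
    { toFun := fun V => fun k => (V : ℂ → ℂ) (ζ k)
      map_add' := fun V U => by funext k; simp
      map_smul' := fun c V => by funext k; simp } with hT
  have hTinj : Function.Injective T := by
    intro V U hVU
    have h1 : ∀ k, (V : ℂ → ℂ) (ζ k) - (U : ℂ → ℂ) (ζ k) = 0 := by
      intro k
      have := congrFun hVU k
      simpa [hT, sub_eq_zero] using this
    have hmem : ((V : ℂ → ℂ) - (U : ℂ → ℂ)) ∈ 𝒱 := 𝒱.sub_mem V.2 U.2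
    have h2 := hvan _ hmem (fun k => by simpa using h1 k)
    have : (V : ℂ → ℂ) = (U : ℂ → ℂ) := by
      rwa [sub_eq_zero] at h2
    exact Subtype.ext this
  set W := LinearMap.range T with hW
  haveI : FiniteDimensional ℂ W := FiniteDimensional.finiteDimensional_submodule W
  set eq : 𝒱 ≃ₗ[ℂ] W := LinearEquiv.ofInjective T hTinj with heq
  set e₀ : 𝒱 →ₗ[ℂ] ℂ :=
    { toFun := fun V => (V : ℂ → ℂ) ζ₀
      map_add' := fun V U => by simp
      map_smul' := fun c V => by simp } with he₀
  set lam : W →ₗ[ℂ] ℂ := e₀ ∘ₗ (eq.symm : W →ₗ[ℂ] 𝒱) with hlam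
  set lamL : W →L[ℂ] ℂ := LinearMap.toContinuousLinearMap lam with hlamL
  have hlamL_app : ∀ x : W, lamL x = lam x := by
    intro x
    rw [hlamL, LinearMap.coe_toContinuousLinearMap']
  obtain ⟨g, hg_ext, hg_norm⟩ := exists_extension_norm_eq W lamL
  set a : Fin m → ℂ := fun k => g (Pi.single k 1) with ha
  -- lamL evaluated
  have hlam_eval : ∀ V : 𝒱, g (T V) = (V : ℂ → ℂ) ζ₀ := by
    intro V
    have h1 : ((eq V : W) : Fin m → ℂ) = T V := LinearEquiv.ofInjective_apply T V
    have h2 : g ((eq V : W) : Fin m → ℂ) = lamL (eq V) := hg_ext (eq V)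
    rw [h1] at h2
    rw [h2, hlamL_app, hlam]
    simp [he₀]
  -- feasibility of a
  have hfeas : ∀ V ∈ 𝒱, ∑ k, a k * V (ζ k) = V ζ₀ := by
    intro V hV
    have hTV : (T ⟨V, hV⟩ : Fin m → ℂ) = ∑ k, V (ζ k) • (Pi.single k 1 : Fin m → ℂ) := by
      funext i
      simp [hT, Pi.single_apply]
    have heval := hlam_eval ⟨V, hV⟩
    rw [hTV, map_sum] at heval
    simp only [map_smul, smul_eq_mul] at heval
    calc ∑ k, a k * V (ζ k) = ∑ k, V (ζ k) * g (Pi.single k 1) := by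
          refine Finset.sum_congr rfl fun k _ => ?_
          rw [ha]; ring
      _ = V ζ₀ := heval
  have hmin := hasmin a hfeas
  -- ∑ ‖a k‖ ≤ ‖g‖
  have hsub : ∑ k, ‖a k‖ ≤ ‖g‖ := by
    set y : Fin m → ℂ := fun k => (starRingEnd ℂ) (a k) / (‖a k‖ : ℂ) with hy
    have hynorm : ‖y‖ ≤ 1 := by
      rw [pi_norm_le_iff_of_nonneg zero_le_one]
      intro k
      rw [hy]
      simp only [norm_div, RCLike.norm_conj]
      rcases eq_or_ne (a k) 0 with h0 | h0
      · simp [h0]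
      · rw [Complex.norm_real, Real.norm_eq_abs, abs_of_nonneg (norm_nonneg _),
          div_self (norm_ne_zero_iff.2 h0)]
    have hgy : g y = ((∑ k, ‖a k‖ : ℝ) : ℂ) := by
      have hyeq : y = ∑ k, y k • (Pi.single k 1 : Fin m → ℂ) := by
        funext i
        simp [Pi.single_apply]
      rw [hyeq, map_sum]
      simp only [map_smul, smul_eq_mul]
      rw [Complex.ofReal_sum]
      refine Finset.sum_congr rfl fun k _ => ?_
      have hak : g (Pi.single k 1) = a k := rfl
      rw [hak, hy]
      rcases eq_or_ne (a k) 0 with h0 | h0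
      · simp [h0]
      · rw [div_mul_eq_mul_div, Complex.conj_mul', sq, mul_div_assoc,
          div_self (by exact_mod_cast norm_ne_zero_iff.2 h0), mul_one]
    have hle : ‖g y‖ ≤ ‖g‖ * ‖y‖ := g.le_opNorm y
    rw [hgy, Complex.norm_real, Real.norm_eq_abs,
      abs_of_nonneg (Finset.sum_nonneg fun k _ => norm_nonneg _)] at hle
    calc ∑ k, ‖a k‖ ≤ ‖g‖ * ‖y‖ := hle
      _ ≤ ‖g‖ * 1 := mul_le_mul_of_nonneg_left hynorm (norm_nonneg g)
      _ = ‖g‖ := mul_one _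
  -- ‖lamL‖ ≤ ν - ε
  have hopn : ‖lamL‖ ≤ ν - ε := by
    refine lamL.opNorm_le_bound (le_of_lt hνε) fun x => ?_
    obtain ⟨V, hVx⟩ := x.2
    rcases eq_or_ne ‖x‖ 0 with h0 | h0
    · have hx0 : x = 0 := norm_eq_zero.1 h0
      rw [hx0, map_zero, norm_zero]
      positivity
    · have hxpos : 0 < ‖x‖ := lt_of_le_of_ne (norm_nonneg _) (Ne.symm h0)
      set V' : ℂ → ℂ := ((‖x‖⁻¹ : ℝ) : ℂ) • (V : ℂ → ℂ) with hV'
      have hV'mem : V' ∈ 𝒱 := 𝒱.smul_mem _ V.2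
      have hcoords : ∀ k, ‖(V : ℂ → ℂ) (ζ k)‖ ≤ ‖x‖ := by
        intro k
        have h1 : (V : ℂ → ℂ) (ζ k) = (x : Fin m → ℂ) k := by
          rw [← hVx]; rfl
        rw [h1]
        exact norm_le_pi_norm (x : Fin m → ℂ) k
      have hb : ∀ k, ‖V' (ζ k)‖ ≤ 1 := by
        intro k
        rw [hV']
        simp only [Pi.smul_apply, smul_eq_mul, norm_mul, Complex.norm_real,
          Real.norm_eq_abs, abs_of_nonneg (inv_nonneg.2 (norm_nonneg x))]
        rw [inv_mul_le_iff₀ hxpos, mul_one]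
        exact hcoords k
      have hlt := h V' hV'mem hb
      have hval : lamL x = (V : ℂ → ℂ) ζ₀ := by
        have hxe : x = eq V := by
          apply Subtype.ext
          rw [← hVx, heq, LinearEquiv.ofInjective_apply]
        rw [hxe, hlamL_app, hlam]
        simp [he₀]
      rw [hval]
      have hV'0 : ‖V' ζ₀‖ = ‖x‖⁻¹ * ‖(V : ℂ → ℂ) ζ₀‖ := by
        rw [hV']
        simp [abs_of_nonneg (inv_nonneg.2 (norm_nonneg x))]
      rw [hV'0] at hlt
      have hfin := (inv_mul_lt_iff₀ hxpos).1 hlt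
      calc ‖(V : ℂ → ℂ) ζ₀‖ ≤ ‖x‖ * (ν - ε) := le_of_lt hfin
        _ = (ν - ε) * ‖x‖ := mul_comm _ _
  rw [hg_norm] at hsub
  have : ν ≤ ν - ε := le_trans hmin (le_trans hsub hopn)
  linarith

end Auxiliary

open Metric Finset

/-- The compatibility indicator `μ_A(ker L_ζ, 𝒱, e_{ζ_0})` equals `1 + Σ_k |a⋆_k|`,
where `a⋆` minimizes the `ℓ¹`-norm subject to the interpolation constraints on `𝒱`. -/
theorem stmt15 (𝒱 : Submodule ℂ (ℂ → ℂ)) (hfd : FiniteDimensional ℂ 𝒱)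
    (h𝒱 : ∀ V ∈ 𝒱, MemDiscAlgebra V)
    {m : ℕ} (ζ₀ : ℂ) (ζ : Fin m → ℂ)
    (hζ₀ : ‖ζ₀‖ = 1) (hζ : ∀ k, ‖ζ k‖ = 1)
    (hinj : Function.Injective ζ) (hζ₀ζ : ∀ k, ζ₀ ≠ ζ k)
    (hvan : ∀ V ∈ 𝒱, (∀ k, V (ζ k) = 0) → V = 0)
    (as : Fin m → ℂ)
    (hasc : ∀ V ∈ 𝒱, ∑ k, as k * V (ζ k) = V ζ₀)
    (hasmin : ∀ a : Fin m → ℂ, (∀ V ∈ 𝒱, ∑ k, a k * V (ζ k) = V ζ₀) →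
      ∑ k, ‖as k‖ ≤ ∑ k, ‖a k‖) :
    sSup {x : ℝ | ∃ F : ℂ → ℂ, MemDiscAlgebra F ∧ F ≠ 0 ∧
        (∀ k, F (ζ k) = 0) ∧ x = ‖F ζ₀‖ / distSup F 𝒱}
      = 1 + ∑ k, ‖as k‖ := by
  classical
  have hν0 : 0 ≤ ∑ k, ‖as k‖ := Finset.sum_nonneg fun k _ => norm_nonneg _
  haveI : Nonempty ↥𝒱 := ⟨0⟩
  haveI hne : Nonempty ↥(Metric.closedBall (0:ℂ) 1) :=
    ⟨⟨0, Metric.mem_closedBall_self zero_le_one⟩⟩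
  have hsupnn : ∀ G : ℂ → ℂ, 0 ≤ supNorm G := fun G => Real.iSup_nonneg fun z => norm_nonneg _
  have heval : ∀ G : ℂ → ℂ, ContinuousOn G (Metric.closedBall 0 1) →
      ∀ z : ℂ, ‖z‖ ≤ 1 → ‖G z‖ ≤ supNorm G := by
    intro G hG z hz
    obtain ⟨C, hC⟩ := (isCompact_closedBall (0:ℂ) 1).exists_bound_of_continuousOn hG
    have hbdd : BddAbove (Set.range fun w : Metric.closedBall (0:ℂ) 1 => ‖G w‖) := by
      refine ⟨C, ?_⟩
      rintro x ⟨w, rfl⟩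
      exact hC w w.2
    exact le_ciSup hbdd (⟨z, mem_closedBall_zero_iff.2 hz⟩ : Metric.closedBall (0:ℂ) 1)
  have hζ' : ∀ k, ‖ζ k‖ ≤ 1 := fun k => by rw [hζ k]
  have hζ₀' : ‖ζ₀‖ ≤ 1 := by rw [hζ₀]
  have h1ν : (0:ℝ) < 1 + ∑ k, ‖as k‖ := by linarith
  -- key upper inequality
  have keyA : ∀ F : ℂ → ℂ, MemDiscAlgebra F → (∀ k, F (ζ k) = 0) →
      ∀ V ∈ 𝒱, ‖F ζ₀‖ ≤ (1 + ∑ k, ‖as k‖) * supNorm (F - V) := by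
    intro F hF hFk V hV
    have hGc : ContinuousOn (F - V) (Metric.closedBall 0 1) := hF.1.sub (h𝒱 V hV).1
    have hGe : ∀ z, ‖z‖ ≤ 1 → ‖(F - V) z‖ ≤ supNorm (F - V) := heval _ hGc
    have h1 : ∑ k, as k * (F - V) (ζ k) = - V ζ₀ := by
      have hterm : ∀ k ∈ Finset.univ, as k * (F - V) (ζ k) = -(as k * V (ζ k)) := by
        intro k _
        rw [Pi.sub_apply, hFk k]
        ring
      rw [Finset.sum_congr rfl hterm, Finset.sum_neg_distrib, hasc V hV]
    have hid : F ζ₀ = (F - V) ζ₀ - ∑ k, as k * (F - V) (ζ k) := by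
      rw [h1, Pi.sub_apply]
      ring
    calc ‖F ζ₀‖ ≤ ‖(F - V) ζ₀‖ + ‖∑ k, as k * (F - V) (ζ k)‖ := by
          rw [hid]; exact norm_sub_le _ _
      _ ≤ supNorm (F - V) + ∑ k, ‖as k‖ * supNorm (F - V) := by
          refine add_le_add (hGe ζ₀ hζ₀')
            (le_trans (norm_sum_le _ _) (Finset.sum_le_sum fun k _ => ?_))
          rw [norm_mul]
          exact mul_le_mul_of_nonneg_left (hGe (ζ k) (hζ' k)) (norm_nonneg _)
      _ = (1 + ∑ k, ‖as k‖) * supNorm (F - V) := by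
          rw [← Finset.sum_mul]; ring
  -- upper bound for all elements
  have hub : ∀ x ∈ {x : ℝ | ∃ F : ℂ → ℂ, MemDiscAlgebra F ∧ F ≠ 0 ∧
      (∀ k, F (ζ k) = 0) ∧ x = ‖F ζ₀‖ / distSup F 𝒱}, x ≤ 1 + ∑ k, ‖as k‖ := by
    rintro x ⟨F, hF, hF0, hFk, rfl⟩
    have hd : ‖F ζ₀‖ / (1 + ∑ k, ‖as k‖) ≤ distSup F 𝒱 := by
      refine le_ciInf fun V => ?_
      rw [div_le_iff₀ h1ν]
      calc ‖F ζ₀‖ ≤ (1 + ∑ k, ‖as k‖) * supNorm (F - V) := keyA F hF hFk V V.2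
        _ = supNorm (F - V) * (1 + ∑ k, ‖as k‖) := mul_comm _ _
    rcases eq_or_lt_of_le (le_trans (div_nonneg (norm_nonneg _) h1ν.le) hd) with h0 | h0
    · rw [← h0, div_zero]
      linarith
    · rw [div_le_iff₀ h0]
      rw [div_le_iff₀ h1ν] at hd
      calc ‖F ζ₀‖ ≤ distSup F 𝒱 * (1 + ∑ k, ‖as k‖) := hd
        _ = (1 + ∑ k, ‖as k‖) * distSup F 𝒱 := mul_comm _ _
  have hbddS : BddAbove {x : ℝ | ∃ F : ℂ → ℂ, MemDiscAlgebra F ∧ F ≠ 0 ∧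
      (∀ k, F (ζ k) = 0) ∧ x = ‖F ζ₀‖ / distSup F 𝒱} := ⟨_, hub⟩
  -- lower bound construction
  have hlb : ∀ ε : ℝ, 0 < ε → ε < 1 → ∃ x ∈ {x : ℝ | ∃ F : ℂ → ℂ, MemDiscAlgebra F ∧ F ≠ 0 ∧
      (∀ k, F (ζ k) = 0) ∧ x = ‖F ζ₀‖ / distSup F 𝒱},
      (1 + ∑ k, ‖as k‖ - ε) / (1 + ε) ≤ x := by
    intro ε hε hε1
    obtain ⟨V₁, hV₁mem, hV₁b, hV₁lb⟩ := duality 𝒱 ζ₀ ζ hvan as hasmin hε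
    set c : ℂ := (‖V₁ ζ₀‖ : ℂ) / (V₁ ζ₀) with hcdef
    set Vs : ℂ → ℂ := c • V₁ with hVs
    have hVsmem : Vs ∈ 𝒱 := 𝒱.smul_mem c hV₁mem
    have hVs0 : Vs ζ₀ = (‖V₁ ζ₀‖ : ℂ) := by
      rw [hVs]
      simp only [Pi.smul_apply, smul_eq_mul, hcdef]
      rcases eq_or_ne (V₁ ζ₀) 0 with h0 | h0
      · simp [h0]
      · rw [div_mul_cancel₀ _ h0]
    have hcnorm : ‖c‖ ≤ 1 := by
      rw [hcdef, norm_div, Complex.norm_real, Real.norm_eq_abs, abs_of_nonneg (norm_nonneg _)]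
      rcases eq_or_ne (V₁ ζ₀) 0 with h0 | h0
      · simp [h0]
      · rw [div_self (norm_ne_zero_iff.2 h0)]
    have hVsk : ∀ k, ‖Vs (ζ k)‖ ≤ 1 := by
      intro k
      rw [hVs]
      simp only [Pi.smul_apply, smul_eq_mul, norm_mul]
      calc ‖c‖ * ‖V₁ (ζ k)‖ ≤ 1 * 1 := mul_le_mul hcnorm (hV₁b k) (norm_nonneg _) zero_le_one
        _ = 1 := mul_one 1
    set P : Fin (m+1) → ℂ := Fin.cons ζ₀ ζ with hP
    have hPn : ∀ j, ‖P j‖ = 1 := by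
      intro j
      refine Fin.cases ?_ ?_ j
      · rw [hP, Fin.cons_zero, hζ₀]
      · intro i
        rw [hP, Fin.cons_succ, hζ i]
    have hPinj : Function.Injective P := by
      rw [hP, Fin.cons_injective_iff]
      refine ⟨fun hmem => ?_, hinj⟩
      obtain ⟨k, hk⟩ := hmem
      exact hζ₀ζ k hk.symm
    set wv : Fin (m+1) → ℂ := Fin.cons 1 (fun k => -(Vs (ζ k))) with hwv
    have hwvn : ∀ j, ‖wv j‖ ≤ 1 := by
      intro j
      refine Fin.cases ?_ ?_ j
      · rw [hwv, Fin.cons_zero, norm_one]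
      · intro i
        rw [hwv, Fin.cons_succ, norm_neg]
        exact hVsk i
    obtain ⟨φ, hφd, hφi, hφb⟩ := interp P hPn hPinj wv hwvn hε
    set F : ℂ → ℂ := fun z => Vs z + φ z with hF
    have hFmem : MemDiscAlgebra F :=
      ⟨(h𝒱 Vs hVsmem).1.add hφd.continuous.continuousOn,
        (h𝒱 Vs hVsmem).2.add hφd.differentiableOn⟩
    have hFk : ∀ k, F (ζ k) = 0 := by
      intro k
      have h1 : φ (ζ k) = -(Vs (ζ k)) := by
        have h2 := hφi (Fin.succ k)
        rwa [hP, Fin.cons_succ, hwv, Fin.cons_succ] at h2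
      rw [hF]
      simp [h1]
    have hφ0 : φ ζ₀ = 1 := by
      have h2 := hφi 0
      rwa [hP, Fin.cons_zero, hwv, Fin.cons_zero] at h2
    have hF0val : F ζ₀ = (‖V₁ ζ₀‖ : ℂ) + 1 := by
      rw [hF]
      simp only []
      rw [hVs0, hφ0]
    have hF0re : 1 + ∑ k, ‖as k‖ - ε ≤ ‖F ζ₀‖ := by
      have h1 : (F ζ₀).re = ‖V₁ ζ₀‖ + 1 := by
        rw [hF0val]
        simp
      calc 1 + ∑ k, ‖as k‖ - ε ≤ ‖V₁ ζ₀‖ + 1 := by linarith [hV₁lb]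
        _ = (F ζ₀).re := h1.symm
        _ ≤ ‖F ζ₀‖ := Complex.re_le_norm _
        _ = ‖F ζ₀‖ := rfl
    have hF0pos : 0 < ‖F ζ₀‖ := lt_of_lt_of_le (by linarith) hF0re
    have hFne : F ≠ 0 := by
      intro h
      rw [h] at hF0pos
      simp at hF0pos
    have hdlb : ‖F ζ₀‖ / (1 + ∑ k, ‖as k‖) ≤ distSup F 𝒱 := by
      refine le_ciInf fun V => ?_
      rw [div_le_iff₀ h1ν]
      calc ‖F ζ₀‖ ≤ (1 + ∑ k, ‖as k‖) * supNorm (F - V) := keyA F hFmem hFk V V.2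
        _ = supNorm (F - V) * (1 + ∑ k, ‖as k‖) := mul_comm _ _
    have hdpos : 0 < distSup F 𝒱 := lt_of_lt_of_le (div_pos hF0pos h1ν) hdlb
    have hdub : distSup F 𝒱 ≤ 1 + ε := by
      have hFVs : F - Vs = φ := by
        funext z
        simp [hF]
      have h2 : supNorm (F - Vs) ≤ 1 + ε := by
        rw [hFVs]
        exact ciSup_le fun z => hφb z (mem_closedBall_zero_iff.1 z.2)
      have hbb : BddBelow (Set.range fun V : 𝒱 => supNorm (F - V)) := by
        refine ⟨0, ?_⟩
        rintro x ⟨V, rfl⟩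
        exact hsupnn _
      exact le_trans (ciInf_le hbb (⟨Vs, hVsmem⟩ : 𝒱)) h2
    refine ⟨‖F ζ₀‖ / distSup F 𝒱, ⟨F, hFmem, hFne, hFk, rfl⟩, ?_⟩
    exact div_le_div₀ (norm_nonneg _) hF0re hdpos hdub
  -- conclude
  refine le_antisymm (Real.sSup_le hub h1ν.le) ?_
  refine le_of_forall_pos_le_add fun δ hδ => ?_
  set ε := min (1/2 : ℝ) (δ / (2 + ∑ k, ‖as k‖)) with hεdef
  have hεpos : 0 < ε := lt_min (by norm_num) (div_pos hδ (by linarith))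
  have hε1 : ε < 1 := lt_of_le_of_lt (min_le_left _ _) (by norm_num)
  obtain ⟨x, hxS, hxle⟩ := hlb ε hεpos hε1
  have hx : x ≤ sSup {x : ℝ | ∃ F : ℂ → ℂ, MemDiscAlgebra F ∧ F ≠ 0 ∧
      (∀ k, F (ζ k) = 0) ∧ x = ‖F ζ₀‖ / distSup F 𝒱} := le_csSup hbddS hxS
  have hεδ : ε * (2 + ∑ k, ‖as k‖) ≤ δ := by
    have h3 : ε ≤ δ / (2 + ∑ k, ‖as k‖) := min_le_right _ _
    rwa [le_div_iff₀ (by linarith)] at h3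
  have halg : 1 + ∑ k, ‖as k‖ ≤ (1 + ∑ k, ‖as k‖ - ε) / (1 + ε) + δ := by
    rw [div_add' _ _ _ (by positivity : (1:ℝ) + ε ≠ 0),
      le_div_iff₀ (by positivity : (0:ℝ) < 1 + ε)]
    nlinarith [mul_nonneg hδ.le hεpos.le]
  linarith [le_trans hxle hx]
end
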